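/- arXiv:1308.3279 — 9 statements merged into one kernel-verified Lean document; each statement's English description precedes it below -/
import Mathlib

section
/- Let I be a finite set, and for α ∈ I let C_α and Z_α be ℕ-valued random variables, with the Z_α mutually independent. Let w : I → ℤ be a deterministic weight function, let T = Σ_{α∈I} w(α) Z_α, and let t ∈ ℤ be such that P(T = t) > 0. Suppose the process (C_α)_{α∈I} is equal in distribution to ((Z_α)_{α∈I} | T = t). For B ⊆ I, write C_B = (C_α)_{α∈B}, Z_B = (Z_α)_{α∈B}, and R_B = Σ_{α∈B} w(α) Z_α. Then d_TV(C_B, Z_B) = d_TV((R_B | T = t), R_B). -/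
open MeasureTheory ProbabilityTheory

/-- Total variation distance between two (sub)probability mass functions on a
countable space: `d_TV(p,q) = (1/2) Σ_s |p s - q s|`. -/
noncomputable def dTV {S : Type*} (p q : S → ℝ) : ℝ := (1 / 2) * ∑' s, |p s - q s|

/-- Events of the form `{h = x}` are pairwise disjoint in `x`. -/
lemma level_sets_disjoint {Ω γ : Type*} (h : Ω → γ) :
    Pairwise (Function.onFun Disjoint (fun x => {ω | h ω = x})) := by
  intro x y hxy
  refine Set.disjoint_left.mpr ?_
  intro ω hx hy
  exact hxy (hx.symm.trans hy)

/-- If `C ≝ (Z | T = t)` with `Z_α` mutually independent and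
`T = Σ_α w(α) Z_α`, then for any `B ⊆ I`,
`d_TV(C_B, Z_B) = d_TV((R_B | T = t), R_B)` where `R_B = Σ_{α∈B} w(α) Z_α`. -/
theorem stmt3
    {Ω : Type*} [MeasurableSpace Ω] (μ : Measure Ω) [IsProbabilityMeasure μ]
    {I : Type*} [Fintype I]
    (C : Ω → I → ℕ) (Z : I → Ω → ℕ)
    (hCmeas : Measurable C) (hZmeas : ∀ α, Measurable (Z α))
    (hindep : iIndepFun Z μ)
    (w : I → ℤ) (t : ℤ)
    (T : Ω → ℤ) (hT : T = fun ω => ∑ α, w α * (Z α ω : ℤ))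
    (hpos : μ {ω | T ω = t} ≠ 0)
    (hC : ∀ a : I → ℕ,
      μ {ω | C ω = a}
        = μ ({ω | (fun α => Z α ω) = a} ∩ {ω | T ω = t}) / μ {ω | T ω = t})
    (B : Finset I) :
    dTV (fun b : B → ℕ => (μ {ω | (fun α : B => C ω α) = b}).toReal)
        (fun b : B → ℕ => (μ {ω | (fun α : B => Z α ω) = b}).toReal)
      = dTV (fun r : ℤ =>
              (μ ({ω | (∑ α ∈ B, w α * (Z α ω : ℤ)) = r} ∩ {ω | T ω = t})
                / μ {ω | T ω = t}).toReal)
            (fun r : ℤ => (μ {ω | (∑ α ∈ B, w α * (Z α ω : ℤ)) = r}).toReal) := by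
  classical
  have hTdef : ∀ ω, T ω = ∑ α, w α * (Z α ω : ℤ) := fun ω => congrFun hT ω
  -- notation
  set q : ENNReal := μ {ω | T ω = t} with hqdef
  have hq0 : q ≠ 0 := hpos
  have hqt : q ≠ ⊤ := measure_ne_top μ _
  set A : (B → ℕ) → Set Ω := fun b => {ω | (fun α : B => Z α ω) = b} with hA
  set A' : (↥(Bᶜ : Finset I) → ℕ) → Set Ω :=
    fun c => {ω | (fun α : (Bᶜ : Finset I) => Z α ω) = c} with hA'
  set F : (I → ℕ) → Set Ω := fun a => {ω | (fun α => Z α ω) = a} with hF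
  set g : (↥B → ℕ) → (↥(Bᶜ : Finset I) → ℕ) → I → ℕ :=
    fun b c α => if h : α ∈ B then b ⟨α, h⟩ else c ⟨α, Finset.mem_compl.mpr h⟩ with hg
  set rB : (↥B → ℕ) → ℤ :=
    fun b => ∑ α ∈ B.attach, w α * (b α : ℤ) with hrB
  set rC : (↥(Bᶜ : Finset I) → ℕ) → ℤ :=
    fun c => ∑ α ∈ (Bᶜ : Finset I).attach, w α * (c α : ℤ) with hrC
  set D : ℤ → Set Ω := fun s => {ω | (∑ α ∈ (Bᶜ : Finset I), w α * (Z α ω : ℤ)) = s} with hD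
  set RB : ℤ → Set Ω := fun r => {ω | (∑ α ∈ B, w α * (Z α ω : ℤ)) = r} with hRB
  -- measurability
  have hZc : ∀ α : I, Measurable fun ω => (Z α ω : ℤ) :=
    fun α => Measurable.of_discrete.comp (hZmeas α)
  have hsum_meas : ∀ s : Finset I, Measurable fun ω => ∑ α ∈ s, w α * (Z α ω : ℤ) :=
    fun s => Finset.measurable_sum s fun α _ => measurable_const.mul (hZc α)
  have hTt : MeasurableSet {ω | T ω = t} := by
    have : Measurable T := by rw [hT]; exact hsum_meas Finset.univ
    exact this (measurableSet_singleton t)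
  have hDmeas : ∀ s : ℤ, MeasurableSet (D s) :=
    fun s => hsum_meas (Bᶜ : Finset I) (measurableSet_singleton s)
  have hRBmeas : ∀ r : ℤ, MeasurableSet (RB r) :=
    fun r => hsum_meas B (measurableSet_singleton r)
  have hAmeas : ∀ b, MeasurableSet (A b) :=
    fun b => (measurable_pi_lambda _ fun α : ↥B => hZmeas α) (measurableSet_singleton b)
  have hA'meas : ∀ c, MeasurableSet (A' c) :=
    fun c => (measurable_pi_lambda _ fun α : ↥(Bᶜ : Finset I) => hZmeas α)
      (measurableSet_singleton c)
  have hFmeas : ∀ a, MeasurableSet (F a) :=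
    fun a => (measurable_pi_lambda _ fun α : I => hZmeas α) (measurableSet_singleton a)
  have hCset_meas : ∀ a : I → ℕ, MeasurableSet {ω | C ω = a} :=
    fun a => hCmeas (measurableSet_singleton a)
  -- independence product formula
  have hprod : ∀ (s : Finset I) (a : I → ℕ),
      μ (⋂ α ∈ s, Z α ⁻¹' {a α}) = ∏ α ∈ s, μ (Z α ⁻¹' {a α}) := fun s a =>
    hindep.measure_inter_preimage_eq_mul s (sets := fun i => {a i})
      fun i _ => measurableSet_singleton (a i)
  -- A as intersection
  have hAeq : ∀ (b : ↥B → ℕ) (a : I → ℕ), (∀ α : ↥B, a ↑α = b α) →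
      A b = ⋂ α ∈ B, Z α ⁻¹' {a α} := by
    intro b a ha
    ext ω
    simp only [hA, Set.mem_setOf_eq, funext_iff, Set.mem_iInter, Set.mem_preimage,
      Set.mem_singleton_iff, Subtype.forall]
    constructor
    · intro h α hα; rw [ha ⟨α, hα⟩]; exact h α hα
    · intro h α hα; rw [← ha ⟨α, hα⟩]; exact h α hα
  have hA'eq : ∀ (c : ↥(Bᶜ : Finset I) → ℕ) (a : I → ℕ),
      (∀ α : ↥(Bᶜ : Finset I), a ↑α = c α) →
      A' c = ⋂ α ∈ (Bᶜ : Finset I), Z α ⁻¹' {a α} := by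
    intro c a ha
    ext ω
    simp only [hA', Set.mem_setOf_eq, funext_iff, Set.mem_iInter, Set.mem_preimage,
      Set.mem_singleton_iff, Subtype.forall]
    constructor
    · intro h α hα; rw [ha ⟨α, hα⟩]; exact h α hα
    · intro h α hα; rw [← ha ⟨α, hα⟩]; exact h α hα
  have hFeq : ∀ a : I → ℕ, F a = ⋂ α ∈ Finset.univ, Z α ⁻¹' {a α} := by
    intro a
    ext ω
    simp only [hF, Set.mem_setOf_eq, funext_iff, Set.mem_iInter, Set.mem_preimage,
      Set.mem_singleton_iff, Finset.mem_univ, forall_true_left]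
  -- gluing facts
  have hgB : ∀ b c (α : ↥B), g b c ↑α = b α := by
    intro b c α; simp only [hg]; rw [dif_pos α.2]
  have hgBc : ∀ b c (α : ↥(Bᶜ : Finset I)), g b c ↑α = c α := by
    intro b c α
    simp only [hg]
    rw [dif_neg (Finset.mem_compl.mp α.2)]
  have hFsplit : ∀ b c, F (g b c) = A b ∩ A' c := by
    intro b c
    ext ω
    simp only [hF, hA, hA', Set.mem_setOf_eq, Set.mem_inter_iff, funext_iff]
    constructor
    · intro h
      constructor
      · intro α; rw [← hgB b c α]; exact h ↑α
      · intro α; rw [← hgBc b c α]; exact h ↑α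
    · intro ⟨h1, h2⟩ α
      by_cases hα : α ∈ B
      · rw [show g b c α = b ⟨α, hα⟩ from hgB b c ⟨α, hα⟩]; exact h1 ⟨α, hα⟩
      · rw [show g b c α = c ⟨α, Finset.mem_compl.mpr hα⟩ from
          hgBc b c ⟨α, Finset.mem_compl.mpr hα⟩]
        exact h2 ⟨α, Finset.mem_compl.mpr hα⟩
  -- measure product identity
  have hAval : ∀ b c, μ (A b) = ∏ α ∈ B, μ (Z α ⁻¹' {g b c α}) := by
    intro b c
    rw [hAeq b (g b c) (hgB b c)]
    exact hprod B _
  have hA'val : ∀ b c, μ (A' c) = ∏ α ∈ (Bᶜ : Finset I), μ (Z α ⁻¹' {g b c α}) := by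
    intro b c
    rw [hA'eq c (g b c) (hgBc b c)]
    exact hprod (Bᶜ : Finset I) _
  have h1 : ∀ b c, μ (A b ∩ A' c) = μ (A b) * μ (A' c) := by
    intro b c
    rw [← hFsplit, hFeq, hprod Finset.univ, hAval b c, hA'val b c,
      ← Finset.prod_mul_prod_compl B fun α => μ (Z α ⁻¹' {g b c α})]
  -- sums determined by tuples
  have hsumB : ∀ (ω : Ω) (b : ↥B → ℕ), (fun α : ↥B => Z α ω) = b →
      ∑ α ∈ B, w α * (Z α ω : ℤ) = rB b := by
    intro ω b hb
    rw [← Finset.sum_attach B fun α => w α * (Z α ω : ℤ)]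
    exact Finset.sum_congr rfl fun α _ => by rw [congrFun hb α]
  have hsumBc : ∀ (ω : Ω) (c : ↥(Bᶜ : Finset I) → ℕ),
      (fun α : ↥(Bᶜ : Finset I) => Z α ω) = c →
      ∑ α ∈ (Bᶜ : Finset I), w α * (Z α ω : ℤ) = rC c := by
    intro ω c hc
    rw [← Finset.sum_attach (Bᶜ : Finset I) fun α => w α * (Z α ω : ℤ)]
    exact Finset.sum_congr rfl fun α _ => by rw [congrFun hc α]
  -- decompositions
  have hDdecomp : ∀ s : ℤ, D s = ⋃ c : {c // rC c = s}, A' c.1 := by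
    intro s
    ext ω
    simp only [hD, Set.mem_setOf_eq, Set.mem_iUnion]
    constructor
    · intro h
      exact ⟨⟨fun α => Z α ω, by rw [← hsumBc ω _ rfl]; exact h⟩, rfl⟩
    · rintro ⟨⟨c, hcs⟩, hc⟩
      rw [hsumBc ω c hc]; exact hcs
  have hRBdecomp : ∀ r : ℤ, RB r = ⋃ b : {b // rB b = r}, A b.1 := by
    intro r
    ext ω
    simp only [hRB, Set.mem_setOf_eq, Set.mem_iUnion]
    constructor
    · intro h
      exact ⟨⟨fun α => Z α ω, by rw [← hsumB ω _ rfl]; exact h⟩, rfl⟩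
    · rintro ⟨⟨b, hbr⟩, hb⟩
      rw [hsumB ω b hb]; exact hbr
  -- disjointness
  have hdisjA' : ∀ s : ℤ,
      Pairwise (Function.onFun Disjoint fun c : {c // rC c = s} => A' c.1) := by
    intro s c c' hne
    exact level_sets_disjoint (fun ω (α : ↥(Bᶜ : Finset I)) => Z α ω)
      (fun h => hne (Subtype.ext h))
  have hdisjA : ∀ r : ℤ,
      Pairwise (Function.onFun Disjoint fun b : {b // rB b = r} => A b.1) := by
    intro r b b' hne
    exact level_sets_disjoint (fun ω (α : ↥B) => Z α ω) (fun h => hne (Subtype.ext h))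
  -- measures of D and RB
  have hDval : ∀ s : ℤ, μ (D s) = ∑' c : {c // rC c = s}, μ (A' c.1) := by
    intro s
    rw [hDdecomp s]
    exact measure_iUnion (hdisjA' s) fun c => hA'meas c.1
  have hRBval : ∀ r : ℤ, μ (RB r) = ∑' b : {b // rB b = r}, μ (A b.1) := by
    intro r
    rw [hRBdecomp r]
    exact measure_iUnion (hdisjA r) fun b => hAmeas b.1
  -- independence of A b and D s
  have h3 : ∀ b (s : ℤ), μ (A b ∩ D s) = μ (A b) * μ (D s) := by
    intro b s
    rw [hDdecomp s, Set.inter_iUnion,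
      measure_iUnion (fun c c' hne => ((hdisjA' s) hne).mono
        Set.inter_subset_right Set.inter_subset_right)
        (fun c => (hAmeas b).inter (hA'meas c.1))]
    simp_rw [h1 b]
    rw [ENNReal.tsum_mul_left, ← hDval s, ← hDdecomp s]
  have h7 : ∀ (r s : ℤ), μ (RB r ∩ D s) = μ (RB r) * μ (D s) := by
    intro r s
    rw [hRBdecomp r, Set.iUnion_inter,
      measure_iUnion (fun b b' hne => ((hdisjA r) hne).mono
        Set.inter_subset_left Set.inter_subset_left)
        (fun b => (hAmeas b.1).inter (hDmeas s))]
    simp_rw [fun b : {b // rB b = r} => h3 b.1 s]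
    rw [ENNReal.tsum_mul_right, ← hRBval r, ← hRBdecomp r]
  -- conditioning events
  have h4 : ∀ b, A b ∩ {ω | T ω = t} = A b ∩ D (t - rB b) := by
    intro b
    ext ω
    simp only [Set.mem_inter_iff, hA, hD, Set.mem_setOf_eq]
    constructor
    · rintro ⟨hb, ht⟩
      have hS := hsumB ω b hb
      have hTot := Finset.sum_add_sum_compl B fun α => w α * (Z α ω : ℤ)
      have hTv := hTdef ω
      exact ⟨hb, by omega⟩
    · rintro ⟨hb, hd⟩
      have hS := hsumB ω b hb
      have hTot := Finset.sum_add_sum_compl B fun α => w α * (Z α ω : ℤ)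
      have hTv := hTdef ω
      exact ⟨hb, by omega⟩
  have h5 : ∀ r : ℤ, RB r ∩ {ω | T ω = t} = RB r ∩ D (t - r) := by
    intro r
    ext ω
    simp only [Set.mem_inter_iff, hRB, hD, Set.mem_setOf_eq]
    have hTot := Finset.sum_add_sum_compl B fun α => w α * (Z α ω : ℤ)
    have hTv := hTdef ω
    constructor
    · rintro ⟨hb, ht⟩; exact ⟨hb, by omega⟩
    · rintro ⟨hb, hd⟩; exact ⟨hb, by omega⟩
  -- decomposition of A b and the C-tuple event over extensions
  have hginj : ∀ b, Function.Injective (g b) := by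
    intro b c c' h
    funext α
    have := congrFun h ↑α
    rwa [hgBc, hgBc] at this
  have hAdecomp : ∀ b, A b = ⋃ c, F (g b c) := by
    intro b
    ext ω
    simp only [Set.mem_iUnion, hFsplit, Set.mem_inter_iff]
    constructor
    · intro h
      exact ⟨fun α => Z α ω, h, rfl⟩
    · rintro ⟨c, h, _⟩
      exact h
  have hCBdecomp : ∀ b : ↥B → ℕ,
      {ω | (fun α : ↥B => C ω α) = b} = ⋃ c, {ω | C ω = g b c} := by
    intro b
    ext ω
    simp only [Set.mem_setOf_eq, Set.mem_iUnion]
    constructor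
    · intro h
      refine ⟨fun α => C ω ↑α, ?_⟩
      funext α
      by_cases hα : α ∈ B
      · simp only [hg]
        rw [dif_pos hα]
        exact congrFun h ⟨α, hα⟩
      · simp only [hg]
        rw [dif_neg hα]
    · rintro ⟨c, hc⟩
      funext α
      show C ω ↑α = b α
      rw [hc]
      exact hgB b c α
  have hC' : ∀ a : I → ℕ, μ {ω | C ω = a} = μ (F a ∩ {ω | T ω = t}) / q :=
    fun a => hC a
  have hdisjC : ∀ b, Pairwise (Function.onFun Disjoint
      fun c : ↥(Bᶜ : Finset I) → ℕ => {ω | C ω = g b c}) := by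
    intro b c c' hne
    exact level_sets_disjoint C fun e => hne (hginj b e)
  have hdisjF : ∀ b, Pairwise (Function.onFun Disjoint
      fun c : ↥(Bᶜ : Finset I) → ℕ => F (g b c) ∩ {ω | T ω = t}) := by
    intro b c c' hne
    exact ((level_sets_disjoint (fun ω (α : I) => Z α ω)) (fun e => hne (hginj b e))).mono
      Set.inter_subset_left Set.inter_subset_left
  have hAinterT : ∀ b, μ (A b ∩ {ω | T ω = t})
      = ∑' c : ↥(Bᶜ : Finset I) → ℕ, μ (F (g b c) ∩ {ω | T ω = t}) := by
    intro b
    rw [hAdecomp b, Set.iUnion_inter]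
    exact measure_iUnion (hdisjF b) fun c => (hFmeas (g b c)).inter hTt
  have h8 : ∀ b, μ {ω | (fun α : ↥B => C ω α) = b}
      = μ (A b ∩ {ω | T ω = t}) / q := by
    intro b
    rw [hCBdecomp b]
    calc μ (⋃ c, {ω | C ω = g b c})
        = ∑' c : ↥(Bᶜ : Finset I) → ℕ, μ {ω | C ω = g b c} :=
          measure_iUnion (hdisjC b) fun c => hCset_meas (g b c)
      _ = ∑' c : ↥(Bᶜ : Finset I) → ℕ, μ (F (g b c) ∩ {ω | T ω = t}) / q :=
          tsum_congr fun c => hC' (g b c)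
      _ = (∑' c : ↥(Bᶜ : Finset I) → ℕ, μ (F (g b c) ∩ {ω | T ω = t})) / q := by
          simp_rw [div_eq_mul_inv]
          exact ENNReal.tsum_mul_right
      _ = μ (A b ∩ {ω | T ω = t}) / q := by rw [hAinterT b]
  have hCB : ∀ b, μ {ω | (fun α : ↥B => C ω α) = b}
      = μ (A b) * μ (D (t - rB b)) / q := by
    intro b
    rw [h8 b, h4 b, h3 b]
  have hRT : ∀ r : ℤ, μ (RB r ∩ {ω | T ω = t}) = μ (RB r) * μ (D (t - r)) := by
    intro r
    rw [h5 r, h7 r]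
  -- the real-valued discrepancy factor
  set φ : ℤ → ℝ := fun r => |(μ (D (t - r))).toReal / q.toReal - 1| with hφ
  have hφ0 : ∀ r, 0 ≤ φ r := fun r => abs_nonneg _
  have habs : ∀ (x : ENNReal) (r : ℤ),
      |(x * μ (D (t - r)) / q).toReal - x.toReal| = x.toReal * φ r := by
    intro x r
    rw [ENNReal.toReal_div, ENNReal.toReal_mul]
    have : x.toReal * (μ (D (t - r))).toReal / q.toReal - x.toReal
        = x.toReal * ((μ (D (t - r))).toReal / q.toReal - 1) := by ring
    rw [this, abs_mul, abs_of_nonneg ENNReal.toReal_nonneg, hφ]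
  have hterm1 : ∀ b, |(μ {ω | (fun α : ↥B => C ω α) = b}).toReal - (μ (A b)).toReal|
      = (μ (A b)).toReal * φ (rB b) := by
    intro b
    rw [hCB b]
    exact habs (μ (A b)) (rB b)
  have hterm2 : ∀ r : ℤ,
      |(μ (RB r ∩ {ω | T ω = t}) / q).toReal - (μ (RB r)).toReal|
      = (μ (RB r)).toReal * φ r := by
    intro r
    rw [hRT r]
    exact habs (μ (RB r)) r
  -- the key ENNReal sum identity
  have hE : ∑' b : ↥B → ℕ, μ (A b) * ENNReal.ofReal (φ (rB b))
      = ∑' r : ℤ, μ (RB r) * ENNReal.ofReal (φ r) := by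
    rw [← Equiv.tsum_eq (Equiv.sigmaFiberEquiv rB)
      (fun b => μ (A b) * ENNReal.ofReal (φ (rB b))), ENNReal.tsum_sigma']
    refine tsum_congr fun r => ?_
    calc ∑' b : {b // rB b = r}, μ (A ↑b) * ENNReal.ofReal (φ (rB ↑b))
        = ∑' b : {b // rB b = r}, μ (A ↑b) * ENNReal.ofReal (φ r) :=
          tsum_congr fun b => by rw [b.2]
      _ = (∑' b : {b // rB b = r}, μ (A ↑b)) * ENNReal.ofReal (φ r) :=
          ENNReal.tsum_mul_right
      _ = μ (RB r) * ENNReal.ofReal (φ r) := by rw [← hRBval r]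
  -- conversion to real sums
  have hreal1 : ∑' b : ↥B → ℕ, (μ (A b)).toReal * φ (rB b)
      = (∑' b : ↥B → ℕ, μ (A b) * ENNReal.ofReal (φ (rB b))).toReal := by
    rw [ENNReal.tsum_toReal_eq
      (fun b => ENNReal.mul_ne_top (measure_ne_top μ _) ENNReal.ofReal_ne_top)]
    exact tsum_congr fun b => by
      rw [ENNReal.toReal_mul, ENNReal.toReal_ofReal (hφ0 _)]
  have hreal2 : ∑' r : ℤ, (μ (RB r)).toReal * φ r
      = (∑' r : ℤ, μ (RB r) * ENNReal.ofReal (φ r)).toReal := by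
    rw [ENNReal.tsum_toReal_eq
      (fun r => ENNReal.mul_ne_top (measure_ne_top μ _) ENNReal.ofReal_ne_top)]
    exact tsum_congr fun r => by
      rw [ENNReal.toReal_mul, ENNReal.toReal_ofReal (hφ0 _)]
  -- conclusion
  simp only [dTV]
  congr 1
  calc ∑' b : ↥B → ℕ, |(μ {ω | (fun α : ↥B => C ω α) = b}).toReal
          - (μ {ω | (fun α : ↥B => Z α ω) = b}).toReal|
      = ∑' b : ↥B → ℕ, (μ (A b)).toReal * φ (rB b) := tsum_congr fun b => hterm1 b
    _ = (∑' b : ↥B → ℕ, μ (A b) * ENNReal.ofReal (φ (rB b))).toReal := hreal1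
    _ = (∑' r : ℤ, μ (RB r) * ENNReal.ofReal (φ r)).toReal := by rw [hE]
    _ = ∑' r : ℤ, (μ (RB r)).toReal * φ r := hreal2.symm
    _ = ∑' r : ℤ, |(μ (RB r ∩ {ω | T ω = t}) / q).toReal - (μ (RB r)).toReal| :=
        (tsum_congr fun r => hterm2 r).symm
end

section
/- Let I be a finite set, and for α ∈ I let C_α and Z_α be ℕ-valued random variables, with the Z_α mutually independent. Let w : I → ℤ be a deterministic weight function, let T = Σ_{α∈I} w(α) Z_α, and let t ∈ ℤ be such that P(T = t) > 0. Suppose (C_α)_{α∈I} is equal in distribution to ((Z_α)_{α∈I} | T = t). For B ⊆ I, write C_B = (C_α)_{α∈B}, Z_B = (Z_α)_{α∈B}, R = Σ_{α∈B} w(α) Z_α and S = Σ_{α∈I−B} w(α) Z_α, so T = R + S with R and S independent. Then for any subset A ⊆ ℤ, d_TV(C_B, Z_B) ≤ P(R ∉ A) + sup_{r∈A} (1 − P(S = t − r)/P(T = t))⁺, where y⁺ = max(y,0). -/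
open MeasureTheory ProbabilityTheory

private lemma fiberSum {Ω X : Type*} [MeasurableSpace Ω] [MeasurableSpace X] [Countable X]
    [MeasurableSingletonClass X] (μ : MeasureTheory.Measure Ω) {g : Ω → X} (hg : Measurable g)
    (s : Set X) :
    ∑' x : s, μ (g ⁻¹' {(x : X)}) = μ (g ⁻¹' s) :=
  tsum_measure_preimage_singleton s.to_countable (fun y _ => hg (measurableSet_singleton y))

/-- Truncation bound: with `C ≝ (Z | T = t)`, `R = Σ_{α∈B} w(α) Z_α`,
`S = Σ_{α∉B} w(α) Z_α`, for any `A ⊆ ℤ`,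
`d_TV(C_B, Z_B) ≤ P(R ∉ A) + sup_{r∈A} (1 - P(S = t-r)/P(T = t))⁺`. -/
theorem stmt4
    {Ω : Type*} [MeasurableSpace Ω] (μ : Measure Ω) [IsProbabilityMeasure μ]
    {I : Type*} [Fintype I] [DecidableEq I]
    (C : Ω → I → ℕ) (Z : I → Ω → ℕ)
    (hCmeas : Measurable C) (hZmeas : ∀ α, Measurable (Z α))
    (hindep : iIndepFun Z μ)
    (w : I → ℤ) (t : ℤ)
    (T : Ω → ℤ) (hT : T = fun ω => ∑ α, w α * (Z α ω : ℤ))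
    (hpos : μ {ω | T ω = t} ≠ 0)
    (hC : ∀ a : I → ℕ,
      μ {ω | C ω = a}
        = μ ({ω | (fun α => Z α ω) = a} ∩ {ω | T ω = t}) / μ {ω | T ω = t})
    (B : Finset I)
    (R S : Ω → ℤ)
    (hR : R = fun ω => ∑ α ∈ B, w α * (Z α ω : ℤ))
    (hS : S = fun ω => ∑ α ∈ Bᶜ, w α * (Z α ω : ℤ))
    (A : Set ℤ) :
    dTV (fun b : B → ℕ => (μ {ω | (fun α : B => C ω α) = b}).toReal)
        (fun b : B → ℕ => (μ {ω | (fun α : B => Z α ω) = b}).toReal)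
      ≤ (μ {ω | R ω ∉ A}).toReal
        + ⨆ r ∈ A,
            max (1 - (μ {ω | S ω = t - r}).toReal / (μ {ω | T ω = t}).toReal) 0 := by
  classical
  -- abbreviations
  set ZB : Ω → (↑B → ℕ) := fun ω (α : ↑B) => Z α ω with hZBdef
  set CB : Ω → (↑B → ℕ) := fun ω (α : ↑B) => C ω α with hCBdef
  set Zv : Ω → (I → ℕ) := fun ω α => Z α ω with hZvdef
  set rb : (↑B → ℕ) → ℤ := fun b => ∑ α : ↑B, w α * (b α : ℤ) with hrbdef
  have hptne : μ {ω | T ω = t} ≠ ⊤ := measure_ne_top μ _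
  -- measurability
  have hcast : ∀ α, Measurable fun ω => ((Z α ω : ℤ)) :=
    fun α => (measurable_of_countable _).comp (hZmeas α)
  have hZB : Measurable ZB := measurable_pi_lambda _ (fun α => hZmeas α)
  have hCB : Measurable CB := measurable_pi_lambda _ (fun α => (measurable_pi_apply _).comp hCmeas)
  have hZv : Measurable Zv := measurable_pi_lambda _ (fun α => hZmeas α)
  have hTmeas : Measurable T := by
    rw [hT]; exact Finset.measurable_sum _ (fun α _ => (hcast α).const_mul _)
  have hSmeas : Measurable S := by
    rw [hS]; exact Finset.measurable_sum _ (fun α _ => (hcast α).const_mul _)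
  have hRmeas : Measurable R := by
    rw [hR]; exact Finset.measurable_sum _ (fun α _ => (hcast α).const_mul _)
  have hsetT : MeasurableSet {ω | T ω = t} := hTmeas (measurableSet_singleton t)
  -- pointwise identities
  have hRZ : ∀ ω, R ω = rb (ZB ω) := by
    intro ω
    rw [hR, hrbdef]
    exact (Finset.sum_coe_sort B (fun α => w α * (Z α ω : ℤ))).symm
  have hTRS : ∀ ω, T ω = R ω + S ω := by
    intro ω; rw [hT, hR, hS]
    exact (Finset.sum_add_sum_compl B _).symm
  -- independence of ZB and S
  have hIndS : IndepFun ZB S μ := by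
    have h0 : IndepFun (fun ω (α : ↑B) => Z α ω) (fun ω (α : ↑(Bᶜ)) => Z α ω) μ :=
      hindep.indepFun_finset B Bᶜ disjoint_compl_right hZmeas
    have hScomp : S = (fun c : (↑(Bᶜ : Finset I) → ℕ) => ∑ α : ↑(Bᶜ : Finset I), w α * (c α : ℤ))
        ∘ (fun ω (α : ↑(Bᶜ : Finset I)) => Z α ω) := by
      funext ω
      rw [hS]
      exact (Finset.sum_coe_sort (Bᶜ) (fun α => w α * (Z α ω : ℤ))).symm
    rw [hZBdef, hScomp]
    exact (h0.comp measurable_id (measurable_of_countable _))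
  -- key identity for the conditional pmf
  have key1 : ∀ b : ↑B → ℕ,
      μ (CB ⁻¹' {b}) = μ (ZB ⁻¹' {b} ∩ {ω | T ω = t}) / μ {ω | T ω = t} := by
    intro b
    have hres : CB = (fun (a : I → ℕ) (α : ↑B) => a α) ∘ C := rfl
    have hresZ : ZB = (fun (a : I → ℕ) (α : ↑B) => a α) ∘ Zv := rfl
    set s : Set (I → ℕ) := (fun (a : I → ℕ) (α : ↑B) => a α) ⁻¹' {b} with hsdef
    have h1 : μ (CB ⁻¹' {b}) = ∑' a : s, μ (C ⁻¹' {(a : I → ℕ)}) := by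
      rw [hres, Set.preimage_comp, ← hsdef, ← fiberSum μ hCmeas s]
    have h2 : ∀ a : I → ℕ,
        μ (C ⁻¹' {a}) = (μ.restrict {ω | T ω = t}) (Zv ⁻¹' {a}) / μ {ω | T ω = t} := by
      intro a
      rw [Measure.restrict_apply' hsetT]
      exact hC a
    have h3 : μ (CB ⁻¹' {b})
        = (∑' a : s, (μ.restrict {ω | T ω = t}) (Zv ⁻¹' {(a : I → ℕ)})) / μ {ω | T ω = t} := by
      rw [h1]
      simp only [h2, div_eq_mul_inv, ENNReal.tsum_mul_right]
    rw [h3, fiberSum (μ.restrict {ω | T ω = t}) hZv s,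
      Measure.restrict_apply' hsetT, hresZ, Set.preimage_comp]
  -- replace T-event by S-event
  have key2 : ∀ b : ↑B → ℕ,
      ZB ⁻¹' {b} ∩ {ω | T ω = t} = ZB ⁻¹' {b} ∩ S ⁻¹' {t - rb b} := by
    intro b
    ext ω
    simp only [Set.mem_inter_iff, Set.mem_preimage, Set.mem_singleton_iff, Set.mem_setOf_eq]
    constructor
    · rintro ⟨h1, h2⟩
      refine ⟨h1, ?_⟩
      have := hTRS ω
      have hr := hRZ ω
      rw [h1] at hr
      omega
    · rintro ⟨h1, h2⟩
      refine ⟨h1, ?_⟩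
      have := hTRS ω
      have hr := hRZ ω
      rw [h1] at hr
      omega
  -- factorization by independence
  have key3 : ∀ b : ↑B → ℕ,
      μ (CB ⁻¹' {b}) = μ (ZB ⁻¹' {b}) * μ (S ⁻¹' {t - rb b}) / μ {ω | T ω = t} := by
    intro b
    rw [key1 b, key2 b,
      hIndS.measure_inter_preimage_eq_mul _ _ (measurableSet_singleton b)
        (measurableSet_singleton (t - rb b))]
  -- total masses
  have hsumZ : ∑' b : (↑B → ℕ), μ (ZB ⁻¹' {b}) = 1 := by
    have h := fiberSum μ hZB (Set.univ)
    rw [Set.preimage_univ, measure_univ] at h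
    rw [← h, tsum_univ (fun b => μ (ZB ⁻¹' {b}))]
  have hsumC : ∑' b : (↑B → ℕ), μ (CB ⁻¹' {b}) = 1 := by
    have h := fiberSum μ hCB (Set.univ)
    rw [Set.preimage_univ, measure_univ] at h
    rw [← h, tsum_univ (fun b => μ (CB ⁻¹' {b}))]
  -- move to real numbers
  set pt' : ℝ := (μ {ω | T ω = t}).toReal with hpt'def
  have hpt'pos : 0 < pt' := ENNReal.toReal_pos hpos hptne
  set q : (↑B → ℕ) → ℝ := fun b => (μ (ZB ⁻¹' {b})).toReal with hqdef
  set p : (↑B → ℕ) → ℝ := fun b => (μ (CB ⁻¹' {b})).toReal with hpdef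
  have e1 : (fun b : ↑B → ℕ => (μ {ω | (fun α : ↑B => C ω α) = b}).toReal) = p := rfl
  have e2 : (fun b : ↑B → ℕ => (μ {ω | (fun α : ↑B => Z α ω) = b}).toReal) = q := rfl
  have hq0 : ∀ b, 0 ≤ q b := fun b => ENNReal.toReal_nonneg
  have hp0 : ∀ b, 0 ≤ p b := fun b => ENNReal.toReal_nonneg
  have hsq : Summable q := ENNReal.summable_toReal (by rw [hsumZ]; exact ENNReal.one_ne_top)
  have hsp : Summable p := ENNReal.summable_toReal (by rw [hsumC]; exact ENNReal.one_ne_top)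
  have htq : ∑' b, q b = 1 := by
    simp only [hqdef]
    rw [← ENNReal.tsum_toReal_eq (fun b => measure_ne_top μ _), hsumZ, ENNReal.toReal_one]
  have htp : ∑' b, p b = 1 := by
    simp only [hpdef]
    rw [← ENNReal.tsum_toReal_eq (fun b => measure_ne_top μ _), hsumC, ENNReal.toReal_one]
  -- pmf formula in the reals
  have hpq : ∀ b, p b = q b * ((μ (S ⁻¹' {t - rb b})).toReal / pt') := by
    intro b
    simp only [hpdef, hqdef]
    rw [key3 b, ENNReal.toReal_div, ENNReal.toReal_mul, hpt'def]
    ring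
  set g : (↑B → ℕ) → ℝ := fun b => max (1 - (μ (S ⁻¹' {t - rb b})).toReal / pt') 0 with hgdef
  have hg0 : ∀ b, 0 ≤ g b := fun b => le_max_right _ _
  have hg1 : ∀ b, g b ≤ 1 := by
    intro b
    simp only [hgdef]
    refine max_le ?_ zero_le_one
    have : 0 ≤ (μ (S ⁻¹' {t - rb b})).toReal / pt' :=
      div_nonneg ENNReal.toReal_nonneg hpt'pos.le
    linarith
  -- key max identity
  have hmax : ∀ b, max (q b - p b) 0 = q b * g b := by
    intro b
    simp only [hgdef]
    rw [hpq b]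
    set x := (μ (S ⁻¹' {t - rb b})).toReal / pt' with hx
    rcases le_total x 1 with h | h
    · rw [max_eq_left (by nlinarith [hq0 b]), max_eq_left (by linarith)]
      ring
    · rw [max_eq_right (by nlinarith [hq0 b]), max_eq_right (by linarith)]
      ring
  have hsmax : Summable (fun b => max (q b - p b) 0) :=
    hsq.of_nonneg_of_le (fun b => le_max_right _ _)
      (fun b => max_le (sub_le_self _ (hp0 b)) (hq0 b))
  have habs : ∀ b, |p b - q b| = 2 * max (q b - p b) 0 - (q b - p b) := by
    intro b
    rcases le_total (p b) (q b) with h | h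
    · rw [abs_of_nonpos (by linarith), max_eq_left (by linarith)]; ring
    · rw [abs_of_nonneg (by linarith), max_eq_right (by linarith)]; ring
  have hdTV : dTV p q = ∑' b, max (q b - p b) 0 := by
    rw [dTV]
    simp only [habs]
    rw [Summable.tsum_sub (hsmax.mul_left 2) (hsq.sub hsp), Summable.tsum_sub hsq hsp, htq, htp, tsum_mul_left]
    ring
  -- the sup bound
  set M : ℝ := ⨆ r ∈ A, max (1 - (μ {ω | S ω = t - r}).toReal / pt') 0 with hMdef
  have hτ0 : ∀ r : ℤ, 0 ≤ max (1 - (μ {ω | S ω = t - r}).toReal / pt') 0 :=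
    fun r => le_max_right _ _
  have hτ1 : ∀ r : ℤ, max (1 - (μ {ω | S ω = t - r}).toReal / pt') 0 ≤ 1 := by
    intro r
    refine max_le ?_ zero_le_one
    have : 0 ≤ (μ {ω | S ω = t - r}).toReal / pt' :=
      div_nonneg ENNReal.toReal_nonneg hpt'pos.le
    linarith
  have hinner01 : ∀ r : ℤ,
      0 ≤ (⨆ _ : r ∈ A, max (1 - (μ {ω | S ω = t - r}).toReal / pt') 0)
      ∧ (⨆ _ : r ∈ A, max (1 - (μ {ω | S ω = t - r}).toReal / pt') 0) ≤ 1 := by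
    intro r
    by_cases h : r ∈ A
    · rw [ciSup_pos h]; exact ⟨hτ0 r, hτ1 r⟩
    · haveI : IsEmpty (r ∈ A) := isEmpty_Prop.mpr h
      rw [Real.iSup_of_isEmpty]; exact ⟨le_refl 0, zero_le_one⟩
  have hbdd : BddAbove (Set.range fun r : ℤ =>
      ⨆ _ : r ∈ A, max (1 - (μ {ω | S ω = t - r}).toReal / pt') 0) := by
    refine ⟨1, ?_⟩
    rintro x ⟨r, rfl⟩
    exact (hinner01 r).2
  have hM0 : 0 ≤ M := by
    rw [hMdef]
    exact le_trans (hinner01 0).1 (le_ciSup hbdd 0)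
  have hMr : ∀ r ∈ A, max (1 - (μ {ω | S ω = t - r}).toReal / pt') 0 ≤ M := by
    intro r hr
    rw [hMdef]
    refine le_trans ?_ (le_ciSup hbdd r)
    rw [ciSup_pos hr]
  have hgM : ∀ b, rb b ∈ A → g b ≤ M := by
    intro b hb
    exact hMr (rb b) hb
  -- splitting the sum
  set F1 : (↑B → ℕ) → ℝ := fun b => M * Set.indicator {b | rb b ∈ A} q b with hF1
  set F2 : (↑B → ℕ) → ℝ := fun b => Set.indicator {b | rb b ∉ A} q b with hF2
  have hsF1 : Summable F1 := by
    simp only [hF1]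
    exact (hsq.indicator _).mul_left M
  have hsF2 : Summable F2 := hsq.indicator _
  have hterm : ∀ b, q b * g b ≤ F1 b + F2 b := by
    intro b
    by_cases h : rb b ∈ A
    · have i1 : Set.indicator {b | rb b ∈ A} q b = q b :=
        Set.indicator_of_mem (by exact h) q
      have i2 : Set.indicator {b | rb b ∉ A} q b = 0 :=
        Set.indicator_of_notMem (by simpa using h) q
      simp only [hF1, hF2, i1, i2, add_zero]
      calc q b * g b ≤ q b * M := mul_le_mul_of_nonneg_left (hgM b h) (hq0 b)
        _ = M * q b := mul_comm _ _
    · have i1 : Set.indicator {b | rb b ∈ A} q b = 0 :=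
        Set.indicator_of_notMem (by exact h) q
      have i2 : Set.indicator {b | rb b ∉ A} q b = q b :=
        Set.indicator_of_mem (by exact h) q
      simp only [hF1, hF2, i1, i2, mul_zero, zero_add]
      calc q b * g b ≤ q b * 1 := mul_le_mul_of_nonneg_left (hg1 b) (hq0 b)
        _ = q b := mul_one _
  have hqg_sum : Summable (fun b => q b * g b) :=
    hsq.of_nonneg_of_le (fun b => mul_nonneg (hq0 b) (hg0 b))
      (fun b => by
        calc q b * g b ≤ q b * 1 := mul_le_mul_of_nonneg_left (hg1 b) (hq0 b)
          _ = q b := mul_one _)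
  have step1 : ∑' b, q b * g b ≤ ∑' b, (F1 b + F2 b) :=
    Summable.tsum_le_tsum hterm hqg_sum (hsF1.add hsF2)
  have step2 : ∑' b, (F1 b + F2 b) = ∑' b, F1 b + ∑' b, F2 b := Summable.tsum_add hsF1 hsF2
  have step3 : ∑' b, F1 b ≤ M := by
    have hmul : ∑' b, F1 b = M * ∑' b, Set.indicator {b | rb b ∈ A} q b := by
      simp only [hF1]
      exact tsum_mul_left
    rw [hmul]
    have hle : ∑' b, Set.indicator {b | rb b ∈ A} q b ≤ ∑' b, q b :=
      Summable.tsum_le_tsum (fun b => Set.indicator_le_self' (fun x _ => hq0 x) b) (hsq.indicator _) hsq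
    rw [htq] at hle
    calc M * ∑' b, Set.indicator {b | rb b ∈ A} q b ≤ M * 1 :=
          mul_le_mul_of_nonneg_left hle hM0
      _ = M := mul_one M
  have step4 : ∑' b, F2 b = (μ {ω | R ω ∉ A}).toReal := by
    have hRset : {ω | R ω ∉ A} = ZB ⁻¹' {b | rb b ∉ A} := by
      ext ω
      simp only [Set.mem_setOf_eq, Set.mem_preimage, hRZ ω]
    rw [hRset, ← fiberSum μ hZB {b | rb b ∉ A},
      ENNReal.tsum_toReal_eq (fun a => measure_ne_top μ _)]
    have := tsum_subtype {b : ↑B → ℕ | rb b ∉ A} q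
    simp only [hqdef] at this
    simp only [hF2, hqdef]
    exact this.symm
  rw [e1, e2, hdTV]
  have heq : ∑' b, max (q b - p b) 0 = ∑' b, q b * g b := tsum_congr hmax
  rw [heq]
  have := le_trans step1 (le_of_eq step2)
  linarith [step3, step4.ge, this]
end

section
/- Let κ > 0 and y ≥ 1 be constants, and let m_i ≥ 0 be real numbers satisfying m_i / i! ~ κ y^i / i as i → ∞. Fix c ∈ ℝ and for each n set x = x(n) = e^{−c/n} y^{−1}. Let Z_1(n), ..., Z_n(n) be independent Poisson random variables with E Z_j(n) = m_j x^j / j!, and let T_n = Σ_{j=1}^n j Z_j(n). Then for every s ≥ 0, E exp(−s T_n / n) converges, as n → ∞, to ψ_c(s) = exp(−κ ∫_0^1 (1 − e^{−sx}) e^{−cx} dx/x); in particular T_n/n converges in distribution to a random variable X_{κ,c} with Laplace transform ψ_c. -/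
open MeasureTheory ProbabilityTheory Filter Real


private lemma sum_Icc_one {M : Type*} [AddCommMonoid M] (f : ℕ → M) (n : ℕ) :
    ∑ j ∈ Finset.Icc 1 n, f j = ∑ i ∈ Finset.range n, f (i + 1) := by
  rw [Finset.range_eq_Ico, Finset.sum_Ico_add' f 0 n (c := 1)]
  simp [Finset.Ico_add_one_right_eq_Icc]

noncomputable def gfun (s c : ℝ) : ℝ → ℝ :=
  fun u => if u = 0 then -s else Real.exp (-c * u) * (Real.exp (-s * u) - 1) / u

lemma gfun_cont (s c : ℝ) : Continuous (gfun s c) := by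
  rw [continuous_iff_continuousAt]
  intro u
  rcases eq_or_ne u 0 with rfl | hu
  · rw [← continuousWithinAt_compl_self]
    have hd : HasDerivAt (fun u : ℝ => Real.exp (-s * u)) (-s) 0 := by
      simpa using (((hasDerivAt_id (0:ℝ)).const_mul (-s)).exp)
    have h1 : Tendsto (fun v : ℝ => (Real.exp (-s * v) - 1) / v)
        (nhdsWithin 0 {(0:ℝ)}ᶜ) (nhds (-s)) := by
      have := hasDerivAt_iff_tendsto_slope.mp hd
      refine this.congr fun v => ?_
      simp [slope_def_field, div_eq_mul_inv]
    have h2 : Tendsto (fun v : ℝ => Real.exp (-c * v))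
        (nhdsWithin 0 {(0:ℝ)}ᶜ) (nhds 1) := by
      have : Tendsto (fun v : ℝ => Real.exp (-c * v)) (nhds 0) (nhds 1) := by
        have : ContinuousAt (fun v : ℝ => Real.exp (-c * v)) 0 := by fun_prop
        simpa using this.tendsto
      exact this.mono_left nhdsWithin_le_nhds
    have h3 : Tendsto (fun v : ℝ => Real.exp (-c * v) * ((Real.exp (-s * v) - 1) / v))
        (nhdsWithin 0 {(0:ℝ)}ᶜ) (nhds (-s)) := by
      simpa using h2.mul h1
    have : ContinuousWithinAt (gfun s c) {(0:ℝ)}ᶜ 0 := by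
      unfold ContinuousWithinAt
      rw [show gfun s c 0 = -s from if_pos rfl]
      refine h3.congr' ?_
      filter_upwards [self_mem_nhdsWithin] with v hv
      simp only [gfun]
      rw [if_neg (by simpa using hv), mul_div_assoc]
    exact this
  · have hcont : ContinuousAt (fun v => Real.exp (-c*v) * (Real.exp (-s*v) - 1) / v) u := by
      exact ContinuousAt.div (by fun_prop) continuousAt_id hu
    refine hcont.congr ?_
    filter_upwards [isOpen_compl_singleton.mem_nhds hu] with v hv
    simp only [gfun, neg_mul]
    rw [if_neg (by simpa using hv)]

private lemma riemann_sum_tendsto (f : ℝ → ℝ) (hf : Continuous f) :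
    Tendsto (fun n : ℕ => (n : ℝ)⁻¹ * ∑ i ∈ Finset.range n, f (((i : ℝ) + 1) / n))
      atTop (nhds (∫ u in (0:ℝ)..1, f u)) := by
  rw [Metric.tendsto_atTop]
  intro ε hε
  have huc := (isCompact_Icc (a := (0:ℝ)) (b := 1)).uniformContinuousOn_of_continuous
    hf.continuousOn
  rw [Metric.uniformContinuousOn_iff] at huc
  obtain ⟨δ, hδ0, hδ⟩ := huc (ε/2) (by positivity)
  obtain ⟨N₀, hN₀⟩ := exists_nat_gt (1/δ)
  refine ⟨max N₀ 1, fun n hn => ?_⟩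
  have hn1 : 1 ≤ n := le_trans (le_max_right _ _) hn
  have hnp : (0:ℝ) < n := by exact_mod_cast hn1
  have hNn : (1/δ : ℝ) < n := lt_of_lt_of_le hN₀ (by exact_mod_cast le_trans (le_max_left _ _) hn)
  have h1 : 1 < (n:ℝ) * δ := by
    have := (div_lt_iff₀ hδ0).1 hNn
    linarith
  have hdn : ((n:ℝ))⁻¹ < δ := by
    rw [inv_lt_iff_one_lt_mul₀ hnp]  -- may not exist; fallback below
    linarith [mul_comm (n:ℝ) δ]
  have hInt : ∀ a b : ℝ, IntervalIntegrable f MeasureTheory.volume a b :=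
    fun a b => hf.intervalIntegrable a b
  have hsplit : ∑ i ∈ Finset.range n, ∫ u in ((i:ℝ)/n)..(((i:ℝ)+1)/n), f u
      = ∫ u in (0:ℝ)..1, f u := by
    have := intervalIntegral.sum_integral_adjacent_intervals
      (a := fun k : ℕ => (k:ℝ)/n) (n := n) (fun k _ => hInt _ _)
    simpa [div_self hnp.ne'] using this
  have key : (n:ℝ)⁻¹ * (∑ i ∈ Finset.range n, f (((i:ℝ)+1)/n)) - ∫ u in (0:ℝ)..1, f u
      = ∑ i ∈ Finset.range n,
          ∫ u in ((i:ℝ)/n)..(((i:ℝ)+1)/n), (f (((i:ℝ)+1)/n) - f u) := by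
    rw [← hsplit, Finset.mul_sum, ← Finset.sum_sub_distrib]
    refine Finset.sum_congr rfl fun i _ => ?_
    rw [intervalIntegral.integral_sub (intervalIntegrable_const) (hInt _ _),
      intervalIntegral.integral_const]
    have : ((i:ℝ)+1)/n - (i:ℝ)/n = (n:ℝ)⁻¹ := by field_simp; ring
    rw [this, smul_eq_mul]
  rw [Real.dist_eq, key]
  have hbound : ∀ i ∈ Finset.range n,
      |∫ u in ((i:ℝ)/n)..(((i:ℝ)+1)/n), (f (((i:ℝ)+1)/n) - f u)| ≤ ε/2 * (n:ℝ)⁻¹ := by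
    intro i hi
    rw [Finset.mem_range] at hi
    have hin : (i:ℝ) + 1 ≤ n := by exact_mod_cast Nat.succ_le_of_lt hi
    have hab : (i:ℝ)/n ≤ ((i:ℝ)+1)/n := by
      gcongr
      linarith
    have hb1 : ((i:ℝ)+1)/n ≤ 1 := by
      rw [div_le_one hnp]; exact hin
    have ha0 : (0:ℝ) ≤ (i:ℝ)/n := by positivity
    have hbmem : ((i:ℝ)+1)/n ∈ Set.Icc (0:ℝ) 1 := ⟨by positivity, hb1⟩
    have hnorm : ∀ u ∈ Set.uIoc ((i:ℝ)/n) (((i:ℝ)+1)/n),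
        ‖f (((i:ℝ)+1)/n) - f u‖ ≤ ε/2 := by
      intro u hu
      rw [Set.uIoc_of_le hab] at hu
      have humem : u ∈ Set.Icc (0:ℝ) 1 := ⟨le_trans ha0 hu.1.le, le_trans hu.2 hb1⟩
      have hdist : dist (((i:ℝ)+1)/n) u < δ := by
        rw [Real.dist_eq, abs_of_nonneg (by linarith [hu.2])]
        have : ((i:ℝ)+1)/n - u < ((i:ℝ)+1)/n - (i:ℝ)/n := by linarith [hu.1]
        have heq : ((i:ℝ)+1)/n - (i:ℝ)/n = (n:ℝ)⁻¹ := by field_simp; ring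
        calc ((i:ℝ)+1)/n - u ≤ (n:ℝ)⁻¹ := by linarith [heq ▸ this]
          _ < δ := hdn
      exact (le_of_lt (by simpa [Real.dist_eq] using hδ _ hbmem _ humem hdist))
    have := intervalIntegral.norm_integral_le_of_norm_le_const hnorm
    rw [Real.norm_eq_abs] at this
    refine le_trans this (le_of_eq ?_)
    rw [abs_of_nonneg (by linarith)]
    congr 1
    field_simp; ring
  calc |∑ i ∈ Finset.range n,
          ∫ u in ((i:ℝ)/n)..(((i:ℝ)+1)/n), (f (((i:ℝ)+1)/n) - f u)|
      ≤ ∑ i ∈ Finset.range n,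
          |∫ u in ((i:ℝ)/n)..(((i:ℝ)+1)/n), (f (((i:ℝ)+1)/n) - f u)| :=
        Finset.abs_sum_le_sum_abs _ _
    _ ≤ ∑ _i ∈ Finset.range n, ε/2 * (n:ℝ)⁻¹ := Finset.sum_le_sum hbound
    _ = ε/2 := by
        rw [Finset.sum_const, Finset.card_range, nsmul_eq_mul]
        field_simp
    _ < ε := by linarith

private lemma poisson_exp {Ω : Type*} [MeasurableSpace Ω] (μ : Measure Ω)
    [IsProbabilityMeasure μ] (W : Ω → ℕ) (hW : Measurable W) (lam : ℝ) (hlam : 0 ≤ lam)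
    (hp : ∀ k : ℕ, (μ {ω | W ω = k}).toReal
      = Real.exp (-lam) * lam ^ k / (k.factorial : ℝ))
    (t : ℝ) (ht : t ≤ 0) :
    ∫ ω, Real.exp (t * (W ω : ℝ)) ∂μ = Real.exp (lam * (Real.exp t - 1)) := by
  have hmeasℕ : ∀ (h : ℕ → ℝ), Measurable h := fun h => measurable_from_top
  have hmap : ∫ ω, Real.exp (t * (W ω : ℝ)) ∂μ
      = ∫ k, Real.exp (t * (k : ℝ)) ∂(μ.map W) := by
    rw [integral_map hW.aemeasurable]
    exact ((hmeasℕ _).stronglyMeasurable).aestronglyMeasurable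
  have : IsProbabilityMeasure (μ.map W) := Measure.isProbabilityMeasure_map hW.aemeasurable
  have hint : Integrable (fun k : ℕ => Real.exp (t * (k:ℝ))) (μ.map W) := by
    refine (integrable_const (1:ℝ)).mono' ((hmeasℕ _).stronglyMeasurable).aestronglyMeasurable ?_
    refine Filter.Eventually.of_forall fun k => ?_
    rw [Real.norm_eq_abs, abs_of_pos (Real.exp_pos _)]
    exact Real.exp_le_one_iff.2 (mul_nonpos_iff.2 (Or.inr ⟨ht, Nat.cast_nonneg _⟩))
  rw [hmap, integral_countable' hint]
  have hsing : ∀ k : ℕ, ((μ.map W) {k}).toReal = Real.exp (-lam) * lam ^ k / (k.factorial : ℝ) := by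
    intro k
    rw [Measure.map_apply hW (measurableSet_singleton k)]
    have : W ⁻¹' {k} = {ω | W ω = k} := by ext ω; simp
    rw [this]; exact hp k
  have hterm : ∀ k : ℕ, ((μ.map W) {k}).toReal • Real.exp (t * (k:ℝ))
      = Real.exp (-lam) * ((lam * Real.exp t) ^ k / (k.factorial : ℝ)) := by
    intro k
    rw [smul_eq_mul, hsing k, mul_comm t ((k:ℝ)), Real.exp_nat_mul, mul_pow]
    ring
  rw [show (∑' k : ℕ, (μ.map W).real {k} • Real.exp (t * (k:ℝ))) = ∑' k : ℕ, Real.exp (-lam) * ((lam * Real.exp t) ^ k / (k.factorial : ℝ)) from tsum_congr hterm, tsum_mul_left]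
  have hexp : ∑' k : ℕ, (lam * Real.exp t) ^ k / (k.factorial : ℝ)
      = Real.exp (lam * Real.exp t) := by
    rw [(NormedSpace.expSeries_div_hasSum_exp (lam * Real.exp t)).tsum_eq,
      Real.exp_eq_exp_ℝ]
  rw [hexp, ← Real.exp_add]
  ring_nf

private lemma sum_subtype_Icc {M : Type*} [AddCommMonoid M] (n : ℕ) (f : ℕ → M) :
    ∑ j' ∈ (Finset.Icc 1 n).subtype (fun j => 1 ≤ j), f (j' : ℕ)
      = ∑ j ∈ Finset.Icc 1 n, f j := by
  rw [Finset.sum_subtype_eq_sum_filter,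
    Finset.filter_true_of_mem (fun j hj => (Finset.mem_Icc.1 hj).1)]


/-- Assemblies with `m_i/i! ~ κ y^i/i`, `x = x(n) = e^{-c/n} y⁻¹`:
if `Z_j(n)` are independent Poisson with mean `m_j x^j/j!` and
`T_n = Σ_{j=1}^n j Z_j(n)`, then for every `s ≥ 0`, `E exp(-s T_n/n)` converges to
`ψ_c(s) = exp(-κ ∫_0^1 (1 - e^{-sx}) e^{-cx} dx/x)`; so `T_n/n ⇒ X_{κ,c}`. -/
theorem stmt8
    {Ω : Type*} [MeasurableSpace Ω] (μ : Measure Ω) [IsProbabilityMeasure μ]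
    (κ y : ℝ) (hκ : 0 < κ) (hy : 1 ≤ y)
    (m : ℕ → ℝ) (hm0 : ∀ i, 1 ≤ i → 0 ≤ m i)
    (hm : Tendsto (fun i : ℕ => (m i / (i.factorial : ℝ)) * ((i : ℝ) / (κ * y ^ i)))
        atTop (nhds 1))
    (c : ℝ) (x : ℕ → ℝ) (hx : ∀ n : ℕ, x n = Real.exp (-c / n) * y⁻¹)
    (Z : ℕ → ℕ → Ω → ℕ) (hZmeas : ∀ n j, Measurable (Z n j))
    (hpois : ∀ n, 1 ≤ n → ∀ j, 1 ≤ j → j ≤ n → ∀ k : ℕ,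
      (μ {ω | Z n j ω = k}).toReal
        = Real.exp (-(m j * x n ^ j / (j.factorial : ℝ)))
            * (m j * x n ^ j / (j.factorial : ℝ)) ^ k / (k.factorial : ℝ))
    (hindep : ∀ n, iIndepFun
        (fun j : {j : ℕ // 1 ≤ j} => Z n j) μ) :
    ∀ s : ℝ, 0 ≤ s →
      Tendsto
        (fun n : ℕ =>
          ∫ ω, Real.exp (-s * ((∑ j ∈ Finset.Icc 1 n, j * Z n j ω : ℕ) : ℝ) / n) ∂μ)
        atTop
        (nhds (Real.exp
          (-κ * ∫ u in (0:ℝ)..1, (1 - Real.exp (-s * u)) * Real.exp (-c * u) / u))) := by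
  intro s hs
  have hy0 : (0:ℝ) < y := lt_of_lt_of_le one_pos hy
  set g : ℝ → ℝ := gfun s c with hg
  set r : ℕ → ℝ := fun i => (m i / (i.factorial : ℝ)) * ((i : ℝ) / (κ * y ^ i)) with hr
  set L : ℝ := -κ * ∫ u in (0:ℝ)..1, (1 - Real.exp (-s * u)) * Real.exp (-c * u) / u with hL
  have hx0 : ∀ n, 0 ≤ x n := fun n => by rw [hx n]; positivity
  -- Step A: exact formula for the Laplace transform
  have hE : ∀ n : ℕ, 1 ≤ n →
      (∫ ω, Real.exp (-s * ((∑ j ∈ Finset.Icc 1 n, j * Z n j ω : ℕ) : ℝ) / n) ∂μ)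
        = Real.exp (∑ j ∈ Finset.Icc 1 n,
            (m j * x n ^ j / (j.factorial : ℝ)) * (Real.exp (-s * j / n) - 1)) := by
    intro n hn
    have hnp : (0:ℝ) < n := by exact_mod_cast hn
    set t : ℝ := -s / n with ht
    have htle : t ≤ 0 := by
      rw [ht, neg_div]; exact neg_nonpos.2 (by positivity)
    set X : {j : ℕ // 1 ≤ j} → Ω → ℝ := fun j ω => ((j : ℕ) : ℝ) * (Z n j ω : ℝ) with hX
    have hXmeas : ∀ j, Measurable (X j) := fun j =>
      (measurable_from_top.comp (hZmeas n j)).const_mul _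
    have hXindep : iIndepFun X μ :=
      (hindep n).comp (fun (j : {j : ℕ // 1 ≤ j}) (k : ℕ) => ((j : ℕ) : ℝ) * k)
        (fun j => measurable_from_top)
    set S : Finset {j : ℕ // 1 ≤ j} := (Finset.Icc 1 n).subtype _ with hS
    have hfun : (fun ω => Real.exp (-s * ((∑ j ∈ Finset.Icc 1 n, j * Z n j ω : ℕ) : ℝ) / n))
        = fun ω => Real.exp (t * (∑ j' ∈ S, X j') ω) := by
      funext ω
      congr 1
      have hsum : (∑ j' ∈ S, X j') ω
          = ∑ j ∈ Finset.Icc 1 n, ((j : ℝ) * ((Z n j ω : ℕ) : ℝ)) := by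
        rw [Finset.sum_apply]
        exact sum_subtype_Icc n (fun j => (j : ℝ) * ((Z n j ω : ℕ) : ℝ))
      rw [hsum, ht, div_mul_eq_mul_div]
      push_cast
      ring
    rw [hfun]
    have hmgf : (∫ ω, Real.exp (t * (∑ j' ∈ S, X j') ω) ∂μ) = mgf (∑ j' ∈ S, X j') μ t := rfl
    rw [hmgf, hXindep.mgf_sum hXmeas S]
    have hterm : ∀ j' ∈ S, mgf (X j') μ t
        = Real.exp ((m (j' : ℕ) * x n ^ (j' : ℕ) / (((j' : ℕ)).factorial : ℝ))
            * (Real.exp (-s * ((j' : ℕ) : ℝ) / n) - 1)) := by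
      intro j' hj'
      have hj'mem : (j' : ℕ) ∈ Finset.Icc 1 n := by
        simpa using (Finset.mem_subtype.1 hj')
      obtain ⟨hj1, hjn⟩ := Finset.mem_Icc.1 hj'mem
      have hlam : 0 ≤ m (j' : ℕ) * x n ^ (j' : ℕ) / (((j' : ℕ)).factorial : ℝ) :=
        div_nonneg (mul_nonneg (hm0 _ hj1) (pow_nonneg (hx0 n) _)) (Nat.cast_nonneg _)
      have hmgfX : mgf (X j') μ t
          = ∫ ω, Real.exp ((t * ((j' : ℕ) : ℝ)) * ((Z n (j' : ℕ) ω : ℕ) : ℝ)) ∂μ := by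
        simp only [mgf, hX]
        congr 1
        funext ω
        rw [← mul_assoc]
      rw [hmgfX, poisson_exp μ (Z n (j' : ℕ)) (hZmeas n (j' : ℕ)) _ hlam
        (hpois n hn (j' : ℕ) hj1 hjn)
        (t * ((j' : ℕ) : ℝ)) (mul_nonpos_iff.2 (Or.inr ⟨htle, Nat.cast_nonneg _⟩))]
      congr 2
      rw [ht, div_mul_eq_mul_div]
    rw [Finset.prod_congr rfl hterm, ← Real.exp_sum]
    congr 1
    exact sum_subtype_Icc n
      (fun j => m j * x n ^ j / (j.factorial : ℝ) * (Real.exp (-s * (j : ℝ) / n) - 1))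
  -- Step B: limit of the exponent
  have hgc : Continuous g := gfun_cont s c
  obtain ⟨C0, hC0⟩ :=
    (isCompact_Icc (a := (0:ℝ)) (b := 1)).exists_bound_of_continuousOn hgc.continuousOn
  have hC0' : (0:ℝ) ≤ C0 := le_trans (norm_nonneg _) (hC0 0 ⟨le_refl _, zero_le_one⟩)
  have hr1 : Tendsto (fun i : ℕ => |r (i + 1) - 1|) atTop (nhds 0) := by
    have h0' : Tendsto (fun i : ℕ => |r i - 1|) atTop (nhds 0) := by
      simpa using (hm.sub_const 1).abs
    exact h0'.comp (tendsto_add_atTop_nat 1)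
  have hces : Tendsto (fun n : ℕ => (n:ℝ)⁻¹ * ∑ i ∈ Finset.range n, |r (i + 1) - 1|)
      atTop (nhds 0) := by
    simpa [smul_eq_mul] using hr1.cesaro
  set B : ℕ → ℝ := fun n => (n:ℝ)⁻¹ * ∑ i ∈ Finset.range n, g (((i:ℝ) + 1)/n) with hB
  set C : ℕ → ℝ := fun n =>
    (n:ℝ)⁻¹ * ∑ i ∈ Finset.range n, (r (i + 1) - 1) * g (((i:ℝ) + 1)/n) with hC
  have hBlim : Tendsto B atTop (nhds (∫ u in (0:ℝ)..1, g u)) := riemann_sum_tendsto g hgc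
  have hClim : Tendsto C atTop (nhds 0) := by
    refine squeeze_zero_norm (fun n => ?_) (by simpa using hces.const_mul C0)
    rw [hC, Real.norm_eq_abs, abs_mul, abs_of_nonneg (inv_nonneg.2 (Nat.cast_nonneg n))]
    calc (n:ℝ)⁻¹ * |∑ i ∈ Finset.range n, (r (i + 1) - 1) * g (((i:ℝ) + 1)/n)|
        ≤ (n:ℝ)⁻¹ * ∑ i ∈ Finset.range n, |r (i + 1) - 1| * C0 := by
          refine mul_le_mul_of_nonneg_left ?_ (inv_nonneg.2 (Nat.cast_nonneg n))
          refine le_trans (Finset.abs_sum_le_sum_abs _ _) (Finset.sum_le_sum fun i hi => ?_)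
          rw [abs_mul]
          refine mul_le_mul_of_nonneg_left ?_ (abs_nonneg _)
          have hiN := Finset.mem_range.1 hi
          have hnp : (0:ℝ) < n := by
            have : 0 < n := Nat.pos_of_ne_zero (by omega)
            exact_mod_cast this
          have hmem : (((i:ℝ) + 1)/n) ∈ Set.Icc (0:ℝ) 1 := by
            constructor
            · positivity
            · rw [div_le_one hnp]; exact_mod_cast Nat.succ_le_of_lt hiN
          simpa [Real.norm_eq_abs] using hC0 _ hmem
        _ = C0 * ((n:ℝ)⁻¹ * ∑ i ∈ Finset.range n, |r (i + 1) - 1|) := by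
          rw [← Finset.sum_mul]; ring
  have hAeq : ∀ n : ℕ, 1 ≤ n →
      (∑ j ∈ Finset.Icc 1 n, (m j * x n ^ j / (j.factorial : ℝ)) * (Real.exp (-s * j / n) - 1))
        = κ * (B n + C n) := by
    intro n hn
    have hnp : (0:ℝ) < n := by exact_mod_cast hn
    have hRHS : κ * (B n + C n)
        = ∑ i ∈ Finset.range n, κ * (r (i + 1) * g (((i:ℝ) + 1)/n)) / n := by
      rw [hB, hC, ← mul_add, ← Finset.sum_add_distrib, Finset.mul_sum, Finset.mul_sum]
      refine Finset.sum_congr rfl fun i _ => ?_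
      ring
    rw [sum_Icc_one
      (fun j => (m j * x n ^ j / (j.factorial : ℝ)) * (Real.exp (-s * j / n) - 1)) n, hRHS]
    refine Finset.sum_congr rfl fun i hi => ?_
    have hune : (((i:ℝ) + 1)/n) ≠ 0 := ne_of_gt (by positivity)
    have e1 : Real.exp (-c/n) ^ (i + 1) = Real.exp (-c * ((((i:ℝ) + 1))/n)) := by
      rw [← Real.exp_nat_mul]
      congr 1
      push_cast
      ring
    have e2 : -s * (((i + 1 : ℕ) : ℝ)) / n = -s * ((((i:ℝ) + 1))/n) := by
      push_cast
      ring
    have hgval : g (((i:ℝ) + 1)/n)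
        = Real.exp (-c * ((((i:ℝ) + 1))/n)) * (Real.exp (-s * ((((i:ℝ) + 1))/n)) - 1)
            / (((i:ℝ) + 1)/n) := by
      rw [hg]
      unfold gfun
      rw [if_neg hune]
    rw [hx n, mul_pow, inv_pow, e1, e2, hgval, hr]
    have hfact : ((i + 1).factorial : ℝ) ≠ 0 := Nat.cast_ne_zero.2 (Nat.factorial_ne_zero _)
    have hyp : (y : ℝ) ^ (i + 1) ≠ 0 := pow_ne_zero _ (ne_of_gt hy0)
    have hip : ((i:ℝ) + 1) ≠ 0 := by positivity
    push_cast
    field_simp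
  have hIeq : κ * ((∫ u in (0:ℝ)..1, g u) + 0) = L := by
    rw [add_zero, hL]
    have hcongr : (∫ u in (0:ℝ)..1, g u)
        = ∫ u in (0:ℝ)..1, -((1 - Real.exp (-s * u)) * Real.exp (-c * u) / u) := by
      refine intervalIntegral.integral_congr_ae ?_
      refine Filter.Eventually.of_forall fun u hu => ?_
      rw [Set.uIoc_of_le (zero_le_one)] at hu
      have hu0 : u ≠ 0 := ne_of_gt hu.1
      rw [hg]
      unfold gfun
      rw [if_neg hu0]
      field_simp
      ring
    rw [hcongr, intervalIntegral.integral_neg]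
    ring
  have hAlim : Tendsto (fun n : ℕ => ∑ j ∈ Finset.Icc 1 n,
      (m j * x n ^ j / (j.factorial : ℝ)) * (Real.exp (-s * j / n) - 1)) atTop (nhds L) := by
    have hlim2 := (hBlim.add hClim).const_mul κ
    rw [hIeq] at hlim2
    refine Filter.Tendsto.congr' ?_ hlim2
    filter_upwards [eventually_ge_atTop 1] with n hn
    exact (hAeq n hn).symm
  have hfinal := (Real.continuous_exp.tendsto L).comp hAlim
  refine Filter.Tendsto.congr' ?_ hfinal
  filter_upwards [eventually_ge_atTop 1] with n hn
  exact (hE n hn).symm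
end

section
/- Let κ > 0 and y ≥ 1 be constants, and let m_i be nonnegative integers satisfying m_i ~ κ y^i / i as i → ∞. Fix c ∈ ℝ and for each n set x = x(n) = e^{−c/n} y^{−1}. Let Z_1(n), ..., Z_n(n) be independent binomial random variables, Z_j(n) having parameters m_j and x^j/(1 + x^j), and let T_n = Σ_{j=1}^n j Z_j(n). Then for every s ≥ 0, E exp(−s T_n / n) converges, as n → ∞, to ψ_c(s) = exp(−κ ∫_0^1 (1 − e^{−sx}) e^{−cx} dx/x); in particular T_n/n converges in distribution to the random variable X_{κ,c} with Laplace transform ψ_c. -/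
open MeasureTheory ProbabilityTheory Filter Real
open Topology

lemma aux_riemann {f : ℝ → ℝ} (hf : Continuous f) :
    Tendsto (fun n : ℕ => ∑ j ∈ Finset.Icc 1 n, f (j / n) / n) atTop
      (nhds (∫ u in (0:ℝ)..1, f u)) := by
  rw [Metric.tendsto_atTop]
  intro ε hε
  have huc := isCompact_Icc.uniformContinuousOn_of_continuous
    (hf.continuousOn (s := Set.Icc (0:ℝ) 1))
  rw [Metric.uniformContinuousOn_iff] at huc
  obtain ⟨δ, hδ, hδ'⟩ := huc (ε/2) (by linarith)
  obtain ⟨N, hN⟩ := exists_nat_gt (1/δ)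
  refine ⟨max N 1, fun n hn => ?_⟩
  have hn1 : 1 ≤ n := le_trans (le_max_right N 1) hn
  have hnN : (N : ℝ) ≤ n := Nat.cast_le.2 (le_trans (le_max_left N 1) hn)
  have hnpos : (0:ℝ) < n := by positivity
  have hinv : 1 / (n:ℝ) < δ := by
    rw [div_lt_iff₀ hnpos]
    have : 1/δ < (n:ℝ) := lt_of_lt_of_le hN hnN
    calc (1:ℝ) = δ * (1/δ) := by field_simp
    _ < δ * n := by exact mul_lt_mul_of_pos_left this hδ
  -- interval integrability
  have hint : ∀ a b : ℝ, IntervalIntegrable f volume a b := fun a b =>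
    hf.intervalIntegrable a b
  -- split the integral
  have hsplit : ∫ u in (0:ℝ)..1, f u
      = ∑ i ∈ Finset.range n, ∫ u in ((i:ℝ)/n)..((i+1:ℕ):ℝ)/n, f u := by
    rw [intervalIntegral.sum_integral_adjacent_intervals (fun i _ => hint _ _)]
    norm_num
    rw [div_self hnpos.ne']
  have hsum : ∑ j ∈ Finset.Icc 1 n, f (j / n) / n
      = ∑ i ∈ Finset.range n, f (((i+1:ℕ):ℝ) / n) / n := by
    rw [← Finset.Ico_add_one_right_eq_Icc, Finset.sum_Ico_eq_sum_range]
    simp [add_comm]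
  rw [hsum, hsplit, Real.dist_eq, ← Finset.sum_sub_distrib]
  have hbound : ∀ i ∈ Finset.range n,
      |f (((i+1:ℕ):ℝ) / n) / n - ∫ u in ((i:ℝ)/n)..((i+1:ℕ):ℝ)/n, f u| ≤ (ε/2) / n := by
    intro i hi
    have hile : (i:ℝ) + 1 ≤ n := by
      have := Finset.mem_range.1 hi
      exact_mod_cast Nat.succ_le_of_lt this
    have hconst : f (((i+1:ℕ):ℝ) / n) / n
        = ∫ u in ((i:ℝ)/n)..((i+1:ℕ):ℝ)/n, f (((i+1:ℕ):ℝ) / n) := by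
      rw [intervalIntegral.integral_const, smul_eq_mul]
      have hh : ((i+1:ℕ):ℝ)/n - (i:ℝ)/n = 1/n := by push_cast; field_simp; ring
      rw [hh]
      ring
    rw [hconst, ← Real.norm_eq_abs, ← intervalIntegral.integral_sub intervalIntegrable_const (hint _ _)]
    have := intervalIntegral.norm_integral_le_of_norm_le_const (C := ε/2)
      (f := fun u => f (((i+1:ℕ):ℝ) / n) - f u) (a := (i:ℝ)/n) (b := ((i+1:ℕ):ℝ)/n) ?_
    · calc ‖∫ u in ((i:ℝ)/n)..((i+1:ℕ):ℝ)/n, (f (((i+1:ℕ):ℝ) / n) - f u)‖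
          ≤ ε/2 * |((i+1:ℕ):ℝ)/n - (i:ℝ)/n| := this
      _ = (ε/2) / n := by
          push_cast
          rw [abs_of_nonneg (by rw [sub_nonneg]; gcongr <;> linarith)]
          field_simp
          ring
    · intro u hu
      have hIoc : u ∈ Set.Ioc ((i:ℝ)/n) (((i+1:ℕ):ℝ)/n) := by
        rwa [Set.uIoc_of_le (by gcongr; push_cast; linarith)] at hu
      have hu01 : u ∈ Set.Icc (0:ℝ) 1 := by
        constructor
        · have : (0:ℝ) ≤ (i:ℝ)/n := by positivity
          linarith [hIoc.1]
        · have : ((i+1:ℕ):ℝ)/n ≤ 1 := by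
            rw [div_le_one hnpos]; push_cast; linarith
          linarith [hIoc.2]
      have hx01 : ((i+1:ℕ):ℝ)/n ∈ Set.Icc (0:ℝ) 1 := by
        constructor
        · positivity
        · rw [div_le_one hnpos]; push_cast; linarith
      have hd : dist (((i+1:ℕ):ℝ)/n) u < δ := by
        rw [Real.dist_eq, abs_of_nonneg (by linarith [hIoc.2])]
        have : (i:ℝ)/n < u := hIoc.1
        have h2 : ((i+1:ℕ):ℝ)/n - (i:ℝ)/n = 1/n := by push_cast; field_simp; ring
        linarith
      have := hδ' _ hx01 u hu01 hd
      rw [Real.dist_eq] at this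
      calc ‖f (((i+1:ℕ):ℝ) / n) - f u‖ = |f (((i+1:ℕ):ℝ) / n) - f u| := rfl
        _ ≤ ε/2 := le_of_lt this
  calc |∑ i ∈ Finset.range n, (f (((i+1:ℕ):ℝ) / n) / n - ∫ u in ((i:ℝ)/n)..((i+1:ℕ):ℝ)/n, f u)|
      ≤ ∑ i ∈ Finset.range n, |f (((i+1:ℕ):ℝ) / n) / n - ∫ u in ((i:ℝ)/n)..((i+1:ℕ):ℝ)/n, f u| :=
        Finset.abs_sum_le_sum_abs _ _
    _ ≤ ∑ _i ∈ Finset.range n, (ε/2) / n := Finset.sum_le_sum hbound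
    _ = ε/2 := by
        rw [Finset.sum_const, Finset.card_range]
        field_simp
        ring_nf; simp [hnpos.ne']
    _ < ε := by linarith

lemma aux_cont (s c : ℝ) :
    Continuous fun u : ℝ => if u = 0 then s else (1 - Real.exp (-s*u)) * Real.exp (-c*u) / u := by
  set g : ℝ → ℝ := fun u => if u = 0 then s else (1 - Real.exp (-s*u)) * Real.exp (-c*u) / u with hg
  rw [continuous_iff_continuousAt]
  intro u₀
  rcases eq_or_ne u₀ 0 with h0 | h0
  · subst h0
    have hslope : Tendsto (fun u : ℝ => (1 - Real.exp (-s*u)) / u) (𝓝[≠] 0) (𝓝 s) := by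
      have hder : HasDerivAt (fun u : ℝ => Real.exp (-s*u)) (-s) 0 := by
        have := ((hasDerivAt_id (0:ℝ)).const_mul (-s)).exp
        simpa using this
      have h1 := hasDerivAt_iff_tendsto_slope.1 hder
      have hneg : Tendsto (fun u : ℝ => -slope (fun u : ℝ => Real.exp (-s*u)) 0 u)
          (𝓝[≠] 0) (𝓝 s) := by simpa using h1.neg
      refine hneg.congr' ?_
      filter_upwards [self_mem_nhdsWithin] with u hu
      have hu0 : u ≠ 0 := hu
      rw [slope_def_field]
      field_simp
      simp only [mul_zero, neg_zero, Real.exp_zero, sub_zero]; ring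
    have htend : Tendsto g (𝓝[≠] 0) (𝓝 s) := by
      have h2 : Tendsto (fun u : ℝ => (1 - Real.exp (-s*u)) / u * Real.exp (-c*u))
          (𝓝[≠] 0) (𝓝 s) := by
        have hc : Tendsto (fun u : ℝ => Real.exp (-c*u)) (𝓝[≠] 0) (𝓝 1) := by
          have : Tendsto (fun u : ℝ => Real.exp (-c*u)) (𝓝 0) (𝓝 1) := by
            have hco : Continuous (fun u : ℝ => Real.exp (-c*u)) := by fun_prop
            simpa using hco.tendsto 0
          exact this.mono_left nhdsWithin_le_nhds
        simpa using hslope.mul hc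
      refine h2.congr' ?_
      filter_upwards [self_mem_nhdsWithin] with u hu
      have hu0 : u ≠ 0 := hu
      rw [hg]
      simp only [if_neg hu0]
      ring
    have : Tendsto g (𝓝 0) (𝓝 s) := by
      rw [← nhdsNE_sup_pure]
      rw [tendsto_sup]
      exact ⟨htend, by simp [hg, tendsto_pure_left]; intro U hU; simpa [hg] using mem_of_mem_nhds hU⟩
    rw [ContinuousAt]
    simpa [hg] using this
  · have hev : ∀ᶠ u in 𝓝 u₀, (1 - Real.exp (-s*u)) * Real.exp (-c*u) / u = g u := by
      filter_upwards [isOpen_compl_singleton.mem_nhds h0] with u hu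
      show _ = if u = 0 then s else _
      rw [if_neg (show u ≠ 0 from hu)]
    refine ContinuousAt.congr ?_ hev
    exact ContinuousAt.div (by fun_prop) (by fun_prop) h0

lemma aux_log {a b : ℝ} (hb : 0 < b) (hba : b ≤ a) :
    (a-b)/(1+a) ≤ Real.log (1+a) - Real.log (1+b)
      ∧ Real.log (1+a) - Real.log (1+b) ≤ a - b := by
  have h1b : (0:ℝ) < 1 + b := by linarith
  have h1a : (0:ℝ) < 1 + a := by linarith
  have hdiv : Real.log (1+a) - Real.log (1+b) = Real.log ((1+a)/(1+b)) :=
    (Real.log_div h1a.ne' h1b.ne').symm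
  have hrpos : 0 < (1+a)/(1+b) := by positivity
  constructor
  · have := Real.log_le_sub_one_of_pos (x := (1+b)/(1+a)) (by positivity)
    have hinv : Real.log ((1+b)/(1+a)) = - Real.log ((1+a)/(1+b)) := by
      rw [← Real.log_inv]
      congr 1
      field_simp
    rw [hinv] at this
    rw [hdiv]
    have h2 : (1+b)/(1+a) - 1 = -((a-b)/(1+a)) := by field_simp; ring
    rw [h2] at this
    linarith
  · have := Real.log_le_sub_one_of_pos hrpos
    rw [hdiv]
    have h2 : (1+a)/(1+b) - 1 = (a-b)/(1+b) := by field_simp; ring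
    rw [h2] at this
    have h3 : (a-b)/(1+b) ≤ a - b := by
      rw [div_le_iff₀ h1b]
      nlinarith
    linarith

lemma aux_mgf {Ω : Type*} [MeasurableSpace Ω] (μ : Measure Ω) [IsProbabilityMeasure μ]
    (Z : Ω → ℕ) (hZ : Measurable Z) (M : ℕ) (a : ℝ) (ha : 0 < a)
    (hpmf : ∀ k : ℕ, (μ {ω | Z ω = k}).toReal
      = (Nat.choose M k : ℝ) * (a/(1+a))^k * (1 - a/(1+a))^(M-k))
    (t : ℝ) (ht : t ≤ 0) :
    ∫ ω, Real.exp (t * Z ω) ∂μ = ((1 + a * Real.exp t)/(1+a))^M := by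
  have h1a : (0:ℝ) < 1 + a := by linarith
  have hmeasg : Measurable (fun k : ℕ => Real.exp (t * k)) := measurable_from_top
  haveI : IsProbabilityMeasure (μ.map Z) := Measure.isProbabilityMeasure_map hZ.aemeasurable
  have key : ∫ ω, Real.exp (t * Z ω) ∂μ = ∫ k, Real.exp (t * k) ∂(μ.map Z) :=
    (integral_map hZ.aemeasurable hmeasg.stronglyMeasurable.aestronglyMeasurable).symm
  have hint : Integrable (fun k : ℕ => Real.exp (t * k)) (μ.map Z) := by
    refine Integrable.mono' (integrable_const 1)
      hmeasg.stronglyMeasurable.aestronglyMeasurable ?_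
    filter_upwards with k
    rw [Real.norm_eq_abs, abs_of_pos (Real.exp_pos _)]
    exact Real.exp_le_one_iff.2 (mul_nonpos_of_nonpos_of_nonneg ht (Nat.cast_nonneg k))
  have hmk : ∀ k : ℕ, ((μ.map Z) {k}).toReal
      = (Nat.choose M k : ℝ) * (a/(1+a))^k * (1 - a/(1+a))^(M-k) := by
    intro k
    rw [Measure.map_apply hZ (measurableSet_singleton _)]
    have hpre : Z ⁻¹' {k} = {ω | Z ω = k} := by ext ω; simp
    rw [hpre, hpmf k]
  rw [key, integral_countable' hint]
  have hzero : ∀ k ∉ Finset.range (M+1),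
      ((μ.map Z) {k}).toReal • Real.exp (t * k) = 0 := by
    intro k hk
    rw [hmk k, Nat.choose_eq_zero_of_lt (by simp at hk; omega)]
    simp
  simp only [measureReal_def]
  rw [tsum_eq_sum hzero]
  have hstep : ∀ k ∈ Finset.range (M+1),
      ((μ.map Z) {k}).toReal • Real.exp (t * k)
        = (a/(1+a) * Real.exp t)^k * (1 - a/(1+a))^(M-k) * (Nat.choose M k : ℝ) := by
    intro k _
    rw [hmk k, smul_eq_mul, mul_pow, mul_comm t (k:ℝ), Real.exp_nat_mul]
    ring
  rw [Finset.sum_congr rfl hstep, ← add_pow]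
  congr 1
  field_simp
  ring

set_option maxHeartbeats 1000000 in
lemma aux_term (κ y s c : ℝ) (hκ : 0 < κ) (hy : 1 < y) (hs : 0 ≤ s)
    (C : ℝ) (hC : 0 ≤ C) (Mc : ℝ) (hMc1 : 1 ≤ Mc) (hMcc : Real.exp (-c) ≤ Mc)
    (n j : ℕ) (hj1 : 1 ≤ j) (hjn : j ≤ n) (mj : ℕ)
    (hmjC : (mj:ℝ) ≤ C * (κ * y^j) / j)
    (ε : ℝ) (hε : |(mj:ℝ) * j / (κ * y^j) - 1| ≤ ε) :
    |(mj : ℝ) * (Real.log (1 + (Real.exp (-c/n) * y⁻¹)^j * Real.exp (-s*j/n))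
        - Real.log (1 + (Real.exp (-c/n) * y⁻¹)^j))
      + κ * Real.exp (-c*j/n) * (1 - Real.exp (-s*j/n)) / j|
    ≤ κ * Mc * s * ε / n + C * κ * Mc^2 * s * (y⁻¹)^j / n := by
  have hy0 : (0:ℝ) < y := by linarith
  have hjR : (1:ℝ) ≤ (j:ℝ) := by exact_mod_cast hj1
  have hjpos : (0:ℝ) < j := by linarith
  have hnR : (1:ℝ) ≤ (n:ℝ) := le_trans hjR (by exact_mod_cast hjn)
  have hnpos : (0:ℝ) < n := by linarith
  have hjn' : (j:ℝ) ≤ n := by exact_mod_cast hjn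
  set a : ℝ := (Real.exp (-c/n) * y⁻¹)^j with ha_def
  set e : ℝ := Real.exp (-s*j/n) with he_def
  set E : ℝ := Real.exp (-c*j/n) with hE_def
  have ha : 0 < a := by positivity
  have he0 : 0 < e := Real.exp_pos _
  have he1 : e ≤ 1 := Real.exp_le_one_iff.2 (by
    rw [neg_mul, neg_div, neg_nonpos]; positivity)
  set b : ℝ := a * e with hb_def
  have hb : 0 < b := by positivity
  have hba : b ≤ a := by
    calc b = a * e := rfl
    _ ≤ a * 1 := by gcongr
    _ = a := mul_one a
  have haE : a = E * (y⁻¹)^j := by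
    rw [ha_def, mul_pow, hE_def, ← Real.exp_nat_mul]
    congr 2
    ring
  have hEy : E = a * y^j := by
    rw [haE, mul_assoc, ← mul_pow, inv_mul_cancel₀ hy0.ne', one_pow, mul_one]
  have hEMc : E ≤ Mc := by
    rcases le_or_gt 0 c with hc | hc
    · refine le_trans (Real.exp_le_one_iff.2 ?_) hMc1
      rw [neg_mul, neg_div, neg_nonpos]
      positivity
    · refine le_trans ?_ hMcc
      apply Real.exp_le_exp.2
      have hjn1 : (j:ℝ)/n ≤ 1 := by rw [div_le_one hnpos]; exact hjn'
      have : -c * ((j:ℝ)/n) ≤ -c * 1 := by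
        apply mul_le_mul_of_nonneg_left hjn1 (by linarith)
      calc -c * (j:ℝ)/n = -c * ((j:ℝ)/n) := by ring
      _ ≤ -c * 1 := this
      _ = -c := by ring
  have haMc : a ≤ Mc * (y⁻¹)^j := by
    rw [haE]; gcongr
  have h1me : 1 - e ≤ s*j/n := by
    have := Real.add_one_le_exp (-(s*j/n))
    rw [he_def]
    have heq : -s*(j:ℝ)/n = -(s*j/n) := by ring
    rw [heq]
    linarith
  have h1me0 : 0 ≤ 1 - e := by linarith
  obtain ⟨hDlo, hDhi⟩ := aux_log hb hba
  set D : ℝ := Real.log (1+a) - Real.log (1+b) with hD_def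
  set P : ℝ := κ * y^j / j with hP_def
  have hP : 0 < P := by positivity
  -- rewrite expression
  have hab : a - b = a * (1 - e) := by rw [hb_def]; ring
  have hexpr : (mj : ℝ) * (Real.log (1 + a * e) - Real.log (1 + a))
      + κ * E * (1 - e) / j = (P - mj) * (a - b) + mj * ((a - b) - D) := by
    have h1 : κ * E * (1 - e) / j = P * (a - b) := by
      rw [hEy, hab, hP_def]; field_simp
    rw [h1, hD_def, hb_def]
    ring
  rw [hexpr]
  have hDlo' : (a - b) - D ≤ a * (a - b) := by
    have hkey : (a-b) - (a-b)/(1+a) = (a-b)*a/(1+a) := by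
      field_simp
      ring
    have h2 : (a-b)*a/(1+a) ≤ (a-b)*a :=
      div_le_self (by nlinarith [sub_nonneg.2 hba]) (by linarith)
    have h2' : (a-b)*a = a*(a-b) := mul_comm _ _
    linarith [hDlo, hkey, h2, h2']
  have hDlo0 : 0 ≤ (a - b) - D := by linarith
  have habnn : 0 ≤ a - b := by linarith
  have habs : |(P - mj) * (a - b) + mj * ((a - b) - D)|
      ≤ |P - mj| * (a - b) + mj * ((a - b) - D) := by
    calc |(P - mj) * (a - b) + mj * ((a - b) - D)|
        ≤ |(P - mj) * (a - b)| + |(mj:ℝ) * ((a - b) - D)| := abs_add_le _ _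
    _ = |P - mj| * (a - b) + mj * ((a - b) - D) := by
        rw [abs_mul, abs_of_nonneg habnn, abs_mul, Nat.abs_cast, abs_of_nonneg hDlo0]
  refine le_trans habs ?_
  -- bound 1
  have hPm : |P - mj| ≤ P * ε := by
    have h4 : P - mj = -(P * ((mj:ℝ) * j / (κ * y^j) - 1)) := by
      rw [hP_def]; field_simp; ring
    rw [h4, abs_neg, abs_mul, abs_of_pos hP]
    exact mul_le_mul_of_nonneg_left hε hP.le
  have hab_le : a - b ≤ Mc * (y⁻¹)^j * (s * j / n) := by
    rw [hab]
    have : a * (1 - e) ≤ (Mc * (y⁻¹)^j) * (s*j/n) :=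
      mul_le_mul haMc h1me h1me0 (by positivity)
    linarith
  have hbound1 : |P - mj| * (a - b) ≤ κ * Mc * s * ε / n := by
    have hyj : (y:ℝ)^j ≠ 0 := by positivity
    have hjne : (j:ℝ) ≠ 0 := hjpos.ne'
    have h5 : P * ε * (Mc * (y⁻¹)^j * (s * j / n)) = κ * Mc * s * ε / n := by
      rw [hP_def, inv_pow]
      field_simp
    have hεnn : 0 ≤ ε := le_trans (abs_nonneg _) hε
    calc |P - mj| * (a - b) ≤ (P * ε) * (Mc * (y⁻¹)^j * (s * j / n)) :=
        mul_le_mul hPm hab_le habnn (by positivity)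
    _ = κ * Mc * s * ε / n := h5
  -- bound 2
  have hbound2 : (mj:ℝ) * ((a - b) - D) ≤ C * κ * Mc^2 * s * (y⁻¹)^j / n := by
    have h6 : (mj:ℝ) * ((a-b) - D) ≤ (C * (κ * y^j) / j) * (a * (a - b)) := by
      apply mul_le_mul hmjC hDlo' hDlo0 (by positivity)
    have h7 : a * (a - b) ≤ (Mc * (y⁻¹)^j) * (Mc * (y⁻¹)^j * (s * j / n)) :=
      mul_le_mul haMc hab_le habnn (by positivity)
    have hyj : (y:ℝ)^j ≠ 0 := by positivity
    have hjne : (j:ℝ) ≠ 0 := hjpos.ne'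
    have h8 : (C * (κ * y^j) / j) * ((Mc * (y⁻¹)^j) * (Mc * (y⁻¹)^j * (s * j / n)))
        = C * κ * Mc^2 * s * (y⁻¹)^j / n * ((y⁻¹)^j * y^j) := by
      rw [inv_pow]
      field_simp
    have h9 : (y⁻¹:ℝ)^j * y^j = 1 := by
      rw [← mul_pow, inv_mul_cancel₀ hy0.ne', one_pow]
    calc (mj:ℝ) * ((a-b) - D) ≤ (C * (κ * y^j) / j) * (a * (a - b)) := h6
    _ ≤ (C * (κ * y^j) / j) * ((Mc * (y⁻¹)^j) * (Mc * (y⁻¹)^j * (s * j / n))) := by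
        apply mul_le_mul_of_nonneg_left h7 (by positivity)
    _ = C * κ * Mc^2 * s * (y⁻¹)^j / n * ((y⁻¹)^j * y^j) := h8
    _ = C * κ * Mc^2 * s * (y⁻¹)^j / n := by rw [h9, mul_one]
  linarith

lemma aux_err (κ y s c : ℝ) (hκ : 0 < κ) (hy : 1 < y) (hs : 0 ≤ s) (m : ℕ → ℕ)
    (hm : Tendsto (fun i : ℕ => (m i : ℝ) * (i : ℝ) / (κ * y ^ i)) atTop (nhds 1)) :
    Tendsto (fun n : ℕ => ∑ j ∈ Finset.Icc 1 n,
      ((m j : ℝ) * (Real.log (1 + (Real.exp (-c/n) * y⁻¹)^j * Real.exp (-s*j/n))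
          - Real.log (1 + (Real.exp (-c/n) * y⁻¹)^j))
        + κ * Real.exp (-c*j/n) * (1 - Real.exp (-s*j/n)) / j))
      atTop (nhds 0) := by
  have hy0 : (0:ℝ) < y := by linarith
  set ε : ℕ → ℝ := fun j => |(m j : ℝ) * j / (κ * y^j) - 1| with hε_def
  have hεt : Tendsto ε atTop (nhds 0) := by
    have := (hm.sub (tendsto_const_nhds (x := (1:ℝ)))).abs
    simpa [hε_def] using this
  have hεnn : ∀ j, 0 ≤ ε j := fun j => abs_nonneg _
  -- bound on the sequence m j * j / (κ y^j)
  obtain ⟨C, hC⟩ := hm.bddAbove_range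
  have hC' : ∀ j : ℕ, (m j : ℝ) * j / (κ * y^j) ≤ C := fun j =>
    hC (Set.mem_range_self j)
  have hC0 : (0:ℝ) ≤ C := le_trans (by positivity) (hC' 0)
  have hmjC : ∀ j : ℕ, 1 ≤ j → (m j : ℝ) ≤ C * (κ * y^j) / j := by
    intro j hj
    have hjpos : (0:ℝ) < j := by exact_mod_cast hj
    have hden : (0:ℝ) < κ * y^j := by positivity
    rw [le_div_iff₀ hjpos]
    have := hC' j
    rw [div_le_iff₀ hden] at this
    linarith
  set Mc : ℝ := max 1 (Real.exp (-c)) with hMc_def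
  have hMc1 : 1 ≤ Mc := le_max_left _ _
  have hMcc : Real.exp (-c) ≤ Mc := le_max_right _ _
  have hMc0 : 0 < Mc := by linarith
  set K : ℝ := (1 - y⁻¹)⁻¹ with hK_def
  have hyinv : y⁻¹ < 1 := by
    rw [inv_lt_one_iff₀]; right; exact hy
  have hyinv0 : 0 ≤ y⁻¹ := by positivity
  have hK0 : 0 ≤ K := by
    rw [hK_def]
    have h : (0:ℝ) < 1 - y⁻¹ := by linarith
    positivity
  -- the Cesàro-type majorant
  set r : ℕ → ℝ := fun n => (((n:ℝ)+1))⁻¹ * ∑ i ∈ Finset.range (n+1), ε i with hr_def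
  have hrt : Tendsto r atTop (nhds 0) := by
    have h1 := hεt.cesaro
    have h2 := h1.comp (tendsto_add_atTop_nat 1)
    refine h2.congr ?_
    intro n
    simp [hr_def, Function.comp]
  have hrnn : ∀ n, 0 ≤ r n := by
    intro n
    apply mul_nonneg (by positivity)
    exact Finset.sum_nonneg fun i _ => hεnn i
  set q : ℕ → ℝ := fun n => ((n:ℝ)+1)/n with hq_def
  have hqt : Tendsto q atTop (nhds 1) := by
    have h1 : Tendsto (fun n : ℕ => 1 + 1/(n:ℝ)) atTop (nhds 1) := by
      have := tendsto_one_div_atTop_nhds_zero_nat (𝕜 := ℝ)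
      simpa using (tendsto_const_nhds (x := (1:ℝ))).add this
    refine h1.congr' ?_
    filter_upwards [eventually_ge_atTop 1] with n hn
    have hnpos : (0:ℝ) < n := by exact_mod_cast hn
    rw [hq_def]
    field_simp
  set g : ℕ → ℝ := fun n => κ * Mc * s * (q n * r n) + (C * κ * Mc^2 * s * K)/n
    with hg_def
  have hgt : Tendsto g atTop (nhds 0) := by
    have h1 : Tendsto (fun n => κ * Mc * s * (q n * r n)) atTop (nhds 0) := by
      have := (hqt.mul hrt)
      rw [mul_zero] at this
      simpa using (tendsto_const_nhds (x := κ * Mc * s)).mul this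
    have h2 : Tendsto (fun n : ℕ => (C * κ * Mc^2 * s * K)/(n:ℝ)) atTop (nhds 0) :=
      tendsto_const_div_atTop_nhds_zero_nat _
    simpa using h1.add h2
  apply squeeze_zero_norm' _ hgt
  filter_upwards [eventually_ge_atTop 1] with n hn
  have hnpos : (0:ℝ) < n := by exact_mod_cast hn
  calc ‖∑ j ∈ Finset.Icc 1 n,
      ((m j : ℝ) * (Real.log (1 + (Real.exp (-c/n) * y⁻¹)^j * Real.exp (-s*j/n))
          - Real.log (1 + (Real.exp (-c/n) * y⁻¹)^j))
        + κ * Real.exp (-c*j/n) * (1 - Real.exp (-s*j/n)) / j)‖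
      ≤ ∑ j ∈ Finset.Icc 1 n, (κ * Mc * s * ε j / n + C * κ * Mc^2 * s * (y⁻¹)^j / n) := by
        rw [Real.norm_eq_abs]
        refine le_trans (Finset.abs_sum_le_sum_abs _ _) (Finset.sum_le_sum ?_)
        intro j hj
        rw [Finset.mem_Icc] at hj
        exact aux_term κ y s c hκ hy hs C hC0 Mc hMc1 hMcc n j hj.1 hj.2 (m j)
          (hmjC j hj.1) (ε j) (le_refl _)
    _ = (κ * Mc * s / n) * (∑ j ∈ Finset.Icc 1 n, ε j)
        + (C * κ * Mc^2 * s / n) * (∑ j ∈ Finset.Icc 1 n, (y⁻¹)^j) := by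
        rw [Finset.sum_add_distrib, Finset.mul_sum, Finset.mul_sum]
        congr 1 <;> exact Finset.sum_congr rfl fun j _ => by ring
    _ ≤ g n := by
        have hsub : ∑ j ∈ Finset.Icc 1 n, ε j ≤ ∑ i ∈ Finset.range (n+1), ε i := by
          apply Finset.sum_le_sum_of_subset_of_nonneg
          · intro j hj
            rw [Finset.mem_Icc] at hj
            rw [Finset.mem_range]
            omega
          · intro i _ _; exact hεnn i
        have hqr : κ * Mc * s * (q n * r n) = (κ * Mc * s / n) * ∑ i ∈ Finset.range (n+1), ε i := by
          rw [hq_def, hr_def]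
          field_simp
        have hb1 : (κ * Mc * s / n) * (∑ j ∈ Finset.Icc 1 n, ε j)
            ≤ κ * Mc * s * (q n * r n) := by
          rw [hqr]
          apply mul_le_mul_of_nonneg_left hsub (by positivity)
        have hgeo : ∑ j ∈ Finset.Icc 1 n, (y⁻¹:ℝ)^j ≤ K := by
          refine le_trans (Finset.sum_le_sum_of_subset_of_nonneg ?_ ?_)
            (le_trans (Summable.sum_le_tsum (Finset.range (n+1)) (fun i _ => by positivity)
              (summable_geometric_of_lt_one hyinv0 hyinv)) ?_)
          · intro j hj
            rw [Finset.mem_Icc] at hj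
            rw [Finset.mem_range]
            omega
          · intro i _ _; positivity
          · rw [tsum_geometric_of_lt_one hyinv0 hyinv]
        have hb2 : (C * κ * Mc^2 * s / n) * (∑ j ∈ Finset.Icc 1 n, (y⁻¹:ℝ)^j)
            ≤ (C * κ * Mc^2 * s * K)/n := by
          have : (C * κ * Mc^2 * s / n) * K = (C * κ * Mc^2 * s * K)/n := by ring
          rw [← this]
          apply mul_le_mul_of_nonneg_left hgeo (by positivity)
        exact add_le_add hb1 hb2

/-- Selections with `m_i ~ κ y^i/i`, `x = x(n) = e^{-c/n} y⁻¹`: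
if `Z_j(n)` are independent binomial with parameters `m_j` and `x^j/(1+x^j)` and
`T_n = Σ_{j=1}^n j Z_j(n)`, then for every `s ≥ 0`, `E exp(-s T_n/n)` converges to
`ψ_c(s) = exp(-κ ∫_0^1 (1 - e^{-sx}) e^{-cx} dx/x)`; so `T_n/n ⇒ X_{κ,c}`. -/
theorem stmt10
    {Ω : Type*} [MeasurableSpace Ω] (μ : Measure Ω) [IsProbabilityMeasure μ]
    (κ y : ℝ) (hκ : 0 < κ) (hy : 1 ≤ y)
    (m : ℕ → ℕ)
    (hm : Tendsto (fun i : ℕ => (m i : ℝ) * (i : ℝ) / (κ * y ^ i)) atTop (nhds 1))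
    (c : ℝ) (x : ℕ → ℝ) (hx : ∀ n : ℕ, x n = Real.exp (-c / n) * y⁻¹)
    (Z : ℕ → ℕ → Ω → ℕ) (hZmeas : ∀ n j, Measurable (Z n j))
    (hbin : ∀ n, 1 ≤ n → ∀ j, 1 ≤ j → j ≤ n → ∀ k : ℕ,
      (μ {ω | Z n j ω = k}).toReal
        = (Nat.choose (m j) k : ℝ) * (x n ^ j / (1 + x n ^ j)) ^ k
            * (1 - x n ^ j / (1 + x n ^ j)) ^ (m j - k))
    (hindep : ∀ n, iIndepFun
        (fun j : {j : ℕ // 1 ≤ j} => Z n j) μ) :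
    ∀ s : ℝ, 0 ≤ s →
      Tendsto
        (fun n : ℕ =>
          ∫ ω, Real.exp (-s * ((∑ j ∈ Finset.Icc 1 n, j * Z n j ω : ℕ) : ℝ) / n) ∂μ)
        atTop
        (nhds (Real.exp
          (-κ * ∫ u in (0:ℝ)..1, (1 - Real.exp (-s * u)) * Real.exp (-c * u) / u))) := by
  intro s hs
  rcases hy.lt_or_eq with hy1 | hy1
  swap
  · -- y = 1 : hypotheses are contradictory
    exfalso
    subst hy1
    obtain ⟨N, hN⟩ := eventually_atTop.1
      ((hm.eventually (eventually_gt_nhds (by norm_num : (1:ℝ)/2 < 1))).and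
        (hm.eventually (eventually_lt_nhds (by norm_num : (1:ℝ) < 2))))
    set i := max N (⌈2*κ⌉₊ + 1) with hi_def
    obtain ⟨h5, hlt⟩ := hN i (le_max_left _ _)
    have hi2κ : 2*κ < (i:ℝ) := by
      have h1 : (⌈2*κ⌉₊ + 1 : ℕ) ≤ i := le_max_right _ _
      have h2 : 2*κ ≤ (⌈2*κ⌉₊ : ℝ) := Nat.le_ceil _
      have h3 : ((⌈2*κ⌉₊ + 1 : ℕ) : ℝ) ≤ i := by exact_mod_cast h1
      push_cast at h3
      linarith
    rcases Nat.eq_zero_or_pos (m i) with h0 | h1m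
    · have hz : (m i:ℝ) * i / (κ * (1:ℝ)^i) = 0 := by rw [h0]; simp
      rw [hz] at h5
      linarith
    · have hmi : (1:ℝ) ≤ m i := by exact_mod_cast h1m
      have hipos : (0:ℝ) ≤ i := Nat.cast_nonneg i
      have hmono : (i:ℝ)/κ ≤ (m i:ℝ)*i/(κ*(1:ℝ)^i) := by
        rw [one_pow, mul_one]
        gcongr
        nlinarith
      have h2κ : 2 < (i:ℝ)/κ := by rw [lt_div_iff₀ hκ]; linarith
      linarith
  -- main case : 1 < y
  have hy0 : (0:ℝ) < y := by linarith
  set g : ℝ → ℝ := fun u => if u = 0 then s else (1 - Real.exp (-s*u)) * Real.exp (-c*u) / u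
    with hg_def
  set f : ℝ → ℝ := fun u => κ * g u with hf_def
  have hf : Continuous f := continuous_const.mul (aux_cont s c)
  set I : ℝ := ∫ u in (0:ℝ)..1, (1 - Real.exp (-s * u)) * Real.exp (-c * u) / u with hI_def
  have hIf : ∫ u in (0:ℝ)..1, f u = κ * I := by
    rw [hf_def]
    simp only
    rw [intervalIntegral.integral_const_mul]
    congr 1
    apply intervalIntegral.integral_congr_ae
    apply MeasureTheory.ae_of_all
    intro u hu
    rw [Set.uIoc_of_le (by norm_num : (0:ℝ) ≤ 1)] at hu
    rw [hg_def]
    simp only [if_neg (ne_of_gt hu.1)]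
  -- L n : the log of the product
  set L : ℕ → ℝ := fun n => ∑ j ∈ Finset.Icc 1 n,
      (m j : ℝ) * (Real.log (1 + (Real.exp (-c/n) * y⁻¹)^j * Real.exp (-s*j/n))
        - Real.log (1 + (Real.exp (-c/n) * y⁻¹)^j)) with hL_def
  -- R n : the Riemann sum
  set R : ℕ → ℝ := fun n => ∑ j ∈ Finset.Icc 1 n,
      κ * Real.exp (-c*j/n) * (1 - Real.exp (-s*j/n)) / j with hR_def
  have hRt : Tendsto R atTop (nhds (κ * I)) := by
    have h1 := aux_riemann hf
    rw [hIf] at h1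
    refine h1.congr' ?_
    filter_upwards [eventually_ge_atTop 1] with n hn
    rw [hR_def]
    apply Finset.sum_congr rfl
    intro j hj
    rw [Finset.mem_Icc] at hj
    have hjpos : (0:ℝ) < j := by exact_mod_cast hj.1
    have hnpos : (0:ℝ) < n := by
      have : (j:ℝ) ≤ n := by exact_mod_cast hj.2
      linarith
    have hjn0 : (j:ℝ)/n ≠ 0 := by positivity
    rw [hf_def]
    simp only
    rw [hg_def]
    simp only [if_neg hjn0]
    rw [show -s * ((j:ℝ)/n) = -s*j/n by ring, show -c * ((j:ℝ)/n) = -c*j/n by ring]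
    field_simp
  have hLt : Tendsto L atTop (nhds (-(κ * I))) := by
    have h1 := aux_err κ y s c hκ hy1 hs m hm
    have h2 : ∀ n, L n = (∑ j ∈ Finset.Icc 1 n,
        ((m j : ℝ) * (Real.log (1 + (Real.exp (-c/n) * y⁻¹)^j * Real.exp (-s*j/n))
            - Real.log (1 + (Real.exp (-c/n) * y⁻¹)^j))
          + κ * Real.exp (-c*j/n) * (1 - Real.exp (-s*j/n)) / j)) - R n := by
      intro n
      rw [hL_def, hR_def, ← Finset.sum_sub_distrib]
      apply Finset.sum_congr rfl
      intro j _
      ring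
    have h3 := h1.sub hRt
    rw [zero_sub] at h3
    exact (Tendsto.congr (fun n => (h2 n).symm) h3)
  -- product identity
  have hprod : ∀ n, 1 ≤ n →
      (∫ ω, Real.exp (-s * ((∑ j ∈ Finset.Icc 1 n, j * Z n j ω : ℕ) : ℝ) / n) ∂μ)
        = Real.exp (L n) := by
    intro n hn
    have hnpos : (0:ℝ) < n := by exact_mod_cast hn
    set t : ℝ := -s/n with ht_def
    have ht0 : t ≤ 0 := by
      rw [ht_def]
      apply div_nonpos_of_nonpos_of_nonneg (by linarith) hnpos.le
    set X : {j : ℕ // 1 ≤ j} → Ω → ℝ := fun j ω => ((j:ℕ):ℝ) * Z n (j:ℕ) ω with hX_def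
    have hXmeas : ∀ j, Measurable (X j) := fun j =>
      (measurable_from_top (f := fun k : ℕ => ((j:ℕ):ℝ) * k)).comp (hZmeas n (j:ℕ))
    have hXindep : iIndepFun X μ :=
      (hindep n).comp (fun j (k:ℕ) => ((j:ℕ):ℝ) * k) (fun j => measurable_from_top)
    set Y : ℕ → Ω → ℝ := fun j ω => (j : ℝ) * ((Z n j ω : ℕ) : ℝ) with hY_def
    set s' : Finset {j : ℕ // 1 ≤ j} := (Finset.Icc 1 n).subtype (fun j => 1 ≤ j) with hs'_def
    have hXsum : ∀ ω, (∑ j ∈ s', X j) ω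
        = ((∑ j ∈ Finset.Icc 1 n, j * Z n j ω : ℕ) : ℝ) := by
      intro ω
      rw [Finset.sum_apply]
      push_cast
      rw [hs'_def]
      exact Finset.sum_subtype_of_mem (fun j : ℕ => (j:ℝ) * ((Z n j ω : ℕ) : ℝ))
        (fun x hx => (Finset.mem_Icc.1 hx).1)
    have step1 : (∫ ω, Real.exp (-s * ((∑ j ∈ Finset.Icc 1 n, j * Z n j ω : ℕ) : ℝ) / n) ∂μ)
        = mgf (∑ j ∈ s', X j) μ t := by
      rw [mgf]
      apply integral_congr_ae
      apply MeasureTheory.ae_of_all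
      intro ω
      beta_reduce
      rw [hXsum ω]
      congr 1
      rw [ht_def]
      ring
    have step2 : mgf (∑ j ∈ s', X j) μ t = ∏ j ∈ s', mgf (X j) μ t :=
      hXindep.mgf_sum hXmeas s'
    have step3 : ∏ j ∈ s', mgf (X j) μ t
        = ∏ j ∈ Finset.Icc 1 n, mgf (Y j) μ t := by
      rw [hs'_def]
      exact Finset.prod_subtype_of_mem (fun j => mgf (Y j) μ t)
        (fun x hx => (Finset.mem_Icc.1 hx).1)
    have step4 : ∀ j ∈ Finset.Icc 1 n, mgf (Y j) μ t
        = Real.exp ((m j : ℝ) * (Real.log (1 + (Real.exp (-c/n) * y⁻¹)^j * Real.exp (-s*j/n))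
            - Real.log (1 + (Real.exp (-c/n) * y⁻¹)^j))) := by
      intro j hj
      rw [Finset.mem_Icc] at hj
      have hjpos : (0:ℝ) < j := by exact_mod_cast hj.1
      have hA : (0:ℝ) < x n ^ j := by
        rw [hx n]; positivity
      have hmg : mgf (Y j) μ t
          = ∫ ω, Real.exp ((t * j) * Z n j ω) ∂μ := by
        rw [mgf]
        apply integral_congr_ae
        apply MeasureTheory.ae_of_all
        intro ω
        beta_reduce
        rw [hY_def]
        congr 1
        ring
      rw [hmg, aux_mgf μ (Z n j) (hZmeas n j) (m j) (x n ^ j) hA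
        (hbin n hn j hj.1 hj.2) (t * j)
        (mul_nonpos_of_nonpos_of_nonneg ht0 (Nat.cast_nonneg j))]
      have hxa : x n ^ j = (Real.exp (-c/n) * y⁻¹)^j := by rw [hx n]
      have htj : Real.exp (t * j) = Real.exp (-s*j/n) := by
        congr 1
        rw [ht_def]
        ring
      rw [hxa, htj]
      set a : ℝ := (Real.exp (-c/n) * y⁻¹)^j with ha_def
      have ha : 0 < a := by rw [ha_def]; positivity
      have hnum : (0:ℝ) < 1 + a * Real.exp (-s*j/n) := by positivity
      have hden : (0:ℝ) < 1 + a := by linarith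
      rw [← Real.exp_log (show (0:ℝ) < (1 + a * Real.exp (-s*j/n))/(1+a) by positivity),
        ← Real.exp_nat_mul, Real.log_div hnum.ne' hden.ne']
    calc (∫ ω, Real.exp (-s * ((∑ j ∈ Finset.Icc 1 n, j * Z n j ω : ℕ) : ℝ) / n) ∂μ)
        = ∏ j ∈ s', mgf (X j) μ t := by rw [step1, step2]
      _ = ∏ j ∈ Finset.Icc 1 n, mgf (Y j) μ t := step3
      _ = ∏ j ∈ Finset.Icc 1 n,
            Real.exp ((m j : ℝ) * (Real.log (1 + (Real.exp (-c/n) * y⁻¹)^j * Real.exp (-s*j/n))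
              - Real.log (1 + (Real.exp (-c/n) * y⁻¹)^j))) := Finset.prod_congr rfl step4
      _ = Real.exp (L n) := by rw [hL_def, Real.exp_sum]
  -- conclusion
  have hfinal : Tendsto (fun n => Real.exp (L n)) atTop (nhds (Real.exp (-(κ * I)))) :=
    (Real.continuous_exp.tendsto _).comp hLt
  have hgoal : Real.exp (-(κ * I)) = Real.exp (-κ * I) := by rw [neg_mul]
  rw [← hgoal]
  refine hfinal.congr' ?_
  filter_upwards [eventually_ge_atTop 1] with n hn
  exact (hprod n hn).symm
end

section
/- Let n ≥ 1 and m_1, ..., m_n be nonnegative integers, and let I = {(i,j) : 1 ≤ i ≤ n, 1 ≤ j ≤ m_i}. Let (Y_{ij})_{(i,j)∈I} be mutually independent ℕ-valued random variables, let T = Σ_{(i,j)∈I} i·Y_{ij}, and suppose P(T = n) > 0. Let D = (D_{ij})_{(i,j)∈I} be a random element of ℕ^I equal in distribution to ((Y_{ij})_{(i,j)∈I} | T = n). Define the unrefined processes Z_i = Σ_{j=1}^{m_i} Y_{ij} and C_i = Σ_{j=1}^{m_i} D_{ij} for 1 ≤ i ≤ n. For B ⊆ {1,...,n}, let K = {(i,j)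 ∈ I : i ∈ B}, let D_{B*} = (D_{ij})_{(i,j)∈K}, Y_{B*} = (Y_{ij})_{(i,j)∈K}, C_B = (C_i)_{i∈B}, Z_B = (Z_i)_{i∈B}, and R_B = Σ_{i∈B} i Z_i. Then d_TV(D_{B*}, Y_{B*}) = d_TV(C_B, Z_B) = d_TV((R_B | T = n), R_B); in particular, passing from the refined processes to the unrefined ones, and further to the one-dimensional weighted sums, does not decrease the total variation distance. -/
open MeasureTheory ProbabilityTheory

set_option linter.unusedSectionVars false
set_option maxHeartbeats 1000000

section Aux
variable {Ω : Type*} [MeasurableSpace Ω] {μ : Measure Ω}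

lemma allMeasNat {β : Type*} [Finite β] (s : Set (β → ℕ)) : MeasurableSet s := by
  have h1 : ∀ a : β → ℕ, MeasurableSet ({a} : Set (β → ℕ)) := by
    intro a
    have h : ({a} : Set (β → ℕ)) = ⋂ i, (fun f : β → ℕ => f i) ⁻¹' {a i} := by
      ext f; simp [funext_iff]
    rw [h]
    exact MeasurableSet.iInter fun i => (measurable_pi_apply i) (measurableSet_singleton _)
  have h : s = ⋃ a ∈ s, {a} := by simp
  rw [h]
  exact MeasurableSet.biUnion (Set.to_countable s) fun a _ => h1 a

lemma disj_fibers {α : Type*} (X : Ω → α) (s : Set α) :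
    Pairwise (Function.onFun Disjoint (fun a : ↥s => X ⁻¹' {(a : α)})) := by
  intro a b hab
  simp only [Function.onFun]
  apply Set.disjoint_left.mpr
  intro ω h1 h2
  exact hab (Subtype.ext (by rw [← (h1 : X ω = ↑a), ← (h2 : X ω = ↑b)]))

lemma part {α : Type*} [Countable α] (X : Ω → α)
    (hXm : ∀ s : Set α, MeasurableSet (X ⁻¹' s)) (ρ : α → ℕ) (r : ℕ) :
    μ {ω | ρ (X ω) = r} = ∑' a : {a : α // ρ a = r}, μ {ω | X ω = (a : α)} := by
  have hset : {ω | ρ (X ω) = r} = ⋃ a : ↥{a : α | ρ a = r}, X ⁻¹' {(a : α)} := by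
    ext ω
    constructor
    · intro h; exact Set.mem_iUnion.mpr ⟨⟨X ω, h⟩, rfl⟩
    · intro h
      obtain ⟨a, ha⟩ := Set.mem_iUnion.mp h
      have hXa : X ω = (a : α) := ha
      show ρ (X ω) = r
      rw [hXa]; exact a.2
  rw [hset, measure_iUnion (disj_fibers X _) (fun a => hXm _)]
  rfl

lemma margin {ι α : Type*} [Fintype ι] (Y : ι → Ω → ℕ) (hYmeas : ∀ p, Measurable (Y p))
    (Tn : Set Ω) (hTn : MeasurableSet Tn)
    (D : Ω → ι → ℕ) (hDmeas : Measurable D)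
    (hD : ∀ a : ι → ℕ, μ {ω | D ω = a} = μ ({ω | (fun p => Y p ω) = a} ∩ Tn) / μ Tn)
    (g : (ι → ℕ) → α) (a : α) :
    μ {ω | g (D ω) = a} = μ ({ω | g (fun p => Y p ω) = a} ∩ Tn) / μ Tn := by
  have hV : Measurable (fun ω => fun p => Y p ω) := measurable_pi_lambda _ hYmeas
  have hset : {ω | g (D ω) = a} = ⋃ v : ↥(g ⁻¹' {a}), D ⁻¹' {(v : ι → ℕ)} := by
    ext ω
    constructor
    · intro h; exact Set.mem_iUnion.mpr ⟨⟨D ω, h⟩, rfl⟩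
    · intro h
      obtain ⟨v, hv⟩ := Set.mem_iUnion.mp h
      have hDv : D ω = (v : ι → ℕ) := hv
      show g (D ω) = a
      rw [hDv]; exact v.2
  have hset2 : {ω | g (fun p => Y p ω) = a} ∩ Tn
      = ⋃ v : ↥(g ⁻¹' {a}), ((fun ω => fun p => Y p ω) ⁻¹' {(v : ι → ℕ)} ∩ Tn) := by
    rw [← Set.iUnion_inter]
    congr 1
    ext ω
    constructor
    · intro h; exact Set.mem_iUnion.mpr ⟨⟨_, h⟩, rfl⟩
    · intro h
      obtain ⟨v, hv⟩ := Set.mem_iUnion.mp h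
      have hDv : (fun p => Y p ω) = (v : ι → ℕ) := hv
      show g (fun p => Y p ω) = a
      rw [hDv]; exact v.2
  have hdisj2 : Pairwise (Function.onFun Disjoint
      (fun v : ↥(g ⁻¹' {a}) => ((fun ω => fun p => Y p ω) ⁻¹' {(v : ι → ℕ)} ∩ Tn))) := by
    intro v w hvw
    exact ((disj_fibers (fun ω => fun p => Y p ω) (g ⁻¹' {a}) hvw).mono
      Set.inter_subset_left Set.inter_subset_left)
  calc μ {ω | g (D ω) = a}
      = ∑' v : ↥(g ⁻¹' {a}), μ (D ⁻¹' {(v : ι → ℕ)}) := by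
        rw [hset]; exact measure_iUnion (disj_fibers D _) (fun v => hDmeas (allMeasNat _))
    _ = ∑' v : ↥(g ⁻¹' {a}),
          μ ((fun ω => fun p => Y p ω) ⁻¹' {(v : ι → ℕ)} ∩ Tn) * (μ Tn)⁻¹ := by
        refine tsum_congr fun v => ?_
        have := hD (v : ι → ℕ)
        rw [div_eq_mul_inv] at this
        convert this using 2 <;> rfl
    _ = (∑' v : ↥(g ⁻¹' {a}),
          μ ((fun ω => fun p => Y p ω) ⁻¹' {(v : ι → ℕ)} ∩ Tn)) * (μ Tn)⁻¹ :=
        ENNReal.tsum_mul_right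
    _ = μ ({ω | g (fun p => Y p ω) = a} ∩ Tn) / μ Tn := by
        rw [hset2, measure_iUnion hdisj2 (fun v => (hV (allMeasNat _)).inter hTn),
          div_eq_mul_inv]


lemma key [IsProbabilityMeasure μ] {ι : Type*} [Fintype ι] (wt : ι → ℕ) (Y : ι → Ω → ℕ)
    (hYmeas : ∀ p, Measurable (Y p))
    (hindep : iIndepFun Y μ)
    (P : ι → Prop) [DecidablePred P] (N : ℕ)
    (hpos : μ {ω | (∑ p : ι, wt p * Y p ω) = N} ≠ 0)
    {α : Type*} [Countable α] [MeasurableSpace α] (hα : ∀ s : Set α, MeasurableSet s)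
    (G : ({p : ι // P p} → ℕ) → α) (ρ : α → ℕ)
    (hρ : ∀ v : {p : ι // P p} → ℕ, ρ (G v) = ∑ p : {p : ι // P p}, wt p.1 * v p) :
    dTV (fun a : α => (μ ({ω | G (fun p : {p : ι // P p} => Y p.1 ω) = a}
            ∩ {ω | (∑ p : ι, wt p * Y p ω) = N}) / μ {ω | (∑ p : ι, wt p * Y p ω) = N}).toReal)
        (fun a : α => (μ {ω | G (fun p : {p : ι // P p} => Y p.1 ω) = a}).toReal)
      = (1/2) * (∑' r : ℕ, μ {ω | (∑ p : {p : ι // P p}, wt p.1 * Y p.1 ω) = r}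
           * ENNReal.ofReal |((μ {ω | (∑ p : {p : ι // ¬ P p}, wt p.1 * Y p.1 ω) + r = N})
              / μ {ω | (∑ p : ι, wt p * Y p ω) = N}).toReal - 1|).toReal := by
  classical
  set X : Ω → α := fun ω => G (fun p : {p : ι // P p} => Y p.1 ω) with hX
  set Sc : Ω → ℕ := fun ω => ∑ p : {p : ι // ¬ P p}, wt p.1 * Y p.1 ω with hSc
  set RB : Ω → ℕ := fun ω => ∑ p : {p : ι // P p}, wt p.1 * Y p.1 ω with hRB
  set Tset : Set Ω := {ω | (∑ p : ι, wt p * Y p ω) = N} with hTset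
  set w : ℕ → ENNReal := fun r => μ {ω | Sc ω + r = N} with hw
  set c : ℕ → ℝ := fun r => |((w r) / μ Tset).toReal - 1| with hc
  -- T splits
  have hsplit : ∀ ω, (∑ p : ι, wt p * Y p ω) = RB ω + Sc ω := by
    intro ω
    rw [hRB, hSc]
    rw [← Finset.sum_filter_add_sum_filter_not Finset.univ P (fun p => wt p * Y p ω)]
    congr 1
    · rw [Finset.sum_subtype (p := P) (Finset.univ.filter P) (by simp) (fun p => wt p * Y p ω)]
    · rw [Finset.sum_subtype (p := fun p => ¬ P p) (Finset.univ.filter (fun p => ¬ P p)) (by simp)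
        (fun p => wt p * Y p ω)]
  -- independence of X and Sc
  have hXSc : IndepFun X Sc μ := by
    have hdisj : Disjoint (Finset.univ.filter P) (Finset.univ.filter (fun p => ¬ P p)) := by
      rw [Finset.disjoint_left]
      intro p hp hp'
      simp only [Finset.mem_filter] at hp hp'
      exact hp'.2 hp.2
    have base := hindep.indepFun_finset (Finset.univ.filter P)
      (Finset.univ.filter (fun p => ¬ P p)) hdisj hYmeas
    have hφ : Measurable (fun f : ↥(Finset.univ.filter P) → ℕ =>
        G (fun p : {p : ι // P p} => f ⟨p.1, Finset.mem_filter.mpr ⟨Finset.mem_univ _, p.2⟩⟩)) :=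
      fun _ _ => allMeasNat _
    have hψ : Measurable (fun f : ↥(Finset.univ.filter (fun p => ¬ P p)) → ℕ =>
        ∑ p : {p : ι // ¬ P p}, wt p.1 *
          f ⟨p.1, Finset.mem_filter.mpr ⟨Finset.mem_univ _, p.2⟩⟩) :=
      fun _ _ => allMeasNat _
    exact base.comp hφ hψ
  -- factorization
  have hfac : ∀ a : α, μ ({ω | X ω = a} ∩ Tset) = μ {ω | X ω = a} * w (ρ a) := by
    intro a
    have hseteq : {ω | X ω = a} ∩ Tset = {ω | X ω = a} ∩ {ω | Sc ω + ρ a = N} := by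
      ext ω
      simp only [Set.mem_inter_iff, Set.mem_setOf_eq, hTset]
      refine and_congr_right fun hXa => ?_
      have hRBa : RB ω = ρ a := by
        rw [← hXa, hX, hρ]
      rw [hsplit ω, hRBa, add_comm]
    rw [hseteq]
    have := hXSc.measure_inter_preimage_eq_mul {a} {k | k + ρ a = N} (hα _) trivial
    convert this using 2 <;> rfl
  -- pointwise absolute difference
  have hpt : ∀ a : α,
      |(μ ({ω | X ω = a} ∩ Tset) / μ Tset).toReal - (μ {ω | X ω = a}).toReal|
        = (μ {ω | X ω = a}).toReal * c (ρ a) := by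
    intro a
    rw [hfac a, mul_div_assoc, ENNReal.toReal_mul]
    rw [hc]
    rw [show (μ {ω | X ω = a}).toReal * (w (ρ a) / μ Tset).toReal
          - (μ {ω | X ω = a}).toReal
        = (μ {ω | X ω = a}).toReal * ((w (ρ a) / μ Tset).toReal - 1) by ring]
    rw [abs_mul, abs_of_nonneg ENNReal.toReal_nonneg]
  -- main computation
  rw [dTV]
  congr 1
  calc ∑' a : α, |(μ ({ω | X ω = a} ∩ Tset) / μ Tset).toReal - (μ {ω | X ω = a}).toReal|
      = ∑' a : α, (μ {ω | X ω = a} * ENNReal.ofReal (c (ρ a))).toReal := by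
        refine tsum_congr fun a => ?_
        rw [hpt a, ENNReal.toReal_mul, ENNReal.toReal_ofReal (abs_nonneg _)]
    _ = (∑' a : α, μ {ω | X ω = a} * ENNReal.ofReal (c (ρ a))).toReal := by
        rw [ENNReal.tsum_toReal_eq]
        exact fun a => ENNReal.mul_ne_top (measure_ne_top μ _) ENNReal.ofReal_ne_top
    _ = (∑' r : ℕ, μ {ω | RB ω = r} * ENNReal.ofReal (c r)).toReal := by
        congr 1
        rw [← (Equiv.sigmaFiberEquiv ρ).tsum_eq
          (fun a => μ {ω | X ω = a} * ENNReal.ofReal (c (ρ a)))]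
        rw [ENNReal.tsum_sigma']
        refine tsum_congr fun r => ?_
        have : ∀ a : {x : α // ρ x = r},
            μ {ω | X ω = ((Equiv.sigmaFiberEquiv ρ) ⟨r, a⟩ : α)}
              * ENNReal.ofReal (c (ρ ((Equiv.sigmaFiberEquiv ρ) ⟨r, a⟩)))
            = μ {ω | X ω = (a : α)} * ENNReal.ofReal (c r) := by
          intro a
          simp only [Equiv.sigmaFiberEquiv, Equiv.coe_fn_mk]
          rw [a.2]
        rw [tsum_congr this, ENNReal.tsum_mul_right]
        congr 1
        have hXm : ∀ s : Set α, MeasurableSet (X ⁻¹' s) := by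
          intro s
          exact (measurable_pi_lambda (fun ω (p : {p : ι // P p}) => Y p.1 ω)
            (fun p => hYmeas p.1)) (allMeasNat (G ⁻¹' s))
        rw [← part X hXm ρ r]
        congr 1
        ext ω
        show ρ (X ω) = r ↔ RB ω = r
        rw [hX, hρ]


end Aux

lemma sum_K' {M : Type*} [AddCommMonoid M] {n : ℕ} {m : Fin n → ℕ} (B : Finset (Fin n))
    (g : {p : Σ i : Fin n, Fin (m i) // p.1 ∈ B} → M) :
    ∑ p : {p : Σ i : Fin n, Fin (m i) // p.1 ∈ B}, g p
      = ∑ i : ↥B, ∑ j : Fin (m i.1), g ⟨⟨i.1, j⟩, i.2⟩ := by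
  let e : (Σ i : ↥B, Fin (m i.1)) ≃ {p : Σ i : Fin n, Fin (m i) // p.1 ∈ B} :=
    { toFun := fun q => ⟨⟨q.1.1, q.2⟩, q.1.2⟩
      invFun := fun p => ⟨⟨p.1.1, p.2⟩, p.1.2⟩
      left_inv := fun q => rfl
      right_inv := fun p => rfl }
  rw [← e.sum_comp g, ← Finset.univ_sigma_univ, Finset.sum_sigma]
  rfl


/-- Refined processes.  With index set
`I = {(i,j) : 1 ≤ i ≤ n, 1 ≤ j ≤ m_i}` (encoded as `Σ i : Fin n, Fin (m i)`, the
pair `(i,j)` having weight `i+1`), independent `Y_{ij}`, `T = Σ i·Y_{ij}`, and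
`D ≝ (Y | T = n)`, define the unrefined processes `C_i = Σ_j D_{ij}`,
`Z_i = Σ_j Y_{ij}` and `R_B = Σ_{i∈B} i Z_i`.  Then
`d_TV(D_{B*}, Y_{B*}) = d_TV(C_B, Z_B) = d_TV((R_B | T = n), R_B)`. -/
theorem stmt11
    {Ω : Type*} [MeasurableSpace Ω] (μ : Measure Ω) [IsProbabilityMeasure μ]
    (n : ℕ) (hn : 1 ≤ n) (m : Fin n → ℕ)
    (Y : (Σ i : Fin n, Fin (m i)) → Ω → ℕ)
    (hYmeas : ∀ p, Measurable (Y p))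
    (hindep : iIndepFun Y μ)
    (T : Ω → ℕ)
    (hT : T = fun ω => ∑ p : Σ i : Fin n, Fin (m i), (p.1.val + 1) * Y p ω)
    (hpos : μ {ω | T ω = n} ≠ 0)
    (D : Ω → (Σ i : Fin n, Fin (m i)) → ℕ) (hDmeas : Measurable D)
    (hD : ∀ a : (Σ i : Fin n, Fin (m i)) → ℕ,
      μ {ω | D ω = a}
        = μ ({ω | (fun p => Y p ω) = a} ∩ {ω | T ω = n}) / μ {ω | T ω = n})
    (B : Finset (Fin n)) :
    dTV (fun b : {p : Σ i : Fin n, Fin (m i) // p.1 ∈ B} → ℕ =>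
           (μ {ω | (fun p : {p : Σ i : Fin n, Fin (m i) // p.1 ∈ B} => D ω p.1)
                = b}).toReal)
        (fun b : {p : Σ i : Fin n, Fin (m i) // p.1 ∈ B} → ℕ =>
           (μ {ω | (fun p : {p : Σ i : Fin n, Fin (m i) // p.1 ∈ B} => Y p.1 ω)
                = b}).toReal)
      = dTV (fun b : B → ℕ =>
               (μ {ω | (fun i : B => ∑ j : Fin (m i.1), D ω ⟨i.1, j⟩) = b}).toReal)
            (fun b : B → ℕ =>
               (μ {ω | (fun i : B => ∑ j : Fin (m i.1), Y ⟨i.1, j⟩ ω) = b}).toReal)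
    ∧ dTV (fun b : B → ℕ =>
             (μ {ω | (fun i : B => ∑ j : Fin (m i.1), D ω ⟨i.1, j⟩) = b}).toReal)
          (fun b : B → ℕ =>
             (μ {ω | (fun i : B => ∑ j : Fin (m i.1), Y ⟨i.1, j⟩ ω) = b}).toReal)
      = dTV (fun r : ℕ =>
               (μ ({ω | (∑ i ∈ B, (i.val + 1) * ∑ j : Fin (m i), Y ⟨i, j⟩ ω) = r}
                     ∩ {ω | T ω = n}) / μ {ω | T ω = n}).toReal)
            (fun r : ℕ =>
               (μ {ω | (∑ i ∈ B, (i.val + 1) * ∑ j : Fin (m i), Y ⟨i, j⟩ ω)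
                    = r}).toReal) := by
  classical
  have hTset : {ω | T ω = n} = {ω | (∑ p : Σ i : Fin n, Fin (m i), (p.1.val + 1) * Y p ω) = n} := by
    ext ω; rw [Set.mem_setOf_eq, Set.mem_setOf_eq, hT]
  have hTnmeas : MeasurableSet {ω | (∑ p : Σ i : Fin n, Fin (m i), (p.1.val + 1) * Y p ω) = n} := by
    have hm : Measurable (fun ω => ∑ p : Σ i : Fin n, Fin (m i), (p.1.val + 1) * Y p ω) :=
      Finset.measurable_sum _ (fun p _ => (measurable_const.mul (hYmeas p)))
    exact hm (measurableSet_singleton n)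
  have hpos' : μ {ω | (∑ p : Σ i : Fin n, Fin (m i), (p.1.val + 1) * Y p ω) = n} ≠ 0 := by
    rw [← hTset]; exact hpos
  have hD' : ∀ a : (Σ i : Fin n, Fin (m i)) → ℕ,
      μ {ω | D ω = a}
        = μ ({ω | (fun p => Y p ω) = a}
            ∩ {ω | (∑ p : Σ i : Fin n, Fin (m i), (p.1.val + 1) * Y p ω) = n})
          / μ {ω | (∑ p : Σ i : Fin n, Fin (m i), (p.1.val + 1) * Y p ω) = n} := by
    intro a; rw [← hTset]; exact hD a
  have E1 := key (μ := μ) (fun p : Σ i : Fin n, Fin (m i) => p.1.val + 1) Y hYmeas hindep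
    (fun p : Σ i : Fin n, Fin (m i) => p.1 ∈ B) n hpos' allMeasNat (G := id)
    (ρ := fun v : {p : Σ i : Fin n, Fin (m i) // p.1 ∈ B} → ℕ =>
      ∑ p : {p : Σ i : Fin n, Fin (m i) // p.1 ∈ B}, (p.1.1.val + 1) * v p) (fun v => rfl)
  have E2 := key (μ := μ) (fun p : Σ i : Fin n, Fin (m i) => p.1.val + 1) Y hYmeas hindep
    (fun p : Σ i : Fin n, Fin (m i) => p.1 ∈ B) n hpos' allMeasNat
    (G := fun (v : {p : Σ i : Fin n, Fin (m i) // p.1 ∈ B} → ℕ) (i : ↥B) =>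
      ∑ j : Fin (m i.1), v ⟨⟨i.1, j⟩, i.2⟩)
    (ρ := fun b : ↥B → ℕ => ∑ i : ↥B, (i.1.val + 1) * b i)
    (by
      intro v
      rw [sum_K' B (fun p : {p : Σ i : Fin n, Fin (m i) // p.1 ∈ B} => (p.1.1.val + 1) * v p)]
      exact Finset.sum_congr rfl fun i _ => Finset.mul_sum _ _ _)
  have E3 := key (μ := μ) (fun p : Σ i : Fin n, Fin (m i) => p.1.val + 1) Y hYmeas hindep
    (fun p : Σ i : Fin n, Fin (m i) => p.1 ∈ B) n hpos' (fun s : Set ℕ => (Set.to_countable s).measurableSet)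
    (G := fun v : {p : Σ i : Fin n, Fin (m i) // p.1 ∈ B} → ℕ =>
      ∑ p : {p : Σ i : Fin n, Fin (m i) // p.1 ∈ B}, (p.1.1.val + 1) * v p)
    (ρ := fun r : ℕ => r) (fun v => rfl)
  have hm1 : (fun b : {p : Σ i : Fin n, Fin (m i) // p.1 ∈ B} → ℕ =>
        (μ {ω | (fun p : {p : Σ i : Fin n, Fin (m i) // p.1 ∈ B} => D ω p.1) = b}).toReal)
      = fun b : {p : Σ i : Fin n, Fin (m i) // p.1 ∈ B} → ℕ =>
        (μ ({ω | (fun p : {p : Σ i : Fin n, Fin (m i) // p.1 ∈ B} => Y p.1 ω) = b}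
            ∩ {ω | (∑ p : Σ i : Fin n, Fin (m i), (p.1.val + 1) * Y p ω) = n})
          / μ {ω | (∑ p : Σ i : Fin n, Fin (m i), (p.1.val + 1) * Y p ω) = n}).toReal := by
    funext b
    congr 1
    exact margin Y hYmeas _ hTnmeas D hDmeas hD'
      (fun (v : (Σ i : Fin n, Fin (m i)) → ℕ) (p : {p : Σ i : Fin n, Fin (m i) // p.1 ∈ B}) =>
        v p.1) b
  have hm2 : (fun b : ↥B → ℕ =>
        (μ {ω | (fun i : ↥B => ∑ j : Fin (m i.1), D ω ⟨i.1, j⟩) = b}).toReal)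
      = fun b : ↥B → ℕ =>
        (μ ({ω | (fun i : ↥B => ∑ j : Fin (m i.1), Y ⟨i.1, j⟩ ω) = b}
            ∩ {ω | (∑ p : Σ i : Fin n, Fin (m i), (p.1.val + 1) * Y p ω) = n})
          / μ {ω | (∑ p : Σ i : Fin n, Fin (m i), (p.1.val + 1) * Y p ω) = n}).toReal := by
    funext b
    congr 1
    exact margin Y hYmeas _ hTnmeas D hDmeas hD'
      (fun (v : (Σ i : Fin n, Fin (m i)) → ℕ) (i : ↥B) => ∑ j : Fin (m i.1), v ⟨i.1, j⟩) b
  have hsum3 : ∀ ω, (∑ i ∈ B, (i.val + 1) * ∑ j : Fin (m i), Y ⟨i, j⟩ ω)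
      = ∑ p : {p : Σ i : Fin n, Fin (m i) // p.1 ∈ B}, (p.1.1.val + 1) * Y p.1 ω := by
    intro ω
    rw [sum_K' B (fun p : {p : Σ i : Fin n, Fin (m i) // p.1 ∈ B} => (p.1.1.val + 1) * Y p.1 ω)]
    rw [← Finset.sum_coe_sort B (fun i => (i.val + 1) * ∑ j : Fin (m i), Y ⟨i, j⟩ ω)]
    exact Finset.sum_congr rfl fun i _ => Finset.mul_sum _ _ _
  have hset3 : ∀ r : ℕ,
      {ω | (∑ i ∈ B, (i.val + 1) * ∑ j : Fin (m i), Y ⟨i, j⟩ ω) = r}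
        = {ω | (∑ p : {p : Σ i : Fin n, Fin (m i) // p.1 ∈ B}, (p.1.1.val + 1) * Y p.1 ω) = r} := by
    intro r; ext ω; rw [Set.mem_setOf_eq, Set.mem_setOf_eq, hsum3 ω]
  constructor
  · rw [hm1, hm2]
    exact E1.trans E2.symm
  · rw [hm2]
    simp only [hTset, hset3]
    exact E2.trans E3.symm
end

section
/- Let B be a finite index set, A ⊆ B, and let h : ℕ^B → {0,1} be a function depending only on the coordinates in A (i.e. h(a) = h(a') whenever a and a' agree on A). Let C_B and Z_B be arbitrary random elements of ℕ^B, and let C_A and Z_A denote their restrictions to coordinates in A. Let C_B* be distributed as (C_B | h(C_B) = 1) and Z_B* as (Z_B | h(Z_B) = 1). Write p = P(h(Z_B) = 1), q = P(h(C_B) = 1), d_B = d_TV(C_B, Z_B), d_A = d_TV(C_A, Z_A), and assume p > 0 and q > 0. Then d_TV(C_B*, Z_B*) ≤ (1/2)|1 − q/p| + d_B/p ≤ (1/p)(d_A/2 + d_B) ≤ (3/2) d_B / p. -/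
open MeasureTheory ProbabilityTheory

section helpers

lemma summable_ite' {S : Type*} (P : S → Bool) {f : S → ℝ} (hf : Summable f) :
    Summable (fun s => if P s = true then f s else 0) := by
  have := hf.indicator {s | P s = true}
  convert this using 2 with s
  · rfl
  simp [Set.indicator_apply]

lemma meas_pred {Ω S : Type*} [MeasurableSpace Ω] (μ : Measure Ω) [IsFiniteMeasure μ]
    [Countable S] [MeasurableSpace S] [MeasurableSingletonClass S]
    {X : Ω → S} (hX : Measurable X) (P : S → Bool) :
    (μ {ω | P (X ω) = true}).toReal
      = ∑' s, if P s = true then (μ {ω | X ω = s}).toReal else 0 := by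
  have h1 : (∑' s : {s : S | P s = true}, μ (X ⁻¹' {(s : S)}))
      = μ (X ⁻¹' {s | P s = true}) :=
    tsum_measure_preimage_singleton (Set.to_countable _)
      (fun y _ => hX (measurableSet_singleton y))
  have h2 : {ω | P (X ω) = true} = X ⁻¹' {s | P s = true} := rfl
  rw [h2, ← h1, ENNReal.tsum_toReal_eq (fun a => measure_ne_top μ _)]
  rw [tsum_subtype {s : S | P s = true} (fun s => (μ (X ⁻¹' {s})).toReal)]
  congr 1
  funext s
  simp only [Set.indicator_apply, Set.mem_setOf_eq]
  rfl

lemma summable_meas {Ω S : Type*} [MeasurableSpace Ω] (μ : Measure Ω) [IsFiniteMeasure μ]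
    [Countable S] [MeasurableSpace S] [MeasurableSingletonClass S]
    {X : Ω → S} (hX : Measurable X) :
    Summable (fun s => (μ {ω | X ω = s}).toReal) := by
  apply ENNReal.summable_toReal
  have h1 : (∑' s : ((Set.univ : Set S)), μ (X ⁻¹' {(s : S)})) = μ (X ⁻¹' Set.univ) :=
    tsum_measure_preimage_singleton (Set.to_countable _)
      (fun y _ => hX (measurableSet_singleton y))
  rw [show (fun s => μ {ω | X ω = s}) = fun s => μ (X ⁻¹' {s}) from rfl]
  rw [← tsum_univ, h1]
  exact measure_ne_top μ _

lemma tsum_meas_one {Ω S : Type*} [MeasurableSpace Ω] (μ : Measure Ω) [IsProbabilityMeasure μ]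
    [Countable S] [MeasurableSpace S] [MeasurableSingletonClass S]
    {X : Ω → S} (hX : Measurable X) :
    ∑' s, (μ {ω | X ω = s}).toReal = 1 := by
  have := meas_pred μ hX (fun _ => true)
  simp only [if_true] at this
  rw [← this]
  simp [measure_univ]

section fiber
variable {S T : Type*} (π : S → T) (u : S → ℝ) (hu : ∀ s, 0 ≤ u s) (hsum : Summable u)

include hu hsum

lemma fiber_ofReal [DecidableEq T] (t : T) :
    ENNReal.ofReal (∑' s, if π s = t then u s else 0)
      = ∑' s, if π s = t then ENNReal.ofReal (u s) else 0 := by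
  rw [ENNReal.ofReal_tsum_of_nonneg (fun s => by split; exacts [hu s, le_rfl])
    (summable_ite' (fun s => decide (π s = t)) hsum |>.congr (by intro s; simp))]
  congr 1; funext s
  by_cases hst : π s = t <;> simp [hst]

lemma fiber_tsum_ofReal [DecidableEq T] :
    (∑' t, ENNReal.ofReal (∑' s, if π s = t then u s else 0)) = ENNReal.ofReal (∑' s, u s) := by
  have : ∀ t, ENNReal.ofReal (∑' s, if π s = t then u s else 0)
      = ∑' s, if π s = t then ENNReal.ofReal (u s) else 0 := fiber_ofReal π u hu hsum
  rw [tsum_congr this, ENNReal.tsum_comm]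
  rw [ENNReal.ofReal_tsum_of_nonneg hu hsum]
  congr 1; funext s
  exact tsum_eq_single (π s) (fun b hb => by simp [Ne.symm hb]) |>.trans (by simp)

lemma fiber_summable [DecidableEq T] :
    Summable (fun t => ∑' s, if π s = t then u s else 0) := by
  have h := ENNReal.summable_toReal (f := fun t => ENNReal.ofReal (∑' s, if π s = t then u s else 0))
    (by rw [fiber_tsum_ofReal π u hu hsum]; exact ENNReal.ofReal_ne_top)
  refine h.congr fun t => ?_
  exact ENNReal.toReal_ofReal (tsum_nonneg (fun s => by split; exacts [hu s, le_rfl]))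

lemma fiber_tsum [DecidableEq T] :
    ∑' t, (∑' s, if π s = t then u s else 0) = ∑' s, u s := by
  have h1 : ∀ t, (ENNReal.ofReal (∑' s, if π s = t then u s else 0)).toReal
      = ∑' s, if π s = t then u s else 0 :=
    fun t => ENNReal.toReal_ofReal (tsum_nonneg (fun s => by split; exacts [hu s, le_rfl]))
  calc ∑' t, (∑' s, if π s = t then u s else 0)
      = ∑' t, (ENNReal.ofReal (∑' s, if π s = t then u s else 0)).toReal := by
        exact tsum_congr (fun t => (h1 t).symm)
    _ = (∑' t, ENNReal.ofReal (∑' s, if π s = t then u s else 0)).toReal := by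
        rw [ENNReal.tsum_toReal_eq (fun t => ENNReal.ofReal_ne_top)]
    _ = ∑' s, u s := by
        rw [fiber_tsum_ofReal π u hu hsum]
        exact ENNReal.toReal_ofReal (tsum_nonneg hu)

end fiber

lemma abs_tsum_ite_le {S : Type*} (P : S → Bool) (f g : S → ℝ)
    (hf : Summable f) (hg : Summable g) :
    |(∑' s, if P s = true then f s else 0) - (∑' s, if P s = true then g s else 0)|
      ≤ ∑' s, if P s = true then |f s - g s| else 0 := by
  rw [← Summable.tsum_sub (summable_ite' P hf) (summable_ite' P hg)]
  have h1 : ∀ s, (if P s = true then f s else 0) - (if P s = true then g s else 0)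
      = if P s = true then f s - g s else 0 := by
    intro s; by_cases h : P s = true <;> simp [h]
  rw [tsum_congr h1]
  have h2 := norm_tsum_le_tsum_norm (f := fun s => if P s = true then f s - g s else 0)
    ((summable_ite' P ((hf.sub hg).abs)).congr (by
      intro s; by_cases h : P s = true <;> simp [h]))
  simpa using h2.trans_eq (tsum_congr (fun s => by by_cases h : P s = true <;> simp [h]))

lemma half_abs_le {S : Type*} (P : S → Bool) (f g : S → ℝ)
    (hf : Summable f) (hg : Summable g) (heq : ∑' s, f s = ∑' s, g s) :
    |(∑' s, if P s = true then f s else 0) - (∑' s, if P s = true then g s else 0)|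
      ≤ (1/2) * ∑' s, |f s - g s| := by
  set Q : S → Bool := fun s => ! P s with hQ
  have hsplit : ∀ (u : S → ℝ) s, (if P s = true then u s else 0) + (if Q s = true then u s else 0) = u s := by
    intro u s; by_cases h : P s = true <;> simp [hQ, h]
  have hD : (∑' s, if P s = true then |f s - g s| else 0) + (∑' s, if Q s = true then |f s - g s| else 0)
      = ∑' s, |f s - g s| := by
    rw [← Summable.tsum_add (summable_ite' P (hf.sub hg).abs) (summable_ite' Q (hf.sub hg).abs)]
    exact tsum_congr (hsplit _)
  have hfsplit : (∑' s, if P s = true then f s else 0) + (∑' s, if Q s = true then f s else 0) = ∑' s, f s := by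
    rw [← Summable.tsum_add (summable_ite' P hf) (summable_ite' Q hf)]; exact tsum_congr (hsplit _)
  have hgsplit : (∑' s, if P s = true then g s else 0) + (∑' s, if Q s = true then g s else 0) = ∑' s, g s := by
    rw [← Summable.tsum_add (summable_ite' P hg) (summable_ite' Q hg)]; exact tsum_congr (hsplit _)
  have h1 := abs_tsum_ite_le P f g hf hg
  have h2 := abs_tsum_ite_le Q g f hg hf
  have key : (∑' s, if Q s = true then g s else 0) - (∑' s, if Q s = true then f s else 0)
      = (∑' s, if P s = true then f s else 0) - (∑' s, if P s = true then g s else 0) := by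
    linarith
  rw [key] at h2
  have h2' : |(∑' s, if P s = true then f s else 0) - (∑' s, if P s = true then g s else 0)|
      ≤ ∑' s, if Q s = true then |f s - g s| else 0 := by
    refine h2.trans_eq (tsum_congr fun s => ?_)
    by_cases h : Q s = true <;> simp [h, abs_sub_comm]
  linarith

lemma cond_dTV_le {S : Type*} (P : S → Bool) (f g : S → ℝ)
    (hf0 : ∀ s, 0 ≤ f s) (hf : Summable f) (hg : Summable g)
    {p q : ℝ} (hq : q = ∑' s, if P s = true then f s else 0)
    (hp : p = ∑' s, if P s = true then g s else 0)
    (hppos : 0 < p) (hqpos : 0 < q) :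
    (1/2) * ∑' s, |(if P s = true then f s else 0) / q - (if P s = true then g s else 0) / p|
      ≤ (1/2) * |1 - q / p| + ((1/2) * ∑' s, |f s - g s|) / p := by
  set c : ℝ := |1/q - 1/p| with hc
  have hptw : ∀ s, |(if P s = true then f s else 0) / q - (if P s = true then g s else 0) / p|
      ≤ (if P s = true then f s * c else 0) + (if P s = true then |f s - g s| * (1/p) else 0) := by
    intro s
    by_cases h : P s = true
    · simp only [h, if_true]
      have e1 : f s / q - g s / p = f s * (1/q - 1/p) + (f s - g s) * (1/p) := by ring
      calc |f s / q - g s / p| ≤ |f s * (1/q - 1/p)| + |(f s - g s) * (1/p)| := by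
            rw [e1]; exact abs_add_le _ _
        _ = f s * c + |f s - g s| * (1/p) := by
            rw [abs_mul, abs_mul, abs_of_nonneg (hf0 s), abs_of_nonneg (le_of_lt (by positivity : (0:ℝ) < 1/p))]
    · simp [h]
  have hsum1 : Summable (fun s => |(if P s = true then f s else 0) / q - (if P s = true then g s else 0) / p|) := by
    exact (((summable_ite' P hf).div_const q).sub ((summable_ite' P hg).div_const p)).abs
  have hsum2 : Summable (fun s => (if P s = true then f s * c else 0) + (if P s = true then |f s - g s| * (1/p) else 0)) := by
    refine Summable.add ?_ ?_
    · exact (summable_ite' P (hf.mul_right c)).congr (fun s => by by_cases h : P s = true <;> simp [h])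
    · exact (summable_ite' P (((hf.sub hg).abs).mul_right (1/p))).congr (fun s => by by_cases h : P s = true <;> simp [h])
  have h1 : ∑' s, |(if P s = true then f s else 0) / q - (if P s = true then g s else 0) / p|
      ≤ ∑' s, ((if P s = true then f s * c else 0) + (if P s = true then |f s - g s| * (1/p) else 0)) :=
    Summable.tsum_le_tsum hptw hsum1 hsum2
  have e2 : ∑' s, ((if P s = true then f s * c else 0) + (if P s = true then |f s - g s| * (1/p) else 0))
      = q * c + (∑' s, if P s = true then |f s - g s| else 0) * (1/p) := by
    rw [Summable.tsum_add ((summable_ite' P (hf.mul_right c)).congr (fun s => by by_cases h : P s = true <;> simp [h]))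
      ((summable_ite' P (((hf.sub hg).abs).mul_right (1/p))).congr (fun s => by by_cases h : P s = true <;> simp [h]))]
    congr 1
    · rw [hq, ← tsum_mul_right]
      exact tsum_congr (fun s => by by_cases h : P s = true <;> simp [h])
    · rw [← tsum_mul_right]
      exact tsum_congr (fun s => by by_cases h : P s = true <;> simp [h])
  have h3 : (∑' s, if P s = true then |f s - g s| else 0) ≤ ∑' s, |f s - g s| :=
    Summable.tsum_le_tsum (fun s => by by_cases h : P s = true <;> simp [h, abs_nonneg])
      (summable_ite' P (hf.sub hg).abs) (hf.sub hg).abs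
  have e3 : q * c = |1 - q / p| := by
    have h0 : q * (1/q - 1/p) = 1 - q / p := by field_simp
    calc q * c = |q| * |1/q - 1/p| := by rw [abs_of_pos hqpos, hc]
      _ = |q * (1/q - 1/p)| := (abs_mul _ _).symm
      _ = |1 - q / p| := by rw [h0]
  have hfinal : ∑' s, |(if P s = true then f s else 0) / q - (if P s = true then g s else 0) / p|
      ≤ |1 - q / p| + (∑' s, |f s - g s|) * (1/p) := by
    refine h1.trans (e2.trans_le ?_)
    rw [e3]
    have := mul_le_mul_of_nonneg_right h3 (le_of_lt (by positivity : (0:ℝ) < 1/p))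
    linarith
  calc (1/2) * ∑' s, |(if P s = true then f s else 0) / q - (if P s = true then g s else 0) / p|
      ≤ (1/2) * (|1 - q / p| + (∑' s, |f s - g s|) * (1/p)) := by linarith
    _ = (1/2) * |1 - q / p| + ((1/2) * ∑' s, |f s - g s|) / p := by ring

end helpers
/-- Conditioning on an event of moderate probability.  If
`h : ℕ^B → {0,1}` depends only on coordinates in `A ⊆ B`, and `C_B*`, `Z_B*` are
`C_B`, `Z_B` conditioned on `{h = 1}`, then with `p = P(h(Z_B)=1)`,
`q = P(h(C_B)=1)`, `d_B = d_TV(C_B, Z_B)`, `d_A = d_TV(C_A, Z_A)`: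
`d_TV(C_B*, Z_B*) ≤ (1/2)|1 - q/p| + d_B/p ≤ (1/p)(d_A/2 + d_B) ≤ (3/2) d_B/p`. -/
theorem stmt12
    {Ω : Type*} [MeasurableSpace Ω] (μ : Measure Ω) [IsProbabilityMeasure μ]
    {β : Type*} [Fintype β] (A : Set β)
    (h : (β → ℕ) → Bool)
    (hA : ∀ a a' : β → ℕ, (∀ i ∈ A, a i = a' i) → h a = h a')
    (CB ZB : Ω → β → ℕ)
    (hCmeas : Measurable CB) (hZmeas : Measurable ZB)
    (p q dB dA : ℝ)
    (hp : p = (μ {ω | h (ZB ω) = true}).toReal)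
    (hq : q = (μ {ω | h (CB ω) = true}).toReal)
    (hppos : 0 < p) (hqpos : 0 < q)
    (hdB : dB = dTV (fun a : β → ℕ => (μ {ω | CB ω = a}).toReal)
                    (fun a : β → ℕ => (μ {ω | ZB ω = a}).toReal))
    (hdA : dA = dTV (fun a : A → ℕ => (μ {ω | (fun i : A => CB ω i) = a}).toReal)
                    (fun a : A → ℕ => (μ {ω | (fun i : A => ZB ω i) = a}).toReal)) :
    dTV (fun a : β → ℕ => (μ {ω | CB ω = a ∧ h (CB ω) = true}).toReal / q)
        (fun a : β → ℕ => (μ {ω | ZB ω = a ∧ h (ZB ω) = true}).toReal / p)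
      ≤ (1 / 2) * |1 - q / p| + dB / p
    ∧ (1 / 2) * |1 - q / p| + dB / p ≤ (1 / p) * (dA / 2 + dB)
    ∧ (1 / p) * (dA / 2 + dB) ≤ (3 / 2) * dB / p := by
  classical
  -- basic pmfs
  set f : (β → ℕ) → ℝ := fun a => (μ {ω | CB ω = a}).toReal with hfdef
  set g : (β → ℕ) → ℝ := fun a => (μ {ω | ZB ω = a}).toReal with hgdef
  have hf0 : ∀ a, 0 ≤ f a := fun a => ENNReal.toReal_nonneg
  have hf : Summable f := summable_meas μ hCmeas
  have hg : Summable g := summable_meas μ hZmeas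
  have hq1 : q = ∑' a, if h a = true then f a else 0 := by
    rw [hq]; exact meas_pred μ hCmeas h
  have hp1 : p = ∑' a, if h a = true then g a else 0 := by
    rw [hp]; exact meas_pred μ hZmeas h
  -- restricted variables
  set ρ : (β → ℕ) → (A → ℕ) := fun a i => a (i : β) with hρdef
  set CA : Ω → A → ℕ := fun ω i => CB ω (i : β) with hCAdef
  set ZA : Ω → A → ℕ := fun ω i => ZB ω (i : β) with hZAdef
  have hCAmeas : Measurable CA :=
    measurable_pi_lambda _ (fun i => (measurable_pi_apply (i : β)).comp hCmeas)
  have hZAmeas : Measurable ZA :=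
    measurable_pi_lambda _ (fun i => (measurable_pi_apply (i : β)).comp hZmeas)
  set H' : (A → ℕ) → Bool := fun r => h (fun i => if hi : i ∈ A then r ⟨i, hi⟩ else 0) with hH'def
  have hhH : ∀ a : β → ℕ, h a = H' (ρ a) := by
    intro a
    exact hA a _ (fun i hi => by rw [dif_pos hi])
  set fA : (A → ℕ) → ℝ := fun r => (μ {ω | CA ω = r}).toReal with hfAdef
  set gA : (A → ℕ) → ℝ := fun r => (μ {ω | ZA ω = r}).toReal with hgAdef
  have hfA : Summable fA := summable_meas μ hCAmeas
  have hgA : Summable gA := summable_meas μ hZAmeas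
  have hfA1 : ∑' r, fA r = 1 := tsum_meas_one μ hCAmeas
  have hgA1 : ∑' r, gA r = 1 := tsum_meas_one μ hZAmeas
  have hq2 : q = ∑' r, if H' r = true then fA r else 0 := by
    rw [hq]
    have hset : {ω | h (CB ω) = true} = {ω | H' (CA ω) = true} := by
      ext ω; simp only [Set.mem_setOf_eq]; rw [hhH (CB ω)]
    rw [hset]; exact meas_pred μ hCAmeas H'
  have hp2 : p = ∑' r, if H' r = true then gA r else 0 := by
    rw [hp]
    have hset : {ω | h (ZB ω) = true} = {ω | H' (ZA ω) = true} := by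
      ext ω; simp only [Set.mem_setOf_eq]; rw [hhH (ZB ω)]
    rw [hset]; exact meas_pred μ hZAmeas H'
  have hdA' : dA = (1/2) * ∑' r, |fA r - gA r| := hdA
  have hdB' : dB = (1/2) * ∑' a, |f a - g a| := hdB
  -- |p - q| ≤ dA
  have hkey : |p - q| ≤ dA := by
    rw [hp2, hq2, hdA']
    refine (half_abs_le H' gA fA hgA hfA (hgA1.trans hfA1.symm)).trans_eq ?_
    congr 1
    exact tsum_congr fun r => abs_sub_comm _ _
  -- dA ≤ dB
  have hfAform : ∀ r, fA r = ∑' a, if ρ a = r then f a else 0 := by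
    intro r
    have := meas_pred μ hCmeas (fun a => decide (ρ a = r))
    have hset : {ω | decide (ρ (CB ω) = r) = true} = {ω | CA ω = r} := by
      ext ω; simp only [Set.mem_setOf_eq, decide_eq_true_eq]; rfl
    rw [hset] at this
    rw [hfAdef]
    refine this.trans (tsum_congr fun a => ?_)
    simp only [decide_eq_true_eq]; rfl
  have hgAform : ∀ r, gA r = ∑' a, if ρ a = r then g a else 0 := by
    intro r
    have := meas_pred μ hZmeas (fun a => decide (ρ a = r))
    have hset : {ω | decide (ρ (ZB ω) = r) = true} = {ω | ZA ω = r} := by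
      ext ω; simp only [Set.mem_setOf_eq, decide_eq_true_eq]; rfl
    rw [hset] at this
    rw [hgAdef]
    refine this.trans (tsum_congr fun a => ?_)
    simp only [decide_eq_true_eq]; rfl
  have hu : Summable (fun a => |f a - g a|) := (hf.sub hg).abs
  have hu0 : ∀ a, (0:ℝ) ≤ |f a - g a| := fun a => abs_nonneg _
  have hptw : ∀ r, |fA r - gA r| ≤ ∑' a, if ρ a = r then |f a - g a| else 0 := by
    intro r
    rw [hfAform r, hgAform r]
    have e1 : (∑' a, if ρ a = r then f a else 0)
        = ∑' a, if decide (ρ a = r) = true then f a else 0 :=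
      tsum_congr fun a => by simp only [decide_eq_true_eq]
    have e2 : (∑' a, if ρ a = r then g a else 0)
        = ∑' a, if decide (ρ a = r) = true then g a else 0 :=
      tsum_congr fun a => by simp only [decide_eq_true_eq]
    rw [e1, e2]
    refine (abs_tsum_ite_le (fun a => decide (ρ a = r)) f g hf hg).trans_eq ?_
    exact tsum_congr fun a => by simp only [decide_eq_true_eq]
  have hAB : dA ≤ dB := by
    rw [hdA', hdB']
    have h1 : ∑' r, |fA r - gA r| ≤ ∑' r, ∑' a, if ρ a = r then |f a - g a| else 0 :=
      Summable.tsum_le_tsum hptw ((hfA.sub hgA).abs) (fiber_summable ρ _ hu0 hu)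
    have h2 : ∑' r, (∑' a, if ρ a = r then |f a - g a| else 0) = ∑' a, |f a - g a| :=
      fiber_tsum ρ _ hu0 hu
    linarith [h1.trans_eq h2]
  have hdBnn : 0 ≤ dB := by
    rw [hdB']
    have : (0:ℝ) ≤ ∑' a, |f a - g a| := tsum_nonneg hu0
    linarith
  refine ⟨?_, ?_, ?_⟩
  · -- first inequality
    have ecb : ∀ a, (μ {ω | CB ω = a ∧ h (CB ω) = true}).toReal = if h a = true then f a else 0 := by
      intro a
      by_cases ha : h a = true
      · have hset : {ω | CB ω = a ∧ h (CB ω) = true} = {ω | CB ω = a} := by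
          ext ω; simp only [Set.mem_setOf_eq, and_iff_left_iff_imp]
          intro h1; rw [h1]; exact ha
        rw [hset, if_pos ha]
      · have hset : {ω | CB ω = a ∧ h (CB ω) = true} = ∅ := by
          ext ω; simp only [Set.mem_setOf_eq, Set.mem_empty_iff_false, iff_false, not_and]
          intro h1 h2; rw [h1] at h2; exact ha h2
        rw [hset, if_neg ha]; simp
    have ezb : ∀ a, (μ {ω | ZB ω = a ∧ h (ZB ω) = true}).toReal = if h a = true then g a else 0 := by
      intro a
      by_cases ha : h a = true
      · have hset : {ω | ZB ω = a ∧ h (ZB ω) = true} = {ω | ZB ω = a} := by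
          ext ω; simp only [Set.mem_setOf_eq, and_iff_left_iff_imp]
          intro h1; rw [h1]; exact ha
        rw [hset, if_pos ha]
      · have hset : {ω | ZB ω = a ∧ h (ZB ω) = true} = ∅ := by
          ext ω; simp only [Set.mem_setOf_eq, Set.mem_empty_iff_false, iff_false, not_and]
          intro h1 h2; rw [h1] at h2; exact ha h2
        rw [hset, if_neg ha]; simp
    have egoal : dTV (fun a : β → ℕ => (μ {ω | CB ω = a ∧ h (CB ω) = true}).toReal / q)
        (fun a : β → ℕ => (μ {ω | ZB ω = a ∧ h (ZB ω) = true}).toReal / p)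
        = (1/2) * ∑' a, |(if h a = true then f a else 0) / q - (if h a = true then g a else 0) / p| := by
      show (1/2 : ℝ) * _ = _
      congr 1
      exact tsum_congr fun a => by simp only [ecb, ezb]
    rw [egoal, hdB']
    exact cond_dTV_le h f g hf0 hf hg hq1 hp1 hppos hqpos
  · -- second inequality
    have eabs : |1 - q / p| = |p - q| / p := by
      have e0 : 1 - q / p = (p - q) / p := by field_simp
      rw [e0, abs_div, abs_of_pos hppos]
    calc (1/2) * |1 - q / p| + dB / p = (|p - q| / 2 + dB) * (1/p) := by rw [eabs]; ring
      _ ≤ (dA / 2 + dB) * (1/p) := by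
          apply mul_le_mul_of_nonneg_right (by linarith) (by positivity)
      _ = (1/p) * (dA / 2 + dB) := by ring
  · calc (1/p) * (dA / 2 + dB) = (dA / 2 + dB) * (1/p) := by ring
      _ ≤ ((3/2) * dB) * (1/p) := mul_le_mul_of_nonneg_right (by linarith) (by positivity)
      _ = (3/2) * dB / p := by ring
end

section
/- Let I be a finite set, and for α ∈ I let Z_α be ℕ-valued random variables, mutually independent under a probability measure P. Let w : I → ℤ and u : I → ℤ be deterministic weight functions, let T = Σ_{α∈I} w(α) Z_α and let t be such that P(T = t) > 0. Let C_I be a random element of ℕ^I equal in distribution (under P) to ((Z_α)_{α∈I} | T = t), and set U = Σ_{α∈I} u(α) C_α. Let θ > 0 be a constant such that E[θ^{Σ_{α∈I} u(α) Z_α}] < ∞. Define the tilted law of C_I by P_θ(C_I = a) = θ^{Σ_α u(α)a(α)} P(C_I = a) / E[θ^U], and the tilted law of Z_I by P_θ(Z_I = a) = θ^{Σ_α u(α)a(α)} P(Z_I = a) / E[θ^{Σ_α u(α)Z_α}] (under which the coordinates Z_α remain mutually independent, with P_θ(Z_α = k) = θ^{u(α)k} P(Z_α = k)/E[θ^{u(α)Z_α}]).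 Then, under P_θ, C_I is again equal in distribution to (Z_I | T = t): P_θ(C_I = a) = P_θ(Z_I = a | T = t) for all a ∈ ℕ^I. -/
open MeasureTheory ProbabilityTheory

/-- Tilting preserves the conditional representation.  If
`C ≝ (Z | T = t)` with `Z_α` independent, `T = Σ w(α) Z_α`, `U = Σ u(α) C_α`, and
`θ > 0` has `E[θ^{u·Z}] < ∞`, then the tilted laws
`P_θ(C = a) = θ^{u·a} P(C = a)/E[θ^U]` and
`P_θ(Z = a) = θ^{u·a} P(Z = a)/E[θ^{u·Z}]` again satisfy
`P_θ(C = a) = P_θ(Z = a | T = t)` for every `a ∈ ℕ^I`. -/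
theorem stmt14
    {Ω : Type*} [MeasurableSpace Ω] (μ : Measure Ω) [IsProbabilityMeasure μ]
    {I : Type*} [Fintype I]
    (Z : I → Ω → ℕ) (hZmeas : ∀ α, Measurable (Z α))
    (hindep : iIndepFun Z μ)
    (w u : I → ℤ) (t : ℤ)
    (T : Ω → ℤ) (hT : T = fun ω => ∑ α, w α * (Z α ω : ℤ))
    (hpos : μ {ω | T ω = t} ≠ 0)
    (C : Ω → I → ℕ) (hCmeas : Measurable C)
    (hC : ∀ a : I → ℕ,
      μ {ω | C ω = a}
        = μ ({ω | (fun α => Z α ω) = a} ∩ {ω | T ω = t}) / μ {ω | T ω = t})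
    (θ : ℝ) (hθ : 0 < θ)
    (hint : Integrable (fun ω => θ ^ (∑ α, u α * (Z α ω : ℤ))) μ)
    (EZ EU : ℝ)
    (hEZ : EZ = ∫ ω, θ ^ (∑ α, u α * (Z α ω : ℤ)) ∂μ)
    (hEU : EU = ∫ ω, θ ^ (∑ α, u α * (C ω α : ℤ)) ∂μ)
    (PθZ : (I → ℕ) → ℝ)
    (hPθZ : ∀ a : I → ℕ,
      PθZ a = θ ^ (∑ α, u α * (a α : ℤ))
          * (μ {ω | (fun α => Z α ω) = a}).toReal / EZ)
    (PθT : ℝ)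
    (hPθT : PθT = ∑' b : {b : I → ℕ // (∑ α, w α * (b α : ℤ)) = t}, PθZ b) :
    ∀ a : I → ℕ,
      θ ^ (∑ α, u α * (a α : ℤ)) * (μ {ω | C ω = a}).toReal / EU
        = (if (∑ α, w α * (a α : ℤ)) = t then PθZ a else 0) / PθT := by
  classical
  set Zv : Ω → I → ℕ := fun ω α => Z α ω with hZv
  have hZvmeas : Measurable Zv := measurable_pi_lambda _ hZmeas
  set g : (I → ℕ) → ℝ := fun a => θ ^ (∑ α, u α * (a α : ℤ)) with hg
  have hgpos : ∀ a, 0 < g a := fun a => zpow_pos hθ _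
  set p : (I → ℕ) → ENNReal := fun a => μ {ω | Zv ω = a} with hp
  have hp_ne_top : ∀ a, p a ≠ ⊤ := fun a => measure_ne_top μ _
  set q : ENNReal := μ {ω | T ω = t} with hq
  have hq_ne_top : q ≠ ⊤ := measure_ne_top μ _
  have hqr_pos : 0 < q.toReal := ENNReal.toReal_pos hpos hq_ne_top
  have hqr : q.toReal ≠ 0 := hqr_pos.ne'
  set B : Set (I → ℕ) := {b | (∑ α, w α * (b α : ℤ)) = t} with hB
  -- lintegral identity for any ℕ^I-valued measurable map
  have key : ∀ (V : Ω → I → ℕ), Measurable V →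
      ∫⁻ ω, ENNReal.ofReal (g (V ω)) ∂μ
        = ∑' a, ENNReal.ofReal (g a) * μ {ω | V ω = a} := by
    intro V hV
    rw [← lintegral_map (f := fun a => ENNReal.ofReal (g a)) (measurable_of_countable _) hV,
      lintegral_countable']
    refine tsum_congr fun a => ?_
    rw [Measure.map_apply hV (measurableSet_singleton a)]
    rfl
  -- finiteness of the Z-sum
  have hfinZ : ∑' a, ENNReal.ofReal (g a) * p a ≠ ⊤ := by
    rw [← key Zv hZvmeas]
    have h2 := hint.hasFiniteIntegral
    rw [HasFiniteIntegral] at h2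
    refine ne_of_lt (lt_of_eq_of_lt ?_ h2)
    refine lintegral_congr fun ω => ?_
    rw [← Real.enorm_eq_ofReal (hgpos _).le]
  -- EZ as a sum
  have hEZ' : EZ = ∑' a, g a * (p a).toReal := by
    rw [hEZ, integral_eq_lintegral_of_nonneg_ae
      (Filter.Eventually.of_forall fun ω => (hgpos (Zv ω)).le) hint.aestronglyMeasurable]
    rw [key Zv hZvmeas, ENNReal.tsum_toReal_eq
      (fun a => ENNReal.mul_ne_top ENNReal.ofReal_ne_top (hp_ne_top a))]
    refine tsum_congr fun a => ?_
    rw [ENNReal.toReal_mul, ENNReal.toReal_ofReal (hgpos a).le]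
  -- summability of the Z-family
  have hsum : Summable (fun a => g a * (p a).toReal) := by
    have := ENNReal.summable_toReal hfinZ
    refine this.congr fun a => ?_
    rw [ENNReal.toReal_mul, ENNReal.toReal_ofReal (hgpos a).le]
  -- law of C
  have hCc : ∀ a : I → ℕ, μ {ω | C ω = a}
      = if (∑ α, w α * (a α : ℤ)) = t then p a / q else 0 := by
    intro a
    rw [hC a]
    by_cases h : (∑ α, w α * (a α : ℤ)) = t
    · rw [if_pos h]
      have hsub : {ω | (fun α => Z α ω) = a} ⊆ {ω | T ω = t} := by
        intro ω hω
        have h2 : ∀ α, Z α ω = a α := fun α => congrFun hω α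
        simp only [Set.mem_setOf_eq, hT]
        simp [h2, h]
      rw [Set.inter_eq_left.mpr hsub]
    · rw [if_neg h]
      have : {ω | (fun α => Z α ω) = a} ∩ {ω | T ω = t} = ∅ := by
        ext ω
        simp only [Set.mem_inter_iff, Set.mem_setOf_eq, Set.mem_empty_iff_false, iff_false,
          not_and]
        intro h1 h2
        apply h
        have : ∀ α, Z α ω = a α := fun α => congrFun h1 α
        rw [hT] at h2
        simpa [this] using h2
      rw [this, measure_empty, ENNReal.zero_div]
  -- q as a sum over B
  have hqsum : q = ∑' b : B, p b := by
    have hset : {ω | T ω = t} = Zv ⁻¹' B := by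
      ext ω
      simp only [Set.mem_setOf_eq, Set.mem_preimage, hB, hT]
      exact Iff.rfl
    rw [hq, hset, ← tsum_measure_preimage_singleton (Set.to_countable B)
      (fun y _ => hZvmeas (measurableSet_singleton y))]
    exact tsum_congr fun b => rfl
  -- the key positive sum S
  set S : ℝ := ∑' b : B, g b * (p b).toReal with hS
  have hsumB : Summable (fun b : B => g (b : I → ℕ) * (p (b : I → ℕ)).toReal) :=
    hsum.subtype B
  have hSpos : 0 < S := by
    obtain ⟨b0, hb0⟩ : ∃ b : B, p (b : I → ℕ) ≠ 0 := by
      by_contra hall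
      push_neg at hall
      apply hpos
      rw [← hq] at *
      rw [hqsum]
      exact ENNReal.tsum_eq_zero.mpr fun b => hall b
    refine Summable.tsum_pos hsumB (fun b => mul_nonneg (hgpos _).le ENNReal.toReal_nonneg) b0 ?_
    exact mul_pos (hgpos _) (ENNReal.toReal_pos hb0 (hp_ne_top _))
  have hSne : S ≠ 0 := hSpos.ne'
  -- EZ positive
  have hEZpos : 0 < EZ := by
    rw [hEZ]
    rw [integral_pos_iff_support_of_nonneg
      (fun ω => (hgpos (Zv ω)).le) hint]
    have : Function.support (fun ω => θ ^ (∑ α, u α * (Z α ω : ℤ))) = Set.univ := by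
      ext ω
      simp [Function.mem_support, (hgpos (Zv ω)).ne']
      exact (hgpos (Zv ω)).ne'
    rw [this]
    simp
  have hEZne : EZ ≠ 0 := hEZpos.ne'
  -- finiteness of the C-sum
  have hfinC : ∑' a, ENNReal.ofReal (g a) * μ {ω | C ω = a} ≠ ⊤ := by
    have hle : ∑' a, ENNReal.ofReal (g a) * μ {ω | C ω = a}
        ≤ (∑' a, ENNReal.ofReal (g a) * p a) / q := by
      rw [ENNReal.div_eq_inv_mul, ← ENNReal.tsum_mul_left]
      refine ENNReal.tsum_le_tsum fun a => ?_
      rw [hCc a]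
      by_cases h : (∑ α, w α * (a α : ℤ)) = t
      · rw [if_pos h, ENNReal.div_eq_inv_mul]
        ring_nf
        exact le_of_eq (by ring)
      · simp [if_neg h]
    refine ne_of_lt (lt_of_le_of_lt hle ?_)
    exact ENNReal.div_lt_top hfinZ hpos
  -- EU as a sum
  have hEU' : EU = S / q.toReal := by
    have h1 : EU = ∑' a, g a * (μ {ω | C ω = a}).toReal := by
      rw [hEU, integral_eq_lintegral_of_nonneg_ae
        (Filter.Eventually.of_forall fun ω => (hgpos (C ω)).le)
        ((measurable_of_countable g).comp hCmeas).aestronglyMeasurable]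
      rw [key C hCmeas, ENNReal.tsum_toReal_eq
        (fun a => ENNReal.mul_ne_top ENNReal.ofReal_ne_top (measure_ne_top μ _))]
      refine tsum_congr fun a => ?_
      rw [ENNReal.toReal_mul, ENNReal.toReal_ofReal (hgpos a).le]
    rw [h1, ← tsum_subtype_eq_of_support_subset (s := B) ?side]
    · rw [hS, ← tsum_div_const]
      refine tsum_congr fun b => ?_
      rw [hCc b, if_pos (show (∑ α, w α * ((b : I → ℕ) α : ℤ)) = t from b.2), ENNReal.toReal_div]
      ring
    · intro a ha
      by_contra hnot
      apply ha
      simp only [Function.mem_support] at *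
      rw [hCc a, if_neg (show ¬ (∑ α, w α * (a α : ℤ)) = t from hnot)]
      simp
  -- PθT as a sum
  have hPθT' : PθT = S / EZ := by
    rw [hPθT, hS, ← tsum_div_const]
    exact tsum_congr fun b => hPθZ b
  -- final computation
  intro a
  rw [hCc a, hEU', hPθT', hPθZ a]
  by_cases h : (∑ α, w α * (a α : ℤ)) = t
  · rw [if_pos h, if_pos h, ENNReal.toReal_div]
    field_simp
    rfl
  · rw [if_neg h, if_neg h]
    simp
end

section
/- Let I be a finite set, and for α ∈ I let Z_α be ℕ-valued random variables, mutually independent under a probability measure P. Let w : I → ℤ and u : I → ℤ be deterministic weight functions, let T = Σ_{α∈I} w(α) Z_α and let t be such that P(T = t) > 0. Let C_I be a random element of ℕ^I equal in distribution (under P) to ((Z_α)_{α∈I} | T = t), and set U = Σ_{α∈I} u(α) C_α. Let θ > 0 be such that E[θ^{Σ_α u(α) Z_α}] < ∞, and let P_θ denote the tilted law of Z_I given by P_θ(Z_I = a) = θ^{Σ_α u(α)a(α)} P(Z_I = a) / E[θ^{Σ_α u(α)Z_α}]. Then the combinatorial generating function factorizes as E[θ^U] = E[θ^{Σ_α u(α)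 Z_α}] · P_θ(T = t) / P(T = t). -/
open MeasureTheory ProbabilityTheory

/-- Generating-function factorization under tilting.  If
`C ≝ (Z | T = t)` with `Z_α` independent, `T = Σ w(α) Z_α`, `U = Σ u(α) C_α`, and
`θ > 0` has `E[θ^{u·Z}] < ∞`, then
`E[θ^U] = E[θ^{u·Z}] · P_θ(T = t) / P(T = t)`, where `P_θ` is the tilted law of
`Z` given by `P_θ(Z = a) = θ^{u·a} P(Z = a)/E[θ^{u·Z}]`. -/
theorem stmt15
    {Ω : Type*} [MeasurableSpace Ω] (μ : Measure Ω) [IsProbabilityMeasure μ]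
    {I : Type*} [Fintype I]
    (Z : I → Ω → ℕ) (hZmeas : ∀ α, Measurable (Z α))
    (hindep : iIndepFun Z μ)
    (w u : I → ℤ) (t : ℤ)
    (T : Ω → ℤ) (hT : T = fun ω => ∑ α, w α * (Z α ω : ℤ))
    (hpos : μ {ω | T ω = t} ≠ 0)
    (C : Ω → I → ℕ) (hCmeas : Measurable C)
    (hC : ∀ a : I → ℕ,
      μ {ω | C ω = a}
        = μ ({ω | (fun α => Z α ω) = a} ∩ {ω | T ω = t}) / μ {ω | T ω = t})
    (θ : ℝ) (hθ : 0 < θ)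
    (hint : Integrable (fun ω => θ ^ (∑ α, u α * (Z α ω : ℤ))) μ)
    (EZ EU : ℝ)
    (hEZ : EZ = ∫ ω, θ ^ (∑ α, u α * (Z α ω : ℤ)) ∂μ)
    (hEU : EU = ∫ ω, θ ^ (∑ α, u α * (C ω α : ℤ)) ∂μ)
    (PθZ : (I → ℕ) → ℝ)
    (hPθZ : ∀ a : I → ℕ,
      PθZ a = θ ^ (∑ α, u α * (a α : ℤ))
          * (μ {ω | (fun α => Z α ω) = a}).toReal / EZ)
    (PθT : ℝ)
    (hPθT : PθT = ∑' b : {b : I → ℕ // (∑ α, w α * (b α : ℤ)) = t}, PθZ b) :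
    EU = EZ * PθT / (μ {ω | T ω = t}).toReal := by
  classical
  have hgpos : ∀ a : I → ℕ, (0:ℝ) < θ ^ (∑ α, u α * (a α : ℤ)) :=
    fun a => zpow_pos hθ _
  have hgmeas : Measurable (fun a : I → ℕ =>
      ENNReal.ofReal (θ ^ (∑ α, u α * (a α : ℤ)))) := measurable_of_countable _
  have hμTfin : μ {ω | T ω = t} ≠ ⊤ := measure_ne_top μ _
  -- EU as a tsum of the law of C
  have hEU' : EU = (∑' a : I → ℕ,
      ENNReal.ofReal (θ ^ (∑ α, u α * (a α : ℤ))) * μ {ω | C ω = a}).toReal := by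
    rw [hEU, integral_eq_lintegral_of_nonneg_ae (ae_of_all _ fun ω => (hgpos (C ω)).le)
      (((measurable_of_countable (fun a : I → ℕ => θ ^ (∑ α, u α * (a α : ℤ)))).comp
        hCmeas).aestronglyMeasurable)]
    congr 1
    calc ∫⁻ ω, ENNReal.ofReal (θ ^ (∑ α, u α * ((C ω α) : ℤ))) ∂μ
        = ∫⁻ a, ENNReal.ofReal (θ ^ (∑ α, u α * (a α : ℤ))) ∂(μ.map C) :=
          (lintegral_map hgmeas hCmeas).symm
      _ = ∑' a : I → ℕ, ENNReal.ofReal (θ ^ (∑ α, u α * (a α : ℤ))) * (μ.map C) {a} :=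
          lintegral_countable' _
      _ = _ := by
          refine tsum_congr fun a => ?_
          rw [Measure.map_apply hCmeas (measurableSet_singleton a)]
          rfl
  -- the intersection set
  have hinter : ∀ a : I → ℕ, {ω | (fun α => Z α ω) = a} ∩ {ω | T ω = t}
      = if (∑ α, w α * (a α : ℤ)) = t then {ω | (fun α => Z α ω) = a}
        else (∅ : Set Ω) := by
    intro a
    have hTeq : ∀ ω : Ω, (fun α => Z α ω) = a →
        T ω = ∑ α, w α * (a α : ℤ) := by
      intro ω h
      rw [hT]
      exact Finset.sum_congr rfl fun α _ => by rw [congrFun h α]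
    ext ω
    by_cases hc : (∑ α, w α * (a α : ℤ)) = t
    · simp only [if_pos hc, Set.mem_inter_iff, Set.mem_setOf_eq]
      exact ⟨fun h => h.1, fun h1 => ⟨h1, by rw [hTeq ω h1, hc]⟩⟩
    · simp only [if_neg hc, Set.mem_inter_iff, Set.mem_setOf_eq,
        Set.mem_empty_iff_false, iff_false, not_and]
      intro h1 h2
      exact hc (by rw [← hTeq ω h1]; exact h2)
  have hterm : ∀ a : I → ℕ,
      ENNReal.ofReal (θ ^ (∑ α, u α * (a α : ℤ))) * μ {ω | C ω = a}
      = (if (∑ α, w α * (a α : ℤ)) = t then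
          ENNReal.ofReal (θ ^ (∑ α, u α * (a α : ℤ)))
            * μ {ω | (fun α => Z α ω) = a} else 0) / μ {ω | T ω = t} := by
    intro a
    rw [hC a, hinter a]
    split_ifs with hc
    · rw [mul_div_assoc]
    · simp
  have hsum : (∑' a : I → ℕ,
      ENNReal.ofReal (θ ^ (∑ α, u α * (a α : ℤ))) * μ {ω | C ω = a})
      = (∑' b : {b : I → ℕ // (∑ α, w α * (b α : ℤ)) = t},
          ENNReal.ofReal (θ ^ (∑ α, u α * ((b : I → ℕ) α : ℤ)))
            * μ {ω | (fun α => Z α ω) = (b : I → ℕ)}) / μ {ω | T ω = t} := by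
    simp_rw [hterm, div_eq_mul_inv]
    rw [ENNReal.tsum_mul_right]
    congr 1
    refine Eq.symm ?_
    have hPsub : ∀ b : {b : I → ℕ // (∑ α, w α * (b α : ℤ)) = t},
        ENNReal.ofReal (θ ^ (∑ α, u α * ((b : I → ℕ) α : ℤ)))
          * μ {ω | (fun α => Z α ω) = (b : I → ℕ)}
        = (fun a : I → ℕ => if (∑ α, w α * (a α : ℤ)) = t then
            ENNReal.ofReal (θ ^ (∑ α, u α * (a α : ℤ)))
              * μ {ω | (fun α => Z α ω) = a} else 0) (b : I → ℕ) := by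
      intro b
      simp only [if_pos b.prop]
    rw [tsum_congr hPsub]
    refine tsum_subtype_eq_of_support_subset
      (f := fun a : I → ℕ =>
        if (∑ α, w α * (a α : ℤ)) = t then
          ENNReal.ofReal (θ ^ (∑ α, u α * (a α : ℤ)))
            * μ {ω | (fun α => Z α ω) = a} else 0)
      (s := {b : I → ℕ | (∑ α, w α * (b α : ℤ)) = t}) ?_
    intro a ha
    simp only [Function.mem_support] at ha
    by_contra hc
    exact ha (if_neg hc)
  -- positivity of EZ
  have hEZpos : 0 < EZ := by
    rw [hEZ]
    rw [integral_pos_iff_support_of_nonneg_ae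
      (ae_of_all _ fun ω => (zpow_pos hθ _).le) hint]
    have hsupp : Function.support (fun ω => θ ^ (∑ α, u α * (Z α ω : ℤ)))
        = Set.univ := by
      ext ω
      simp [Function.support, (zpow_pos hθ (∑ α, u α * (Z α ω : ℤ))).ne']
    rw [hsupp]
    simp
  -- RHS computation
  have hRHS : EZ * PθT = ∑' b : {b : I → ℕ // (∑ α, w α * (b α : ℤ)) = t},
      θ ^ (∑ α, u α * ((b : I → ℕ) α : ℤ))
        * (μ {ω | (fun α => Z α ω) = (b : I → ℕ)}).toReal := by
    rw [hPθT]
    simp_rw [hPθZ]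
    rw [tsum_div_const, mul_comm, div_mul_cancel₀ _ hEZpos.ne']
  rw [hEU', hsum, ENNReal.toReal_div, hRHS]
  congr 1
  rw [ENNReal.tsum_toReal_eq (fun b => ENNReal.mul_ne_top ENNReal.ofReal_ne_top
    (measure_ne_top μ _))]
  refine tsum_congr fun b => ?_
  rw [ENNReal.toReal_mul, ENNReal.toReal_ofReal (hgpos _).le]
end

section
/- Let I be a finite set, and for α ∈ I let Z_α be ℕ-valued random variables, mutually independent under a probability measure P. Let w : I → ℤ and u : I → ℤ be deterministic weight functions, let T = Σ_{α∈I} w(α) Z_α, U_I = Σ_{α∈I} u(α) Z_α, and let t be such that P(T = t) > 0. Let C_I be a random element of ℕ^I equal in distribution (under P) to (Z_I | T = t), and set U = Σ_{α∈I} u(α) C_α. Let θ > 0 with E[θ^{U_I}] < ∞, and let P_θ denote the tilted law under which the Z_α are independent with P_θ(Z_α = k) = θ^{u(α)k} P(Z_α = k)/E[θ^{u(α)Z_α}]. For B ⊆ I write Z_B = (Z_α)_{α∈B}, C_B = (C_α)_{α∈B}, U_B = Σ_{α∈B} u(α) Z_α and R_B = Σ_{α∈B} w(α) Z_α. Assume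 u is such that P(U = u₀) > 0 for a value u₀. Then d_TV( L(C_B | U = u₀), L_θ(Z_B) ) = d_TV( L_θ((U_B, R_B) | U_I = u₀, T = t), L_θ((U_B, R_B)) ), where L denotes law under P and L_θ law under P_θ. -/
open MeasureTheory ProbabilityTheory
open scoped ENNReal

lemma tsum_eq_toReal_tsum_ofReal {ι : Type*} (f : ι → ℝ) (hf : ∀ i, 0 ≤ f i) :
    ∑' i, f i = (∑' i, ENNReal.ofReal (f i)).toReal := by
  by_cases h : Summable f
  · rw [← ENNReal.ofReal_tsum_of_nonneg hf h, ENNReal.toReal_ofReal (tsum_nonneg hf)]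
  · rw [tsum_eq_zero_of_not_summable h]
    have htop : ∑' i, ENNReal.ofReal (f i) = ⊤ := by
      by_contra htop
      exact h ((summable_congr fun i => ENNReal.toReal_ofReal (hf i)).mp
        (ENNReal.summable_toReal htop))
    simp [htop]

lemma measure_preimage_eq_tsum {Ω S : Type*} [MeasurableSpace Ω] [MeasurableSpace S]
    [MeasurableSingletonClass S] [Countable S]
    (ν : Measure Ω) (f : Ω → S) (hf : Measurable f) (A : Set S) :
    ν (f ⁻¹' A) = ∑' a : A, ν (f ⁻¹' {(a : S)}) := by
  have h1 : f ⁻¹' A = ⋃ a ∈ A, f ⁻¹' {a} := by ext ω; simp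
  rw [h1, measure_biUnion A.to_countable ?_ fun a _ => hf (measurableSet_singleton a)]
  intro a _ b _ hab
  exact Disjoint.preimage f (by simpa using hab)

lemma key_regroup {β π : Type*} (rb : β → ℝ≥0∞) (φ : β → π) (G : π → ℝ≥0∞) (Rc N : ℝ≥0∞)
    (hrb : ∀ b, rb b ≠ ⊤) (hRb : ∀ pr, (∑' b : (φ ⁻¹' {pr}), rb ↑b) ≠ ⊤) :
    ∑' b, |((rb b * G (φ b)) / N).toReal - (rb b * Rc).toReal|
      = ∑' pr, |(((∑' b : (φ ⁻¹' {pr}), rb ↑b) * G pr) / N).toReal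
          - ((∑' b : (φ ⁻¹' {pr}), rb ↑b) * Rc).toReal| := by
  set H : π → ℝ := fun pr => |(G pr).toReal / N.toReal - Rc.toReal| with hH
  have hterm : ∀ (x : ℝ≥0∞) (pr : π),
      |((x * G pr) / N).toReal - (x * Rc).toReal| = x.toReal * H pr := by
    intro x pr
    rw [hH, ENNReal.toReal_div, ENNReal.toReal_mul, ENNReal.toReal_mul, mul_div_assoc,
      ← mul_sub, abs_mul, abs_of_nonneg ENNReal.toReal_nonneg]
  have hH0 : ∀ pr, 0 ≤ H pr := fun pr => abs_nonneg _
  have hofReal : ∀ (x : ℝ≥0∞) (pr : π), x ≠ ⊤ →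
      ENNReal.ofReal (x.toReal * H pr) = x * ENNReal.ofReal (H pr) := by
    intro x pr hx
    rw [ENNReal.ofReal_mul ENNReal.toReal_nonneg, ENNReal.ofReal_toReal hx]
  calc ∑' b, |((rb b * G (φ b)) / N).toReal - (rb b * Rc).toReal|
      = ∑' b, (rb b).toReal * H (φ b) := tsum_congr fun b => hterm _ _
    _ = (∑' b, ENNReal.ofReal ((rb b).toReal * H (φ b))).toReal := by
        exact tsum_eq_toReal_tsum_ofReal _ fun b =>
          mul_nonneg ENNReal.toReal_nonneg (hH0 _)
    _ = (∑' pr, ((∑' b : (φ ⁻¹' {pr}), rb ↑b) * ENNReal.ofReal (H pr))).toReal := by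
        congr 1
        rw [← ENNReal.tsum_fiberwise (fun b => ENNReal.ofReal ((rb b).toReal * H (φ b))) φ]
        refine tsum_congr fun pr => ?_
        calc ∑' b : (φ ⁻¹' {pr}), ENNReal.ofReal ((rb ↑b).toReal * H (φ ↑b))
            = ∑' b : (φ ⁻¹' {pr}), rb ↑b * ENNReal.ofReal (H pr) := by
              refine tsum_congr fun b => ?_
              rw [show φ (↑b : β) = pr from b.2, hofReal _ _ (hrb _)]
          _ = (∑' b : (φ ⁻¹' {pr}), rb ↑b) * ENNReal.ofReal (H pr) := ENNReal.tsum_mul_right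
    _ = ∑' pr, |(((∑' b : (φ ⁻¹' {pr}), rb ↑b) * G pr) / N).toReal
          - ((∑' b : (φ ⁻¹' {pr}), rb ↑b) * Rc).toReal| := by
        rw [tsum_eq_toReal_tsum_ofReal
          (fun pr => |(((∑' b : (φ ⁻¹' {pr}), rb ↑b) * G pr) / N).toReal
            - ((∑' b : (φ ⁻¹' {pr}), rb ↑b) * Rc).toReal|) (fun pr => abs_nonneg _)]
        congr 1
        refine tsum_congr fun pr => ?_
        rw [hterm, hofReal _ _ (hRb pr)]


/-- Large deviations: with `C ≝ (Z | T = t)`, `U = Σ u(α) C_α`,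
and `P_θ` the tilted law (density `θ^{u·Z}/E[θ^{u·Z}]` w.r.t. `P`, under which the
`Z_α` remain independent with tilted marginals), for `B ⊆ I`,
`d_TV( L(C_B | U = u₀), L_θ(Z_B) )
  = d_TV( L_θ((U_B,R_B) | U_I = u₀, T = t), L_θ((U_B,R_B)) )`. -/
theorem stmt16
    {Ω : Type*} [MeasurableSpace Ω] (μ : Measure Ω) [IsProbabilityMeasure μ]
    {I : Type*} [Fintype I]
    (Z : I → Ω → ℕ) (hZmeas : ∀ α, Measurable (Z α))
    (hindep : iIndepFun Z μ)
    (w u : I → ℤ) (t : ℤ)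
    (T UI : Ω → ℤ)
    (hT : T = fun ω => ∑ α, w α * (Z α ω : ℤ))
    (hUI : UI = fun ω => ∑ α, u α * (Z α ω : ℤ))
    (hpos : μ {ω | T ω = t} ≠ 0)
    (C : Ω → I → ℕ) (hCmeas : Measurable C)
    (hC : ∀ a : I → ℕ,
      μ {ω | C ω = a}
        = μ ({ω | (fun α => Z α ω) = a} ∩ {ω | T ω = t}) / μ {ω | T ω = t})
    (U : Ω → ℤ) (hU : U = fun ω => ∑ α, u α * (C ω α : ℤ))
    (θ : ℝ) (hθ : 0 < θ)
    (hint : Integrable (fun ω => θ ^ (∑ α, u α * (Z α ω : ℤ))) μ)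
    (EZ : ℝ) (hEZ : EZ = ∫ ω, θ ^ (∑ α, u α * (Z α ω : ℤ)) ∂μ)
    (Pθ : Measure Ω)
    (hPθ : Pθ = μ.withDensity (fun ω => ENNReal.ofReal (θ ^ (UI ω) / EZ)))
    (B : Finset I)
    (UB RB : Ω → ℤ)
    (hUB : UB = fun ω => ∑ α ∈ B, u α * (Z α ω : ℤ))
    (hRB : RB = fun ω => ∑ α ∈ B, w α * (Z α ω : ℤ))
    (u₀ : ℤ) (hu₀ : μ {ω | U ω = u₀} ≠ 0) :
    dTV (fun b : B → ℕ =>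
           (μ ({ω | (fun α : B => C ω α) = b} ∩ {ω | U ω = u₀})
              / μ {ω | U ω = u₀}).toReal)
        (fun b : B → ℕ => (Pθ {ω | (fun α : B => Z α ω) = b}).toReal)
      = dTV (fun pr : ℤ × ℤ =>
               (Pθ ({ω | (UB ω, RB ω) = pr} ∩ {ω | UI ω = u₀ ∧ T ω = t})
                  / Pθ {ω | UI ω = u₀ ∧ T ω = t}).toReal)
            (fun pr : ℤ × ℤ => (Pθ {ω | (UB ω, RB ω) = pr}).toReal) := by
  classical
  -- basic objects
  set Zf : Ω → I → ℕ := fun ω α => Z α ω with hZfdef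
  have hZf : Measurable Zf := measurable_pi_lambda _ hZmeas
  set σu : (I → ℕ) → ℤ := fun a => ∑ α, u α * (a α : ℤ) with hσudef
  set σw : (I → ℕ) → ℤ := fun a => ∑ α, w α * (a α : ℤ) with hσwdef
  set p : (I → ℕ) → ℝ≥0∞ := fun a => μ (Zf ⁻¹' {a}) with hpdef
  set q : (I → ℕ) → ℝ≥0∞ := fun a => ENNReal.ofReal (θ ^ σu a / EZ) * p a with hqdef
  set SU : Set (I → ℕ) := {a | σu a = u₀} with hSUdef
  set W : Set (I → ℕ) := {a | σw a = t} with hWdef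
  set Nt : ℝ≥0∞ := μ {ω | T ω = t} with hNtdef
  -- tilted measure of cylinder-type events
  have hQ : ∀ a : I → ℕ, Pθ (Zf ⁻¹' {a}) = q a := by
    intro a
    have hs : MeasurableSet (Zf ⁻¹' {a}) := hZf (measurableSet_singleton a)
    have h1 : Pθ (Zf ⁻¹' {a}) = ∫⁻ ω in Zf ⁻¹' {a}, ENNReal.ofReal (θ ^ UI ω / EZ) ∂μ := by
      rw [hPθ, withDensity_apply _ hs]
    have h2 : ∫⁻ ω in Zf ⁻¹' {a}, ENNReal.ofReal (θ ^ UI ω / EZ) ∂μ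
        = ∫⁻ _ω in Zf ⁻¹' {a}, ENNReal.ofReal (θ ^ σu a / EZ) ∂μ := by
      refine setLIntegral_congr_fun hs (fun ω hω => ?_)
      have hZa : Zf ω = a := hω
      rw [hUI, hσudef, ← hZa]
    rw [h1, h2, setLIntegral_const, hqdef]
  have hPθS : ∀ S : Set (I → ℕ), Pθ (Zf ⁻¹' S) = ∑' a : S, q ↑a := by
    intro S
    rw [measure_preimage_eq_tsum Pθ Zf hZf S]
    exact tsum_congr fun a => hQ ↑a
  -- law of C
  have hcm : ∀ a : I → ℕ, μ (C ⁻¹' {a}) = W.indicator (fun a' => p a' / Nt) a := by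
    intro a
    have h0 : μ (C ⁻¹' {a}) = μ ((Zf ⁻¹' {a}) ∩ {ω | T ω = t}) / Nt := hC a
    by_cases hw : σw a = t
    · have hsub : Zf ⁻¹' {a} ⊆ {ω | T ω = t} := by
        intro ω hω
        have hZa : Zf ω = a := hω
        show T ω = t
        rw [hT]
        have : σw (Zf ω) = t := by rw [hZa, hw]
        simpa [hσwdef] using this
      rw [h0, Set.inter_eq_self_of_subset_left hsub,
        Set.indicator_of_mem (show a ∈ W from hw)]
    · have hdis : Zf ⁻¹' {a} ∩ {ω | T ω = t} = ∅ := by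
        ext ω
        simp only [Set.mem_inter_iff, Set.mem_preimage, Set.mem_singleton_iff,
          Set.mem_setOf_eq, Set.mem_empty_iff_false, iff_false, not_and]
        intro hZa hTt
        apply hw
        have : σw (Zf ω) = t := by rw [← hTt, hT]
        rwa [hZa] at this
      rw [h0, hdis, measure_empty, ENNReal.zero_div,
        Set.indicator_of_notMem (show a ∉ W from hw)]
  -- positivity of EZ
  have hEZpos : 0 < EZ := by
    rw [hEZ]
    have hnn : 0 ≤ fun ω => θ ^ (∑ α, u α * (Z α ω : ℤ)) :=
      fun ω => (_root_.zpow_pos hθ _).le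
    refine (integral_pos_iff_support_of_nonneg hnn hint).mpr ?_
    have hsup : Function.support (fun ω => θ ^ (∑ α, u α * (Z α ω : ℤ))) = Set.univ := by
      ext ω; simp [(_root_.zpow_pos hθ (∑ α, u α * (Z α ω : ℤ))).ne']
    rw [hsup]
    simp
  -- ratio identity (Lemma A)
  have hNtfin : Nt ≠ ⊤ := by rw [hNtdef]; exact measure_ne_top μ _
  set k0 : ℝ≥0∞ := ENNReal.ofReal (θ ^ u₀ / EZ) with hk0def
  have hk0 : k0 ≠ 0 := by
    rw [hk0def]
    exact (ENNReal.ofReal_pos.mpr (div_pos (_root_.zpow_pos hθ _) hEZpos)).ne'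
  have hk0top : k0 ≠ ⊤ := by rw [hk0def]; exact ENNReal.ofReal_ne_top
  have hlift : ∀ S : Set (I → ℕ), S ⊆ SU →
      μ (C ⁻¹' S) = Nt⁻¹ * ∑' a : ↥(S ∩ W), p ↑a
      ∧ Pθ (Zf ⁻¹' (S ∩ W)) = k0 * ∑' a : ↥(S ∩ W), p ↑a := by
    intro S hS
    constructor
    · rw [measure_preimage_eq_tsum μ C hCmeas S]
      calc ∑' a : S, μ (C ⁻¹' {(a : I → ℕ)})
          = ∑' a : S, W.indicator (fun a' => p a' / Nt) ↑a := tsum_congr fun a => hcm ↑a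
        _ = ∑' a : (I → ℕ), S.indicator (W.indicator fun a' => p a' / Nt) a :=
            tsum_subtype S _
        _ = ∑' a : (I → ℕ), (S ∩ W).indicator (fun a' => p a' / Nt) a := by
            rw [Set.indicator_indicator]
        _ = ∑' a : ↥(S ∩ W), p ↑a / Nt := (tsum_subtype (S ∩ W) _).symm
        _ = Nt⁻¹ * ∑' a : ↥(S ∩ W), p ↑a := by
            simp_rw [div_eq_mul_inv, ENNReal.tsum_mul_right, mul_comm]
    · rw [hPθS]
      calc ∑' a : ↥(S ∩ W), q ↑a = ∑' a : ↥(S ∩ W), k0 * p ↑a := by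
            refine tsum_congr fun a => ?_
            have h5 : σu (↑a : I → ℕ) = u₀ := hS a.2.1
            simp only [hqdef]
            rw [h5, hk0def]
        _ = k0 * ∑' a : ↥(S ∩ W), p ↑a := ENNReal.tsum_mul_left
  have hA : ∀ S : Set (I → ℕ), S ⊆ SU →
      μ (C ⁻¹' S) / μ (C ⁻¹' SU) = Pθ (Zf ⁻¹' (S ∩ W)) / Pθ (Zf ⁻¹' (SU ∩ W)) := by
    intro S hS
    obtain ⟨h1, h2⟩ := hlift S hS
    obtain ⟨h3, h4⟩ := hlift SU (subset_refl _)
    rw [h1, h3, h2, h4,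
      ENNReal.mul_div_mul_left _ _ (ENNReal.inv_ne_zero.mpr hNtfin)
        (ENNReal.inv_ne_top.mpr hpos),
      ENNReal.mul_div_mul_left _ _ hk0 hk0top]
  -- product structure
  set e : (I → ℕ) ≃ ({x : I // x ∈ B} → ℕ) × ({x : I // ¬x ∈ B} → ℕ) :=
    Equiv.piEquivPiSubtypeProd (fun α => α ∈ B) (fun _ => ℕ) with hedef
  set resB : (I → ℕ) → ({x : I // x ∈ B} → ℕ) := fun a α => a ↑α with hresBdef
  set resC : (I → ℕ) → ({x : I // ¬x ∈ B} → ℕ) := fun a α => a ↑α with hresCdef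
  have hres : ∀ x : ({x : I // x ∈ B} → ℕ) × ({x : I // ¬x ∈ B} → ℕ),
      resB (e.symm x) = x.1 ∧ resC (e.symm x) = x.2 := fun x =>
    ⟨congrArg Prod.fst (e.apply_symm_apply x), congrArg Prod.snd (e.apply_symm_apply x)⟩
  set pB : ({x : I // x ∈ B} → ℕ) → ℝ≥0∞ :=
    fun b => ∏ α : {x : I // x ∈ B}, μ (Z ↑α ⁻¹' {b α}) with hpBdef
  set pC : ({x : I // ¬x ∈ B} → ℕ) → ℝ≥0∞ :=
    fun c => ∏ α : {x : I // ¬x ∈ B}, μ (Z ↑α ⁻¹' {c α}) with hpCdef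
  have hpfact : ∀ a : I → ℕ, p a = pB (resB a) * pC (resC a) := by
    intro a
    have h1 : Zf ⁻¹' {a} = ⋂ α ∈ Finset.univ, Z α ⁻¹' {a α} := by
      ext ω
      simp [hZfdef, funext_iff]
    have h2 := (iIndepFun_iff_measure_inter_preimage_eq_mul.mp hindep) Finset.univ
      (sets := fun α => {a α}) (fun _ _ => measurableSet_singleton _)
    have h3 : p a = ∏ α, μ (Z α ⁻¹' {a α}) := by
      rw [hpdef]
      simp only []
      rw [h1, h2]
    rw [h3, ← Finset.prod_mul_prod_compl B (fun α => μ (Z α ⁻¹' {a α})),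
      Finset.prod_subtype B (fun x => Iff.rfl) (fun α => μ (Z α ⁻¹' {a α})),
      Finset.prod_subtype Bᶜ (fun x => Finset.mem_compl) (fun α => μ (Z α ⁻¹' {a α}))]
  set φu : ({x : I // x ∈ B} → ℕ) → ℤ :=
    fun b => ∑ α : {x : I // x ∈ B}, u ↑α * (b α : ℤ) with hφudef
  set φw : ({x : I // x ∈ B} → ℕ) → ℤ :=
    fun b => ∑ α : {x : I // x ∈ B}, w ↑α * (b α : ℤ) with hφwdef
  set ψu : ({x : I // ¬x ∈ B} → ℕ) → ℤ :=
    fun c => ∑ α : {x : I // ¬x ∈ B}, u ↑α * (c α : ℤ) with hψudef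
  set ψw : ({x : I // ¬x ∈ B} → ℕ) → ℤ :=
    fun c => ∑ α : {x : I // ¬x ∈ B}, w ↑α * (c α : ℤ) with hψwdef
  have hsplitu : ∀ a : I → ℕ, σu a = φu (resB a) + ψu (resC a) := by
    intro a
    rw [hσudef]
    simp only []
    rw [← Finset.sum_add_sum_compl B (fun α => u α * (a α : ℤ)),
      Finset.sum_subtype B (fun x => Iff.rfl) (fun α => u α * (a α : ℤ)),
      Finset.sum_subtype Bᶜ (fun x => Finset.mem_compl) (fun α => u α * (a α : ℤ))]
  have hsplitw : ∀ a : I → ℕ, σw a = φw (resB a) + ψw (resC a) := by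
    intro a
    rw [hσwdef]
    simp only []
    rw [← Finset.sum_add_sum_compl B (fun α => w α * (a α : ℤ)),
      Finset.sum_subtype B (fun x => Iff.rfl) (fun α => w α * (a α : ℤ)),
      Finset.sum_subtype Bᶜ (fun x => Finset.mem_compl) (fun α => w α * (a α : ℤ))]
  have hsumBu : ∀ a : I → ℕ, (∑ α ∈ B, u α * (a α : ℤ)) = φu (resB a) := by
    intro a
    rw [Finset.sum_subtype B (fun x => Iff.rfl) (fun α => u α * (a α : ℤ))]
  have hsumBw : ∀ a : I → ℕ, (∑ α ∈ B, w α * (a α : ℤ)) = φw (resB a) := by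
    intro a
    rw [Finset.sum_subtype B (fun x => Iff.rfl) (fun α => w α * (a α : ℤ))]
  set rb : ({x : I // x ∈ B} → ℕ) → ℝ≥0∞ :=
    fun b => ENNReal.ofReal (θ ^ φu b) * pB b with hrbdef
  set rc : ({x : I // ¬x ∈ B} → ℕ) → ℝ≥0∞ :=
    fun c => (ENNReal.ofReal EZ)⁻¹ * (ENNReal.ofReal (θ ^ ψu c) * pC c) with hrcdef
  have hfact : ∀ (b : {x : I // x ∈ B} → ℕ) (c : {x : I // ¬x ∈ B} → ℕ),
      q (e.symm (b, c)) = rb b * rc c := by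
    intro b c
    rw [hqdef]
    simp only []
    rw [hsplitu (e.symm (b, c)), hpfact (e.symm (b, c)),
      (hres (b, c)).1, (hres (b, c)).2]
    rw [div_eq_mul_inv, zpow_add₀ (ne_of_gt hθ),
      ENNReal.ofReal_mul (by positivity), ENNReal.ofReal_mul (by positivity),
      ENNReal.ofReal_inv_of_pos hEZpos, hrbdef, hrcdef]
    ring
  have master : ∀ (Sb : Set ({x : I // x ∈ B} → ℕ))
      (Sc : ({x : I // x ∈ B} → ℕ) → Set ({x : I // ¬x ∈ B} → ℕ)),
      Pθ (Zf ⁻¹' {a | resB a ∈ Sb ∧ resC a ∈ Sc (resB a)})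
        = ∑' b : Sb, rb ↑b * ∑' c : (Sc ↑b), rc ↑c := by
    intro Sb Sc
    set Sfull : Set (I → ℕ) := {a | resB a ∈ Sb ∧ resC a ∈ Sc (resB a)} with hSfulldef
    have hinner : ∀ b, (∑' c, Sfull.indicator q (e.symm (b, c)))
        = Sb.indicator (fun b' => rb b' * ∑' c : (Sc b'), rc ↑c) b := by
      intro b
      by_cases hbSb : b ∈ Sb
      · rw [Set.indicator_of_mem hbSb]
        have hstep : ∀ c, Sfull.indicator q (e.symm (b, c))
            = (Sc b).indicator (fun c' => rb b * rc c') c := by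
          intro c
          by_cases hcS : c ∈ Sc b
          · have hmem : e.symm (b, c) ∈ Sfull := by
              show resB (e.symm (b, c)) ∈ Sb ∧ resC (e.symm (b, c)) ∈ Sc (resB (e.symm (b, c)))
              rw [(hres (b, c)).1, (hres (b, c)).2]
              exact ⟨hbSb, hcS⟩
            rw [Set.indicator_of_mem hmem, Set.indicator_of_mem hcS]
            exact hfact b c
          · have hnot : e.symm (b, c) ∉ Sfull := by
              intro hmem
              apply hcS
              have h6 := hmem.2
              rwa [(hres (b, c)).1, (hres (b, c)).2] at h6
            rw [Set.indicator_of_notMem hnot, Set.indicator_of_notMem hcS]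
        calc ∑' c, Sfull.indicator q (e.symm (b, c))
            = ∑' c, (Sc b).indicator (fun c' => rb b * rc c') c := tsum_congr hstep
          _ = ∑' c : (Sc b), rb b * rc ↑c := (tsum_subtype _ _).symm
          _ = rb b * ∑' c : (Sc b), rc ↑c := ENNReal.tsum_mul_left
      · rw [Set.indicator_of_notMem hbSb]
        have hstep : ∀ c, Sfull.indicator q (e.symm (b, c)) = 0 := by
          intro c
          apply Set.indicator_of_notMem
          intro hmem
          apply hbSb
          have h6 := hmem.1
          rwa [(hres (b, c)).1] at h6
        rw [tsum_congr hstep, tsum_zero]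
    calc Pθ (Zf ⁻¹' Sfull) = ∑' a : Sfull, q ↑a := hPθS _
      _ = ∑' a, Sfull.indicator q a := tsum_subtype _ _
      _ = ∑' x : ({x : I // x ∈ B} → ℕ) × ({x : I // ¬x ∈ B} → ℕ),
            Sfull.indicator q (e.symm x) := (Equiv.tsum_eq e.symm _).symm
      _ = ∑' b, ∑' c, Sfull.indicator q (e.symm (b, c)) := ENNReal.tsum_prod'
      _ = ∑' b, Sb.indicator (fun b' => rb b' * ∑' c : (Sc b'), rc ↑c) b :=
          tsum_congr hinner
      _ = ∑' b : Sb, rb ↑b * ∑' c : (Sc ↑b), rc ↑c := (tsum_subtype _ _).symm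
  -- φ and the complement-constraint sets
  set φ : ({x : I // x ∈ B} → ℕ) → ℤ × ℤ := fun b => (φu b, φw b) with hφdef
  set Ec : ℤ × ℤ → Set ({x : I // ¬x ∈ B} → ℕ) :=
    fun pr => {c | ψu c = u₀ - pr.1 ∧ ψw c = t - pr.2} with hEcdef
  have hEcap : ∀ Sb : Set ({x : I // x ∈ B} → ℕ),
      ({a : I → ℕ | resB a ∈ Sb} ∩ (SU ∩ W))
        = {a | resB a ∈ Sb ∧ resC a ∈ Ec (φ (resB a))} := by
    intro Sb
    ext a
    simp only [Set.mem_inter_iff, Set.mem_setOf_eq, hSUdef, hWdef, hEcdef, hφdef]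
    constructor
    · rintro ⟨h1, h2, h3⟩
      refine ⟨h1, ?_, ?_⟩
      · rw [hsplitu a] at h2; omega
      · rw [hsplitw a] at h3; omega
    · rintro ⟨h1, h2, h3⟩
      refine ⟨h1, ?_, ?_⟩
      · rw [hsplitu a]; omega
      · rw [hsplitw a]; omega
  -- the five tilted quantities
  have hZb : ∀ b, Pθ (Zf ⁻¹' {a | resB a ∈ ({b} : Set _)}) = rb b * ∑' c, rc c := by
    intro b
    have hsets : {a : I → ℕ | resB a ∈ ({b} : Set _)}
        = {a | resB a ∈ ({b} : Set _) ∧ resC a ∈ (fun _ => Set.univ) (resB a)} := by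
      ext a; simp
    rw [hsets, master ({b} : Set _) (fun _ => Set.univ),
      tsum_singleton b (fun b' => rb b' *
        ∑' c : (Set.univ : Set ({x : I // ¬x ∈ B} → ℕ)), rc ↑c),
      tsum_univ rc]
  have hZbE : ∀ b, Pθ (Zf ⁻¹' ({a | resB a ∈ ({b} : Set _)} ∩ (SU ∩ W)))
      = rb b * ∑' c : (Ec (φ b)), rc ↑c := by
    intro b
    rw [hEcap ({b} : Set _), master ({b} : Set _) (fun b' => Ec (φ b')),
      tsum_singleton b (fun b' => rb b' * ∑' c : (Ec (φ b')), rc ↑c)]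
  have hprZ : ∀ pr : ℤ × ℤ, Pθ (Zf ⁻¹' {a | resB a ∈ φ ⁻¹' {pr}})
      = (∑' b : (φ ⁻¹' {pr}), rb ↑b) * ∑' c, rc c := by
    intro pr
    have hsets : {a : I → ℕ | resB a ∈ φ ⁻¹' {pr}}
        = {a | resB a ∈ φ ⁻¹' {pr} ∧ resC a ∈ (fun _ => Set.univ) (resB a)} := by
      ext a; simp
    rw [hsets, master (φ ⁻¹' {pr}) (fun _ => Set.univ)]
    calc ∑' b : (φ ⁻¹' {pr}), rb ↑b *
          ∑' c : (Set.univ : Set ({x : I // ¬x ∈ B} → ℕ)), rc ↑c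
        = ∑' b : (φ ⁻¹' {pr}), rb ↑b * ∑' c, rc c := by
          refine tsum_congr fun b => ?_
          rw [tsum_univ rc]
      _ = (∑' b : (φ ⁻¹' {pr}), rb ↑b) * ∑' c, rc c := ENNReal.tsum_mul_right
  have hprE : ∀ pr : ℤ × ℤ, Pθ (Zf ⁻¹' ({a | resB a ∈ φ ⁻¹' {pr}} ∩ (SU ∩ W)))
      = (∑' b : (φ ⁻¹' {pr}), rb ↑b) * ∑' c : (Ec pr), rc ↑c := by
    intro pr
    rw [hEcap (φ ⁻¹' {pr}), master (φ ⁻¹' {pr}) (fun b' => Ec (φ b'))]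
    calc ∑' b : (φ ⁻¹' {pr}), rb ↑b * ∑' c : (Ec (φ ↑b)), rc ↑c
        = ∑' b : (φ ⁻¹' {pr}), rb ↑b * ∑' c : (Ec pr), rc ↑c := by
          refine tsum_congr fun b => ?_
          rw [show φ (↑b : {x : I // x ∈ B} → ℕ) = pr from b.2]
      _ = (∑' b : (φ ⁻¹' {pr}), rb ↑b) * ∑' c : (Ec pr), rc ↑c := ENNReal.tsum_mul_right
  have hNEeq : Pθ (Zf ⁻¹' (SU ∩ W)) = ∑' b, rb b * ∑' c : (Ec (φ b)), rc ↑c := by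
    have h0 : SU ∩ W = {a : I → ℕ | resB a ∈ (Set.univ : Set _)} ∩ (SU ∩ W) := by
      simp
    rw [h0, hEcap Set.univ, master Set.univ (fun b' => Ec (φ b')),
      tsum_univ (fun b => rb b * ∑' c : (Ec (φ b)), rc ↑c)]
  -- finiteness and nondegeneracy
  have htotval : Pθ (Zf ⁻¹' (Set.univ : Set (I → ℕ))) = (∑' b, rb b) * ∑' c, rc c := by
    rw [hPθS, tsum_univ q]
    calc ∑' a, q a = ∑' x : ({x : I // x ∈ B} → ℕ) × ({x : I // ¬x ∈ B} → ℕ),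
          q (e.symm x) := (Equiv.tsum_eq e.symm q).symm
      _ = ∑' b, ∑' c, q (e.symm (b, c)) := ENNReal.tsum_prod'
      _ = ∑' b, ∑' c, rb b * rc c := tsum_congr fun b => tsum_congr fun c => hfact b c
      _ = ∑' b, rb b * ∑' c, rc c := tsum_congr fun b => ENNReal.tsum_mul_left
      _ = (∑' b, rb b) * ∑' c, rc c := ENNReal.tsum_mul_right
  have htotfin : Pθ (Set.univ : Set Ω) ≠ ⊤ := by
    have hint2 : Integrable (fun ω => θ ^ UI ω / EZ) μ := by
      rw [hUI]; exact hint.div_const EZ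
    rw [hPθ, withDensity_apply _ MeasurableSet.univ, Measure.restrict_univ]
    exact hint2.lintegral_lt_top.ne
  have hNE0 : Pθ (Zf ⁻¹' (SU ∩ W)) ≠ 0 := by
    have hev : {ω | U ω = u₀} = C ⁻¹' SU := by
      ext ω
      simp [hU, hσudef, hSUdef]
    rw [hev] at hu₀
    rw [measure_preimage_eq_tsum μ C hCmeas SU] at hu₀
    have h2 : ∃ a : SU, μ (C ⁻¹' {(a : I → ℕ)}) ≠ 0 := by
      by_contra hall
      push_neg at hall
      exact hu₀ (by simp [hall])
    obtain ⟨a, ha⟩ := h2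
    rw [hcm] at ha
    have haW : (a : I → ℕ) ∈ W := by
      by_contra hnW
      exact ha (Set.indicator_of_notMem hnW _)
    rw [Set.indicator_of_mem haW] at ha
    have hpa : p ↑a ≠ 0 := by
      intro h0
      exact ha (by rw [h0, ENNReal.zero_div])
    have hqa : q ↑a ≠ 0 := by
      rw [hqdef]
      simp only []
      exact mul_ne_zero
        (ENNReal.ofReal_pos.mpr (div_pos (_root_.zpow_pos hθ _) hEZpos)).ne' hpa
    rw [hPθS]
    intro hsum0
    exact hqa (le_zero_iff.mp (hsum0 ▸
      ENNReal.le_tsum (⟨(a : I → ℕ), ⟨a.2, haW⟩⟩ : ↥(SU ∩ W))))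
  have hNEfin : Pθ (Zf ⁻¹' (SU ∩ W)) ≠ ⊤ :=
    ne_top_of_le_ne_top htotfin (measure_mono (Set.subset_univ _))
  have hprodfin : (∑' b, rb b) * (∑' c, rc c) ≠ ⊤ := by
    rw [← htotval]
    exact ne_top_of_le_ne_top htotfin (measure_mono (Set.subset_univ _))
  have hprod0 : (∑' b, rb b) * (∑' c, rc c) ≠ 0 := by
    rw [← htotval]
    intro h0
    exact hNE0 (le_zero_iff.mp (h0 ▸ measure_mono (Set.preimage_mono (Set.subset_univ _))))
  have hrcS0 : (∑' c, rc c) ≠ 0 := fun h => hprod0 (by rw [h, mul_zero])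
  have hrbS0 : (∑' b, rb b) ≠ 0 := fun h => hprod0 (by rw [h, zero_mul])
  have hrbSfin : (∑' b, rb b) ≠ ⊤ := by
    intro h; apply hprodfin; rw [h, ENNReal.top_mul hrcS0]
  have hrbfin : ∀ b, rb b ≠ ⊤ := fun b => ne_top_of_le_ne_top hrbSfin (ENNReal.le_tsum b)
  have hRbfin : ∀ pr : ℤ × ℤ, (∑' b : (φ ⁻¹' {pr}), rb ↑b) ≠ ⊤ := by
    intro pr
    refine ne_top_of_le_ne_top hrbSfin ?_
    rw [tsum_subtype]
    exact ENNReal.tsum_le_tsum fun b => Set.indicator_le_self _ _ b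
  -- rewrite the four pmf functions
  have hf1 : (fun b : ↥B → ℕ =>
        (μ ({ω | (fun α : ↥B => C ω α) = b} ∩ {ω | U ω = u₀})
          / μ {ω | U ω = u₀}).toReal)
      = fun b => ((rb b * ∑' c : (Ec (φ b)), rc ↑c)
          / Pθ (Zf ⁻¹' (SU ∩ W))).toReal := by
    funext b
    congr 1
    have hev1 : {ω | (fun α : ↥B => C ω α) = b} ∩ {ω | U ω = u₀}
        = C ⁻¹' ({a | resB a ∈ ({b} : Set _)} ∩ SU) := by
      ext ω
      simp only [Set.mem_inter_iff, Set.mem_setOf_eq, Set.mem_preimage,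
        Set.mem_singleton_iff, hU, hσudef, hSUdef, hresBdef]
    have hev2 : {ω | U ω = u₀} = C ⁻¹' SU := by
      ext ω
      simp [hU, hσudef, hSUdef]
    rw [hev1, hev2, hA ({a | resB a ∈ ({b} : Set _)} ∩ SU) Set.inter_subset_right,
      Set.inter_assoc, hZbE b]
  have hf2 : (fun b : ↥B → ℕ => (Pθ {ω | (fun α : ↥B => Z α ω) = b}).toReal)
      = fun b => ((rb b * ∑' c, rc c)).toReal := by
    funext b
    congr 1
    have hev : {ω | (fun α : ↥B => Z α ω) = b} = Zf ⁻¹' {a | resB a ∈ ({b} : Set _)} := by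
      ext ω
      simp only [Set.mem_setOf_eq, Set.mem_preimage, Set.mem_singleton_iff, hresBdef,
        hZfdef]
    rw [hev, hZb b]
  have hevPr : ∀ pr : ℤ × ℤ, {ω | (UB ω, RB ω) = pr}
      = Zf ⁻¹' {a | resB a ∈ φ ⁻¹' {pr}} := by
    intro pr
    ext ω
    have e1 : UB ω = φu (resB (Zf ω)) := by rw [hUB]; exact hsumBu (Zf ω)
    have e2 : RB ω = φw (resB (Zf ω)) := by rw [hRB]; exact hsumBw (Zf ω)
    simp only [Set.mem_setOf_eq, Set.mem_preimage, Set.mem_singleton_iff, e1, e2, hφdef]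
  have hevE : {ω | UI ω = u₀ ∧ T ω = t} = Zf ⁻¹' (SU ∩ W) := by
    ext ω
    simp only [Set.mem_setOf_eq, Set.mem_preimage, Set.mem_inter_iff, hUI, hT,
      hσudef, hσwdef, hSUdef, hWdef, hZfdef]
  have hg1 : (fun pr : ℤ × ℤ =>
        (Pθ ({ω | (UB ω, RB ω) = pr} ∩ {ω | UI ω = u₀ ∧ T ω = t})
          / Pθ {ω | UI ω = u₀ ∧ T ω = t}).toReal)
      = fun pr => (((∑' b : (φ ⁻¹' {pr}), rb ↑b) * ∑' c : (Ec pr), rc ↑c)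
          / Pθ (Zf ⁻¹' (SU ∩ W))).toReal := by
    funext pr
    congr 1
    rw [hevPr pr, hevE, ← Set.preimage_inter, hprE pr]
  have hg2 : (fun pr : ℤ × ℤ => (Pθ {ω | (UB ω, RB ω) = pr}).toReal)
      = fun pr => (((∑' b : (φ ⁻¹' {pr}), rb ↑b) * ∑' c, rc c)).toReal := by
    funext pr
    congr 1
    rw [hevPr pr, hprZ pr]
  rw [hf1, hf2, hg1, hg2]
  unfold dTV
  congr 1
  exact key_regroup rb φ (fun pr => ∑' c : (Ec pr), rc ↑c) (∑' c, rc c)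
    (Pθ (Zf ⁻¹' (SU ∩ W))) hrbfin hRbfin
end
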